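/- arXiv:2002.12322 — 10 statements merged into one kernel-verified Lean document; each statement's English description precedes it below -/
import Mathlib

section
/- The number of permutations of [n] avoiding the distant pattern 2□1 (i.e., having no inversion (π_i, π_j) with j - i ≥ 2) equals the Fibonacci number F_{n+1}, for all n ≥ 1 (with F_1 = F_2 = 1). -/
open Equiv

def Bal {n : ℕ} (π : Equiv.Perm (Fin n)) : Prop :=
  ∀ i : Fin n, (i : ℕ) ≤ (π i : ℕ) + 1 ∧ (π i : ℕ) ≤ (i : ℕ) + 1

lemma avoid_upper {n : ℕ} (π : Equiv.Perm (Fin n))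
    (h : ∀ i j : Fin n, (i : ℕ) + 2 ≤ (j : ℕ) → ¬ π j < π i) (i : Fin n) :
    (π i : ℕ) ≤ (i : ℕ) + 1 := by
  by_contra hc
  push_neg at hc
  have hπn : (π i : ℕ) < n := (π i).2
  have hlt : (i : ℕ) + 1 < n := lt_trans hc hπn
  set a : Fin n := ⟨(i : ℕ) + 1, hlt⟩ with ha
  have key : ((Finset.Iic a).image π.symm) ⊆ (Finset.Iic a).erase i := by
    intro j hj
    simp only [Finset.mem_image] at hj
    obtain ⟨v, hv, rfl⟩ := hj
    rw [Finset.mem_Iic, Fin.le_def] at hv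
    have hvj : π (π.symm v) = v := π.apply_symm_apply v
    have hne : π.symm v ≠ i := by
      intro e
      rw [e] at hvj
      simp [ha] at hv
      omega
    have hnotfar : ¬ ((i : ℕ) + 2 ≤ (π.symm v : ℕ)) := by
      intro hle
      exact h i (π.symm v) hle (by rw [hvj]; exact Fin.lt_def.mpr (by simp [ha] at hv; omega))
    refine Finset.mem_erase.mpr ⟨hne, Finset.mem_Iic.mpr (Fin.le_def.mpr ?_)⟩
    simp [ha]
    omega
  have hcard := Finset.card_le_card key
  rw [Finset.card_image_of_injective _ π.symm.injective, Fin.card_Iic,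
    Finset.card_erase_of_mem (Finset.mem_Iic.mpr (Fin.le_def.mpr (by simp [ha]))),
    Fin.card_Iic] at hcard
  simp [ha] at hcard

lemma avoid_lower {n : ℕ} (π : Equiv.Perm (Fin n))
    (h : ∀ i j : Fin n, (i : ℕ) + 2 ≤ (j : ℕ) → ¬ π j < π i) (i : Fin n) :
    (i : ℕ) ≤ (π i : ℕ) + 1 := by
  by_contra hc
  push_neg at hc
  have hin : (i : ℕ) < n := i.2
  have hlt : (π i : ℕ) + 1 < n := by omega
  set b : Fin n := ⟨(π i : ℕ) + 1, hlt⟩ with hb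
  have key : ((Finset.Ici (π i)).image π.symm) ⊆ Finset.Ici b := by
    intro j hj
    simp only [Finset.mem_image] at hj
    obtain ⟨v, hv, rfl⟩ := hj
    rw [Finset.mem_Ici, Fin.le_def] at hv
    have hvj : π (π.symm v) = v := π.apply_symm_apply v
    refine Finset.mem_Ici.mpr (Fin.le_def.mpr ?_)
    rcases eq_or_lt_of_le hv with heq | hltv
    · have hvi : π.symm v = i := by
        have hv2 : v = π i := Fin.ext heq.symm
        rw [hv2, π.symm_apply_apply]
      rw [hvi]
      simp [hb]
      omega
    · have hnotfar : ¬ ((π.symm v : ℕ) + 2 ≤ (i : ℕ)) := by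
        intro hle
        exact h (π.symm v) i hle (by rw [hvj]; exact Fin.lt_def.mpr hltv)
      simp [hb]
      omega
  have hcard := Finset.card_le_card key
  rw [Finset.card_image_of_injective _ π.symm.injective, Fin.card_Ici, Fin.card_Ici] at hcard
  simp [hb] at hcard
  omega

lemma avoid_iff_bal {n : ℕ} (π : Equiv.Perm (Fin n)) :
    (¬ ∃ i j : Fin n, (i : ℕ) + 2 ≤ (j : ℕ) ∧ π j < π i) ↔ Bal π := by
  constructor
  · intro h i
    have h' : ∀ i j : Fin n, (i : ℕ) + 2 ≤ (j : ℕ) → ¬ π j < π i :=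
      fun i j hij hlt => h ⟨i, j, hij, hlt⟩
    exact ⟨avoid_lower π h' i, avoid_upper π h' i⟩
  · rintro hb ⟨i, j, hij, hlt⟩
    have h1 := (hb i).2
    have h2 := (hb j).1
    have := Fin.lt_def.mp hlt
    omega

def p1 {n : ℕ} (σ : Equiv.Perm (Fin (n+1))) : Equiv.Perm (Fin (n+2)) :=
  Equiv.Perm.decomposeFin.symm (0, σ)

def p2 {n : ℕ} (τ : Equiv.Perm (Fin n)) : Equiv.Perm (Fin (n+2)) :=
  Equiv.Perm.decomposeFin.symm (1, Equiv.Perm.decomposeFin.symm (0, τ))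

lemma p1_zero {n : ℕ} (σ : Equiv.Perm (Fin (n+1))) : p1 σ 0 = 0 := by simp [p1]

lemma p1_succ {n : ℕ} (σ : Equiv.Perm (Fin (n+1))) (x : Fin (n+1)) :
    p1 σ x.succ = (σ x).succ := by simp [p1]

lemma p2_zero {n : ℕ} (τ : Equiv.Perm (Fin n)) : p2 τ 0 = 1 := by simp [p2]

lemma p2_one {n : ℕ} (τ : Equiv.Perm (Fin n)) : p2 τ 1 = 0 := by
  simp [p2]

lemma p2_succ_succ {n : ℕ} (τ : Equiv.Perm (Fin n)) (y : Fin n) :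
    p2 τ y.succ.succ = (τ y).succ.succ := by
  rw [p2, Equiv.Perm.decomposeFin_symm_apply_succ, Equiv.Perm.decomposeFin_symm_apply_succ]
  rw [Equiv.swap_self, Equiv.refl_apply]
  apply Equiv.swap_apply_of_ne_of_ne
  · exact Fin.succ_ne_zero _
  · intro h
    rw [← Fin.succ_zero_eq_one] at h
    exact Fin.succ_ne_zero _ (Fin.succ_injective _ h)

lemma bal_p1_iff {n : ℕ} (σ : Equiv.Perm (Fin (n+1))) : Bal (p1 σ) ↔ Bal σ := by
  constructor
  · intro h x
    have := h x.succ
    rw [p1_succ] at this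
    simp only [Fin.val_succ] at this
    omega
  · intro h i
    refine Fin.cases ?_ (fun x => ?_) i
    · rw [p1_zero]; simp
    · rw [p1_succ]
      simp only [Fin.val_succ]
      have := h x
      omega

lemma bal_p2_iff {n : ℕ} (τ : Equiv.Perm (Fin n)) : Bal (p2 τ) ↔ Bal τ := by
  constructor
  · intro h y
    have := h y.succ.succ
    rw [p2_succ_succ] at this
    simp only [Fin.val_succ] at this
    omega
  · intro h i
    refine Fin.cases ?_ (fun x => ?_) i
    · rw [p2_zero]; simp
    · refine Fin.cases ?_ (fun y => ?_) x
      · rw [Fin.succ_zero_eq_one, p2_one]; simp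
      · rw [p2_succ_succ]
        simp only [Fin.val_succ]
        have := h y
        omega

def G {n : ℕ} :
    {σ : Equiv.Perm (Fin (n+1)) // Bal σ} ⊕ {τ : Equiv.Perm (Fin n) // Bal τ} →
    {π : Equiv.Perm (Fin (n+2)) // Bal π}
  | Sum.inl ⟨σ, hσ⟩ => ⟨p1 σ, (bal_p1_iff σ).mpr hσ⟩
  | Sum.inr ⟨τ, hτ⟩ => ⟨p2 τ, (bal_p2_iff τ).mpr hτ⟩

lemma G_bijective {n : ℕ} : Function.Bijective (G (n := n)) := by
  constructor
  · rintro (⟨σ₁, h₁⟩ | ⟨τ₁, h₁⟩) (⟨σ₂, h₂⟩ | ⟨τ₂, h₂⟩) h <;>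
      simp only [G, Subtype.mk.injEq, p1, p2] at h <;>
      have h' := Prod.ext_iff.mp (Equiv.Perm.decomposeFin.symm.injective h)
    · exact congrArg Sum.inl (Subtype.ext h'.2)
    · exact absurd (congrArg Fin.val h'.1) (by simp)
    · exact absurd (congrArg Fin.val h'.1) (by simp)
    · have h'' := Prod.ext_iff.mp (Equiv.Perm.decomposeFin.symm.injective h'.2)
      exact congrArg Sum.inr (Subtype.ext h''.2)
  · rintro ⟨π, hπ⟩
    have h0 : (π 0 : ℕ) ≤ 1 := by simpa using (hπ 0).2
    set q := Equiv.Perm.decomposeFin π with hq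
    have hπq : Equiv.Perm.decomposeFin.symm (q.1, q.2) = π := by
      rw [Prod.mk.eta]
      exact Equiv.symm_apply_apply _ _
    have hq1 : q.1 = π 0 := by
      conv_rhs => rw [← hπq]
      rw [Equiv.Perm.decomposeFin_symm_apply_zero]
    rcases Nat.lt_or_ge (π 0 : ℕ) 1 with h01 | h01
    · -- π 0 = 0
      have hq10 : q.1 = 0 := by
        rw [hq1]
        refine Fin.ext ?_
        simp only [Fin.val_zero]
        omega
      have hp1 : p1 q.2 = π := by rw [p1, ← hq10, hπq]
      exact ⟨Sum.inl ⟨q.2, (bal_p1_iff q.2).mp (by rw [hp1]; exact hπ)⟩,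
        Subtype.ext hp1⟩
    · -- π 0 = 1
      have hπ0 : (π 0 : ℕ) = 1 := le_antisymm h0 h01
      have hq11 : q.1 = 1 := by
        rw [hq1]
        exact Fin.ext (by rw [hπ0]; simp)
      -- π 1 = 0
      have hπ1 : π 1 = 0 := by
        set j := π.symm 0 with hj
        have hπj : π j = 0 := π.apply_symm_apply 0
        have hjle : (j : ℕ) ≤ 1 := by
          have := (hπ j).1
          rw [hπj] at this
          simpa using this
        have hjne : j ≠ 0 := by
          intro e
          rw [e] at hπj
          rw [hπj] at hπ0
          simp at hπ0
        have hj1 : j = 1 := by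
          apply Fin.ext
          have : (j : ℕ) ≠ 0 := fun e => hjne (Fin.ext (by simpa using e))
          simp
          omega
        rw [← hj1, hπj]
      have he0 : q.2 0 = 0 := by
        have h1 : Equiv.Perm.decomposeFin.symm (q.1, q.2) 1 = 0 := by rw [hπq, hπ1]
        rw [Equiv.Perm.decomposeFin_symm_apply_one, hq11] at h1
        have h2 : (q.2 0).succ = (1 : Fin (n+2)) := by
          have h3 := congrArg (Equiv.swap (0 : Fin (n+2)) 1) h1
          rwa [Equiv.swap_apply_self, Equiv.swap_apply_left] at h3
        rw [← Fin.succ_zero_eq_one] at h2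
        exact Fin.succ_injective _ h2
      set r := Equiv.Perm.decomposeFin q.2 with hr
      have hqr : Equiv.Perm.decomposeFin.symm (r.1, r.2) = q.2 := by
        rw [Prod.mk.eta]
        exact Equiv.symm_apply_apply _ _
      have hr1 : r.1 = 0 := by
        have : r.1 = q.2 0 := by
          conv_rhs => rw [← hqr]
          rw [Equiv.Perm.decomposeFin_symm_apply_zero]
        rw [this, he0]
      have hp2 : p2 r.2 = π := by
        rw [p2, ← hr1, hqr, ← hq11, hπq]
      exact ⟨Sum.inr ⟨r.2, (bal_p2_iff r.2).mp (by rw [hp2]; exact hπ)⟩,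
        Subtype.ext hp2⟩

lemma card_bal : ∀ n : ℕ, Nat.card {π : Equiv.Perm (Fin n) // Bal π} = Nat.fib (n + 1)
  | 0 => by
      haveI : Subsingleton {π : Equiv.Perm (Fin 0) // Bal π} :=
        ⟨fun a b => Subtype.ext (Equiv.ext fun i => i.elim0)⟩
      haveI : Nonempty {π : Equiv.Perm (Fin 0) // Bal π} := ⟨⟨1, fun i => i.elim0⟩⟩
      rw [Nat.card_unique]
      decide
  | 1 => by
      haveI : Subsingleton {π : Equiv.Perm (Fin 1) // Bal π} :=
        ⟨fun a b => Subtype.ext (Equiv.ext fun i => Subsingleton.elim _ _)⟩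
      haveI : Nonempty {π : Equiv.Perm (Fin 1) // Bal π} :=
        ⟨⟨1, fun i => by simp⟩⟩
      rw [Nat.card_unique]
      decide
  | (n + 2) => by
      rw [Nat.card_congr (Equiv.ofBijective G G_bijective).symm, Nat.card_sum,
        card_bal (n + 1), card_bal n]
      exact (Nat.add_comm _ _).trans (Nat.fib_add_two (n := n + 1)).symm

/-- The number of permutations of `[n]` avoiding the distant pattern `2□1`
(no inversion `(π i, π j)` with `j - i ≥ 2`) is the Fibonacci number `F (n+1)`
(with `F 1 = F 2 = 1`, i.e. `Nat.fib`). -/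
theorem stmt0 (n : ℕ) (hn : 1 ≤ n) :
    Nat.card {π : Equiv.Perm (Fin n) //
      ¬ ∃ i j : Fin n, (i : ℕ) + 2 ≤ (j : ℕ) ∧ π j < π i} = Nat.fib (n + 1) := by
  rw [Nat.card_congr (Equiv.subtypeEquivRight fun π => avoid_iff_bal π)]
  exact card_bal n
end

section
/- The number of permutations of [n] with no inversion at distance greater than r (i.e., avoiding 2□^r 1) equals the number of permutations of [n] such that, in their cycle decomposition, any two elements in the same cycle differ by at most r. -/
namespace Foata

open Finset Equiv Equiv.Perm

variable {n : ℕ}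

/-- max of the values `w 0, …, w i`. -/
def m (w : Perm (Fin n)) (i : Fin n) : Fin n :=
  ((Finset.Iic i).image w).max' ⟨w i, Finset.mem_image_of_mem w (Finset.mem_Iic.2 le_rfl)⟩

/-- position of the prefix maximum: the block start of position `i`. -/
def bs (w : Perm (Fin n)) (i : Fin n) : Fin n := w.symm (m w i)

lemma apply_bs (w : Perm (Fin n)) (i : Fin n) : w (bs w i) = m w i := w.apply_symm_apply _

lemma m_mem (w : Perm (Fin n)) (i : Fin n) : ∃ j, j ≤ i ∧ w j = m w i := by
  have h := Finset.max'_mem ((Finset.Iic i).image w)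
    ⟨w i, Finset.mem_image_of_mem w (Finset.mem_Iic.2 le_rfl)⟩
  obtain ⟨j, hj, hji⟩ := Finset.mem_image.1 h
  exact ⟨j, Finset.mem_Iic.1 hj, hji⟩

lemma bs_le (w : Perm (Fin n)) (i : Fin n) : bs w i ≤ i := by
  obtain ⟨j, hj, hji⟩ := m_mem w i
  have h : bs w i = j := by rw [bs, ← hji, Equiv.symm_apply_apply]
  rw [h]; exact hj

lemma le_m (w : Perm (Fin n)) {j i : Fin n} (h : j ≤ i) : w j ≤ m w i :=
  Finset.le_max' _ _ (Finset.mem_image_of_mem w (Finset.mem_Iic.2 h))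

lemma m_mono (w : Perm (Fin n)) {i j : Fin n} (h : i ≤ j) : m w i ≤ m w j := by
  apply Finset.max'_le
  intro y hy
  obtain ⟨t, ht, rfl⟩ := Finset.mem_image.1 hy
  exact le_m w ((Finset.mem_Iic.1 ht).trans h)

lemma m_bs (w : Perm (Fin n)) (i : Fin n) : m w (bs w i) = m w i := by
  refine le_antisymm (m_mono w (bs_le w i)) ?_
  conv_lhs => rw [← apply_bs]
  exact le_m w le_rfl

lemma bs_bs (w : Perm (Fin n)) (i : Fin n) : bs w (bs w i) = bs w i := by
  rw [bs, m_bs]; rfl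

lemma start_le_bs (w : Perm (Fin n)) {s j : Fin n} (hs : bs w s = s) (h : s ≤ j) :
    s ≤ bs w j := by
  by_contra hlt
  push_neg at hlt
  have h1 : w (bs w j) ≤ m w s := le_m w hlt.le
  have h2 : m w s ≤ m w j := m_mono w h
  have h3 : w (bs w j) = m w s := le_antisymm h1 (by rw [apply_bs] at *; exact h2)
  have h5 : bs w j = w.symm (m w s) := by
    have := congrArg w.symm h3
    rwa [Equiv.symm_apply_apply] at this
  have h4 : bs w j = bs w s := h5
  rw [hs] at h4
  exact hlt.ne h4

lemma bs_succ (w : Perm (Fin n)) (i : Fin n) (h : (i : ℕ) + 1 < n) :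
    bs w ⟨i + 1, h⟩ = bs w i ∨ bs w ⟨i + 1, h⟩ = ⟨i + 1, h⟩ := by
  have hIic : Finset.Iic (⟨i + 1, h⟩ : Fin n) = insert ⟨i + 1, h⟩ (Finset.Iic i) := by
    ext t
    simp only [Finset.mem_Iic, Finset.mem_insert, Fin.le_def, Fin.ext_iff]
    omega
  have hle' : i ≤ (⟨i + 1, h⟩ : Fin n) := Fin.le_def.2 (Nat.le_succ _)
  have hm : m w ⟨i + 1, h⟩ = max (m w i) (w ⟨i + 1, h⟩) := by
    refine le_antisymm ?_ (max_le (m_mono w hle') (le_m w le_rfl))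
    apply Finset.max'_le
    intro y hy
    obtain ⟨t, ht, rfl⟩ := Finset.mem_image.1 hy
    have ht2 : t ≤ (⟨i + 1, h⟩ : Fin n) := Finset.mem_Iic.1 ht
    have ht' : (t : ℕ) ≤ (i : ℕ) + 1 := Fin.le_def.1 ht2
    rcases eq_or_lt_of_le ht' with heq | hltt
    · have : t = (⟨i + 1, h⟩ : Fin n) := Fin.ext heq
      rw [this]; exact le_max_right _ _
    · exact le_trans (le_m w (show t ≤ i from Fin.le_def.2 (show (t : ℕ) ≤ (i : ℕ) by omega))) (le_max_left _ _)
  rcases le_total (w ⟨i + 1, h⟩) (m w i) with hle | hle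
  · left
    rw [bs, hm, max_eq_left hle]; rfl
  · right
    rw [bs, hm, max_eq_right hle, Equiv.symm_apply_apply]

/-- the block cyclic-shift permutation (as a function). -/
def c (w : Perm (Fin n)) (i : Fin n) : Fin n :=
  if h : (i : ℕ) + 1 < n then
    if bs w ⟨i + 1, h⟩ = ⟨i + 1, h⟩ then bs w i else ⟨i + 1, h⟩
  else bs w i

lemma c_spec (w : Perm (Fin n)) (i : Fin n) :
    ((∃ h : (i : ℕ) + 1 < n, c w i = ⟨i + 1, h⟩ ∧ bs w ⟨i + 1, h⟩ ≠ ⟨i + 1, h⟩) ∨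
      (c w i = bs w i ∧ ∀ h : (i : ℕ) + 1 < n, bs w ⟨i + 1, h⟩ = ⟨i + 1, h⟩)) := by
  unfold c
  split_ifs with h h2
  · right; exact ⟨rfl, fun _ => h2⟩
  · left; exact ⟨h, rfl, h2⟩
  · right; exact ⟨rfl, fun h' => absurd h' h⟩

lemma bs_c (w : Perm (Fin n)) (i : Fin n) : bs w (c w i) = bs w i := by
  rcases c_spec w i with ⟨h, hc, hne⟩ | ⟨hc, _⟩
  · rw [hc]
    rcases bs_succ w i h with h1 | h1
    · exact h1
    · exact absurd h1 hne
  · rw [hc, bs_bs]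

lemma c_inj (w : Perm (Fin n)) : Function.Injective (c w) := by
  intro i j hij
  rcases c_spec w i with ⟨hi, hci, hinei⟩ | ⟨hci, hiend⟩ <;>
    rcases c_spec w j with ⟨hj, hcj, hinej⟩ | ⟨hcj, hjend⟩
  · -- both succ
    rw [hci, hcj] at hij
    have : (i : ℕ) + 1 = (j : ℕ) + 1 := congrArg Fin.val hij
    exact Fin.ext (by omega)
  · -- i succ, j wrap
    exfalso
    rw [hci, hcj] at hij
    have : bs w ⟨(i : ℕ) + 1, hi⟩ = ⟨(i : ℕ) + 1, hi⟩ := by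
      rw [hij]; exact bs_bs w j
    exact hinei this
  · -- i wrap, j succ
    exfalso
    rw [hci, hcj] at hij
    have : bs w ⟨(j : ℕ) + 1, hj⟩ = ⟨(j : ℕ) + 1, hj⟩ := by
      rw [← hij]; exact bs_bs w i
    exact hinej this
  · -- both wrap
    rw [hci, hcj] at hij
    by_contra hne
    rcases Ne.lt_or_gt (fun h : i = j => hne h) with hlt | hlt
    · have hv : (i : ℕ) < (j : ℕ) := Fin.lt_def.1 hlt
      have h1 : (i : ℕ) + 1 < n := by have := j.isLt; omega
      have hstart := hiend h1
      have hle : (⟨(i : ℕ) + 1, h1⟩ : Fin n) ≤ j :=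
        Fin.le_def.2 (show (i : ℕ) + 1 ≤ (j : ℕ) by omega)
      have h2 := start_le_bs w hstart hle
      rw [← hij] at h2
      have h3 := le_trans h2 (bs_le w i)
      have h4 : (i : ℕ) + 1 ≤ (i : ℕ) := Fin.le_def.1 h3
      omega
    · have hv : (j : ℕ) < (i : ℕ) := Fin.lt_def.1 hlt
      have h1 : (j : ℕ) + 1 < n := by have := i.isLt; omega
      have hstart := hjend h1
      have hle : (⟨(j : ℕ) + 1, h1⟩ : Fin n) ≤ i :=
        Fin.le_def.2 (show (j : ℕ) + 1 ≤ (i : ℕ) by omega)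
      have h2 := start_le_bs w hstart hle
      rw [hij] at h2
      have h3 := le_trans h2 (bs_le w j)
      have h4 : (j : ℕ) + 1 ≤ (j : ℕ) := Fin.le_def.1 h3
      omega

/-- the block cyclic-shift as a permutation. -/
noncomputable def cE (w : Perm (Fin n)) : Perm (Fin n) :=
  Equiv.ofBijective (c w) (Finite.injective_iff_bijective.1 (c_inj w))

lemma cE_apply (w : Perm (Fin n)) (i : Fin n) : cE w i = c w i := rfl

/-- Foata forward map: word to permutation. -/
noncomputable def Phi (w : Perm (Fin n)) : Perm (Fin n) := w * cE w * w⁻¹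

lemma c_eq_succ (w : Perm (Fin n)) (t : Fin n) (h : (t : ℕ) + 1 < n)
    (hne : bs w ⟨t + 1, h⟩ ≠ ⟨t + 1, h⟩) : c w t = ⟨t + 1, h⟩ := by
  unfold c
  rw [dif_pos h, if_neg hne]

lemma bs_of_block (w : Perm (Fin n)) (i : Fin n) :
    ∀ k (t : Fin n), (t : ℕ) + k = (i : ℕ) → bs w i ≤ t → bs w t = bs w i := by
  intro k
  induction k with
  | zero =>
    intro t ht _
    have : t = i := Fin.ext (by omega)
    rw [this]
  | succ k ih =>
    intro t ht hbs
    have hlt : (t : ℕ) + 1 < n := by have := i.isLt; omega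
    have hih := ih ⟨t + 1, hlt⟩ (show (t : ℕ) + 1 + k = (i : ℕ) by omega)
      (Fin.le_def.2 (show (bs w i : ℕ) ≤ (t : ℕ) + 1 from le_trans (Fin.le_def.1 hbs) (Nat.le_succ _)))
    rcases bs_succ w t hlt with h1 | h1
    · rw [← h1, hih]
    · exfalso
      rw [h1] at hih
      have hv2 : (t : ℕ) + 1 = (bs w i : ℕ) := congrArg Fin.val hih
      have := Fin.le_def.1 hbs
      omega

lemma bs_eq_of_le (w : Perm (Fin n)) {i t : Fin n} (h1 : bs w i ≤ t) (h2 : t ≤ i) :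
    bs w t = bs w i :=
  bs_of_block w i ((i : ℕ) - (t : ℕ)) t (by have := Fin.le_def.1 h2; omega) h1

lemma cE_pow (w : Perm (Fin n)) (i : Fin n) :
    ∀ k, (hk : (bs w i : ℕ) + k ≤ (i : ℕ)) →
      ((cE w) ^ k) (bs w i) = ⟨(bs w i : ℕ) + k, by have := i.isLt; omega⟩ := by
  intro k
  induction k with
  | zero =>
    intro hk
    simp only [pow_zero, Equiv.Perm.coe_one, id_eq]
    exact Fin.ext (show (bs w i : ℕ) = (bs w i : ℕ) + 0 by omega)
  | succ k ih =>
    intro hk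
    have hk' : (bs w i : ℕ) + k ≤ (i : ℕ) := by omega
    have hihv := ih hk'
    rw [pow_succ', Equiv.Perm.mul_apply, hihv]
    have hlt : (bs w i : ℕ) + k + 1 < n := by have := i.isLt; omega
    have hbseq : bs w (⟨(bs w i : ℕ) + k + 1, hlt⟩ : Fin n) = bs w i :=
      bs_eq_of_le w (Fin.le_def.2 (show (bs w i : ℕ) ≤ (bs w i : ℕ) + k + 1 by omega))
        (Fin.le_def.2 (show (bs w i : ℕ) + k + 1 ≤ (i : ℕ) by omega))
    have hne : bs w (⟨(bs w i : ℕ) + k + 1, hlt⟩ : Fin n) ≠ ⟨(bs w i : ℕ) + k + 1, hlt⟩ := by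
      rw [hbseq]
      intro hcon
      have hv : (bs w i : ℕ) = (bs w i : ℕ) + k + 1 := congrArg Fin.val hcon
      omega
    have hc := c_eq_succ w ⟨(bs w i : ℕ) + k, by omega⟩ hlt hne
    rw [cE_apply, hc]
    exact Fin.ext rfl

lemma sameCycle_cE_bs (w : Perm (Fin n)) (i : Fin n) : (cE w).SameCycle (bs w i) i := by
  refine ⟨(((i : ℕ) - (bs w i : ℕ) : ℕ) : ℤ), ?_⟩
  rw [zpow_natCast, cE_pow w i _ (by have := Fin.le_def.1 (bs_le w i); omega)]
  have hle := Fin.le_def.1 (bs_le w i)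
  exact Fin.ext (show (bs w i : ℕ) + ((i : ℕ) - (bs w i : ℕ)) = (i : ℕ) by omega)

lemma bs_pow (w : Perm (Fin n)) (k : ℕ) (i : Fin n) :
    bs w (((cE w) ^ k) i) = bs w i := by
  induction k generalizing i with
  | zero => simp
  | succ k ih =>
    rw [pow_succ, Equiv.Perm.mul_apply, ih ((cE w) i), cE_apply, bs_c]

lemma bs_sameCycle {w : Perm (Fin n)} {i j : Fin n} (h : (cE w).SameCycle i j) :
    bs w i = bs w j := by
  obtain ⟨k, _, hk⟩ := h.exists_pow_eq'
  rw [← hk, bs_pow]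

lemma sameCycle_Phi_iff (w : Perm (Fin n)) (a b : Fin n) :
    (Phi w).SameCycle a b ↔ (cE w).SameCycle (w⁻¹ a) (w⁻¹ b) := by
  constructor
  · rintro ⟨z, hz⟩
    refine ⟨z, ?_⟩
    rw [Phi, conj_zpow] at hz
    have := congrArg (⇑(w⁻¹)) hz
    simpa [Equiv.Perm.mul_apply] using this
  · rintro ⟨z, hz⟩
    refine ⟨z, ?_⟩
    rw [Phi, conj_zpow]
    simp only [Equiv.Perm.mul_apply]
    rw [hz]
    simp

/-- the word condition: no drop of more than `r`. -/
def Wcond (r : ℕ) (w : Perm (Fin n)) : Prop :=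
  ∀ a b : Fin n, a < b → (w a : ℕ) ≤ (w b : ℕ) + r

/-- the cycle condition. -/
def Bcond (r : ℕ) (σ : Perm (Fin n)) : Prop :=
  ∀ a b : Fin n, σ.SameCycle a b → (a : ℕ) ≤ (b : ℕ) + r

lemma Phi_mem (r : ℕ) (w : Perm (Fin n)) (hw : Wcond r w) : Bcond r (Phi w) := by
  intro a b hab
  have h := (sameCycle_Phi_iff w a b).1 hab
  have hbs : bs w (w⁻¹ a) = bs w (w⁻¹ b) := bs_sameCycle h
  have ha : (a : ℕ) ≤ (w (bs w (w⁻¹ a)) : ℕ) := by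
    have h1 : w (w⁻¹ a) ≤ m w (w⁻¹ a) := le_m w le_rfl
    rw [← apply_bs w (w⁻¹ a)] at h1
    have := Fin.le_def.1 h1
    simpa using this
  rw [hbs] at ha
  rcases eq_or_lt_of_le (bs_le w (w⁻¹ b)) with heq | hlt
  · rw [heq] at ha
    simp only [Equiv.Perm.coe_inv, Equiv.apply_symm_apply] at ha
    omega
  · have := hw _ _ hlt
    simp only [Equiv.Perm.coe_inv, Equiv.apply_symm_apply] at this ha
    omega

section Psi

variable (σ : Perm (Fin n))

/-- the cycle of `x` as a finset. -/
def cyc (x : Fin n) : Finset (Fin n) := Finset.univ.filter (fun y => σ.SameCycle x y)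

lemma self_mem_cyc (x : Fin n) : x ∈ cyc σ x := by
  simp [cyc, Equiv.Perm.SameCycle.refl]

/-- the maximum of the cycle of `x`. -/
def M (x : Fin n) : Fin n := (cyc σ x).max' ⟨x, self_mem_cyc σ x⟩

lemma sameCycle_M (x : Fin n) : σ.SameCycle x (M σ x) := by
  have h := (cyc σ x).max'_mem ⟨x, self_mem_cyc σ x⟩
  exact (Finset.mem_filter.1 h).2

lemma le_M {x y : Fin n} (h : σ.SameCycle x y) : y ≤ M σ x :=
  Finset.le_max' _ _ (by simp [cyc, h])

lemma M_exists_pow (x : Fin n) : ∃ k : ℕ, (σ ^ k) (M σ x) = x := by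
  obtain ⟨k, _, hk⟩ := (sameCycle_M σ x).symm.exists_pow_eq'
  exact ⟨k, hk⟩

/-- offset of `x` from the maximum of its cycle. -/
def dd (x : Fin n) : ℕ := Nat.find (M_exists_pow σ x)

lemma dd_spec (x : Fin n) : (σ ^ dd σ x) (M σ x) = x := Nat.find_spec (M_exists_pow σ x)

lemma dd_min {x : Fin n} {k : ℕ} (h : k < dd σ x) : (σ ^ k) (M σ x) ≠ x :=
  Nat.find_min (M_exists_pow σ x) h

lemma dd_lt (x : Fin n) : dd σ x < n := by
  have hinj : Set.InjOn (fun k => (σ ^ k) (M σ x)) (Finset.range (dd σ x + 1)) := by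
    intro a ha b hb hab
    simp only [Finset.coe_range, Set.mem_Iio] at ha hb
    by_contra hne
    -- wlog a < b
    have key : ∀ a b : ℕ, a < b → b ≤ dd σ x → (σ ^ a) (M σ x) = (σ ^ b) (M σ x) → False := by
      intro a b hlt hble heq
      have he : (σ ^ (dd σ x - b + a)) (M σ x) = x := by
        have h1 : (σ ^ (dd σ x - b)) ((σ ^ b) (M σ x)) = x := by
          rw [← Equiv.Perm.mul_apply, ← pow_add]
          rw [show dd σ x - b + b = dd σ x by omega]
          exact dd_spec σ x
        rw [← heq] at h1
        rw [← Equiv.Perm.mul_apply, ← pow_add] at h1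
        exact h1
      exact dd_min σ (show dd σ x - b + a < dd σ x by omega) he
    rcases lt_trichotomy a b with h | h | h
    · exact key a b h (by omega) hab
    · exact hne h
    · exact key b a h (by omega) hab.symm
  have hcard := Finset.card_le_card_of_injOn (fun k => (σ ^ k) (M σ x))
    (fun k _ => Finset.mem_univ _) hinj
  simpa using hcard

/-- the sorting key. -/
def kappa (x : Fin n) : ℕ := n * (M σ x : ℕ) + dd σ x

lemma kappa_inj : Function.Injective (kappa σ) := by
  intro x y h
  have hn : 0 < n := x.pos
  have hx := dd_lt σ x
  have hy := dd_lt σ y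
  have hdiv : (M σ x : ℕ) = (M σ y : ℕ) := by
    have h1 : (kappa σ x) / n = (M σ x : ℕ) := by
      rw [kappa, Nat.mul_add_div hn, Nat.div_eq_of_lt hx, Nat.add_zero]
    have h2 : (kappa σ y) / n = (M σ y : ℕ) := by
      rw [kappa, Nat.mul_add_div hn, Nat.div_eq_of_lt hy, Nat.add_zero]
    rw [← h1, ← h2, h]
  have hmod : dd σ x = dd σ y := by
    have h1 : (kappa σ x) % n = dd σ x := by
      rw [kappa, Nat.mul_add_mod, Nat.mod_eq_of_lt hx]
    have h2 : (kappa σ y) % n = dd σ y := by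
      rw [kappa, Nat.mul_add_mod, Nat.mod_eq_of_lt hy]
    rw [← h1, ← h2, h]
  have hM : M σ x = M σ y := Fin.ext hdiv
  rw [← dd_spec σ x, ← dd_spec σ y, hM, hmod]

/-- position of `x` in the sorted order by `kappa`. -/
def posv (x : Fin n) : ℕ := (Finset.univ.filter (fun y => kappa σ y < kappa σ x)).card

lemma posv_lt (x : Fin n) : posv σ x < n := by
  have hsub : (Finset.univ.filter (fun y => kappa σ y < kappa σ x)) ⊆ Finset.univ.erase x := by
    intro y hy
    simp only [Finset.mem_filter] at hy
    exact Finset.mem_erase.2 ⟨fun h => absurd (congrArg (kappa σ) h) (by omega), Finset.mem_univ _⟩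
  have hc := Finset.card_le_card hsub
  rw [Finset.card_erase_of_mem (Finset.mem_univ x), Finset.card_univ, Fintype.card_fin] at hc
  have := x.pos
  unfold posv
  omega

lemma posv_mono {x y : Fin n} (h : kappa σ x < kappa σ y) : posv σ x < posv σ y := by
  apply Finset.card_lt_card
  constructor
  · intro z hz
    simp only [Finset.mem_filter] at hz ⊢
    exact ⟨hz.1, by omega⟩
  · intro hsub
    have hx : x ∈ Finset.univ.filter (fun z => kappa σ z < kappa σ y) := by
      simp only [Finset.mem_filter]; exact ⟨Finset.mem_univ _, h⟩
    have := hsub hx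
    simp only [Finset.mem_filter] at this
    omega

lemma pos_inj : Function.Injective (fun x => (⟨posv σ x, posv_lt σ x⟩ : Fin n)) := by
  intro x y h
  have hv : posv σ x = posv σ y := congrArg Fin.val h
  by_contra hne
  have hk : kappa σ x ≠ kappa σ y := fun hc => hne (kappa_inj σ hc)
  rcases lt_or_gt_of_ne hk with h1 | h1
  · have := posv_mono σ h1; omega
  · have := posv_mono σ h1; omega

/-- sorting permutation: sends `x` to its position. -/
noncomputable def posE : Perm (Fin n) :=
  Equiv.ofBijective _ (Finite.injective_iff_bijective.1 (pos_inj σ))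

lemma posE_apply (x : Fin n) : posE σ x = ⟨posv σ x, posv_lt σ x⟩ := rfl

/-- Foata inverse map: permutation to word. -/
noncomputable def Psi : Perm (Fin n) := (posE σ)⁻¹

lemma kappa_lt_of_lt {a b : Fin n} (hab : a < b) : kappa σ (Psi σ a) < kappa σ (Psi σ b) := by
  have hx : posE σ (Psi σ a) = a := Equiv.apply_symm_apply _ _
  have hy : posE σ (Psi σ b) = b := Equiv.apply_symm_apply _ _
  rcases lt_trichotomy (kappa σ (Psi σ a)) (kappa σ (Psi σ b)) with h | h | h
  · exact h
  · exfalso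
    have : Psi σ a = Psi σ b := kappa_inj σ h
    rw [this, hy] at hx
    exact absurd hx (Fin.ne_of_lt hab).symm
  · exfalso
    have hm := posv_mono σ h
    have hva : posv σ (Psi σ a) = (a : ℕ) := congrArg Fin.val hx
    have hvb : posv σ (Psi σ b) = (b : ℕ) := congrArg Fin.val hy
    have := Fin.lt_def.1 hab
    omega

lemma Psi_mem (r : ℕ) (hσ : Bcond r σ) : Wcond r (Psi σ) := by
  intro a b hab
  set x := Psi σ a with hxdef
  set y := Psi σ b with hydef
  have hk : kappa σ x < kappa σ y := kappa_lt_of_lt σ hab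
  have hMle : (M σ x : ℕ) ≤ (M σ y : ℕ) := by
    by_contra hgt
    push_neg at hgt
    have h1 : n * ((M σ y : ℕ) + 1) ≤ n * (M σ x : ℕ) := Nat.mul_le_mul_left _ (by omega)
    rw [Nat.mul_add, Nat.mul_one] at h1
    have h2 := dd_lt σ y
    rw [kappa, kappa] at hk
    omega
  have h3 : (x : ℕ) ≤ (M σ x : ℕ) := Fin.le_def.1 (le_M σ (Equiv.Perm.SameCycle.refl σ x))
  have h4 : (M σ y : ℕ) ≤ (y : ℕ) + r := hσ (M σ y) y (sameCycle_M σ y).symm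
  omega

end Psi

section Main

variable (w : Perm (Fin n))

lemma sameCycle_Phi_of_cE {i j : Fin n} (h : (cE w).SameCycle i j) :
    (Phi w).SameCycle (w i) (w j) := by
  rw [sameCycle_Phi_iff]
  simpa using h

lemma M_Phi (i : Fin n) : M (Phi w) (w i) = w (bs w i) := by
  refine le_antisymm ?_ (le_M _ (sameCycle_Phi_of_cE w (sameCycle_cE_bs w i).symm))
  -- every element of the cycle of `w i` is at most `w (bs w i)`
  have hM := sameCycle_M (Phi w) (w i)
  set y := M (Phi w) (w i) with hydef
  have h1 : (cE w).SameCycle i (w⁻¹ y) := by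
    have := (sameCycle_Phi_iff w (w i) y).1 hM
    simpa using this
  have h2 : bs w (w⁻¹ y) = bs w i := (bs_sameCycle h1).symm
  have h3 : w (w⁻¹ y) ≤ m w (w⁻¹ y) := le_m w le_rfl
  rw [← apply_bs w (w⁻¹ y)] at h3
  rw [h2] at h3
  simpa using h3

lemma Phi_pow_apply (k : ℕ) (x : Fin n) : ((Phi w) ^ k) (w x) = w (((cE w) ^ k) x) := by
  rw [Phi, conj_pow]
  simp [Equiv.Perm.mul_apply]

lemma dd_Phi (i : Fin n) : dd (Phi w) (w i) = (i : ℕ) - (bs w i : ℕ) := by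
  have hs := Fin.le_def.1 (bs_le w i)
  have hwit : ((Phi w) ^ ((i : ℕ) - (bs w i : ℕ))) (M (Phi w) (w i)) = w i := by
    rw [M_Phi, Phi_pow_apply, cE_pow w i _ (by omega)]
    congr 1
    exact Fin.ext (show (bs w i : ℕ) + ((i : ℕ) - (bs w i : ℕ)) = (i : ℕ) by omega)
  refine le_antisymm (Nat.find_le hwit) ?_
  unfold dd
  rw [Nat.le_find_iff]
  intro k hk
  rw [M_Phi, Phi_pow_apply, cE_pow w i _ (by omega)]
  intro hcon
  have := congrArg Fin.val (w.injective hcon)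
  have h2 : (bs w i : ℕ) + k = (i : ℕ) := this
  omega

lemma kappa_Phi (i : Fin n) :
    kappa (Phi w) (w i) = n * (w (bs w i) : ℕ) + ((i : ℕ) - (bs w i : ℕ)) := by
  rw [kappa, M_Phi, dd_Phi]

lemma kappa_Phi_strictMono {i j : Fin n} (hij : i < j) :
    kappa (Phi w) (w i) < kappa (Phi w) (w j) := by
  rw [kappa_Phi, kappa_Phi]
  have hsi := Fin.le_def.1 (bs_le w i)
  have hsj := Fin.le_def.1 (bs_le w j)
  have hvij := Fin.lt_def.1 hij
  rcases eq_or_ne (bs w i) (bs w j) with heq | hne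
  · rw [heq]
    exact Nat.add_lt_add_left (by omega) _
  · have hmlt : (w (bs w i) : ℕ) < (w (bs w j) : ℕ) := by
      have hmle : m w i ≤ m w j := m_mono w (le_of_lt hij)
      have hmne : m w i ≠ m w j := by
        intro hcon
        exact hne (by rw [bs, bs, hcon])
      have := Fin.le_def.1 hmle
      have hv : (m w i : ℕ) ≠ (m w j : ℕ) := fun hc => hmne (Fin.ext hc)
      rw [← apply_bs w i, ← apply_bs w j] at this hv
      omega
    calc n * (w (bs w i) : ℕ) + ((i : ℕ) - (bs w i : ℕ))
        < n * (w (bs w i) : ℕ) + n := Nat.add_lt_add_left (by have := i.isLt; omega) _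
      _ = n * ((w (bs w i) : ℕ) + 1) := by ring
      _ ≤ n * (w (bs w j) : ℕ) := Nat.mul_le_mul_left _ (by omega)
      _ ≤ n * (w (bs w j) : ℕ) + ((j : ℕ) - (bs w j : ℕ)) := Nat.le_add_right _ _

lemma posE_Phi (i : Fin n) : posE (Phi w) (w i) = i := by
  apply Fin.ext
  rw [posE_apply]
  show posv (Phi w) (w i) = (i : ℕ)
  have hcard : posv (Phi w) (w i) =
      (Finset.univ.filter (fun j => kappa (Phi w) (w j) < kappa (Phi w) (w i))).card := by
    unfold posv
    apply Finset.card_bij' (fun y _ => w⁻¹ y) (fun j _ => w j)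
    · intro y hy
      simp only [Finset.mem_filter] at hy ⊢
      refine ⟨Finset.mem_univ _, ?_⟩
      rw [Equiv.Perm.coe_inv, Equiv.apply_symm_apply]
      exact hy.2
    · intro j hj
      simp only [Finset.mem_filter] at hj ⊢
      exact ⟨Finset.mem_univ _, hj.2⟩
    · intro y _; simp
    · intro j _; simp
  rw [hcard]
  have hfilter : (Finset.univ.filter (fun j => kappa (Phi w) (w j) < kappa (Phi w) (w i)))
      = Finset.Iio i := by
    ext j
    simp only [Finset.mem_filter, Finset.mem_Iio, Finset.mem_univ, true_and]
    constructor
    · intro h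
      rcases lt_trichotomy j i with h1 | h1 | h1
      · exact h1
      · exact absurd h (by rw [h1]; omega)
      · have := kappa_Phi_strictMono w h1; omega
    · intro h
      exact kappa_Phi_strictMono w h
  rw [hfilter, Fin.card_Iio]

lemma Psi_Phi : Psi (Phi w) = w := by
  apply Equiv.ext
  intro x
  apply (posE (Phi w)).injective
  rw [posE_Phi]
  exact Equiv.apply_symm_apply _ _

lemma Phi_Psi (σ : Perm (Fin n)) : Phi (Psi σ) = σ := by
  have hinj : Function.Injective (Phi (n := n)) := by
    intro a b hab
    rw [← Psi_Phi a, hab, Psi_Phi b]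
  obtain ⟨v, hv⟩ := (Finite.injective_iff_surjective.1 hinj) σ
  rw [← hv, Psi_Phi]

end Main

lemma Acond_iff (r : ℕ) (π : Perm (Fin n)) :
    (¬ ∃ i j : Fin n, (i : ℕ) + r + 1 ≤ (j : ℕ) ∧ π j < π i) ↔ Wcond r π⁻¹ := by
  constructor
  · intro hA a b hab
    by_contra hc
    push_neg at hc
    refine hA ⟨π⁻¹ b, π⁻¹ a, by omega, ?_⟩
    show π (π⁻¹ a) < π (π⁻¹ b)
    simpa using hab
  · rintro hW ⟨i, j, hij, hlt⟩
    have := hW (π j) (π i) hlt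
    simp only [Equiv.Perm.coe_inv, Equiv.symm_apply_apply] at this
    omega

theorem card_eq (n r : ℕ) :
    Nat.card {π : Equiv.Perm (Fin n) //
        ¬ ∃ i j : Fin n, (i : ℕ) + r + 1 ≤ (j : ℕ) ∧ π j < π i} =
    Nat.card {π : Equiv.Perm (Fin n) //
        ∀ a b : Fin n, π.SameCycle a b → (a : ℕ) ≤ (b : ℕ) + r} := by
  apply Nat.card_congr
  refine ⟨fun p => ⟨Phi (p.1⁻¹), Phi_mem r _ ((Acond_iff r p.1).1 p.2)⟩,
    fun q => ⟨(Psi q.1)⁻¹, (Acond_iff r _).2 ?_⟩, ?_, ?_⟩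
  · rw [inv_inv]
    exact Psi_mem q.1 r q.2
  · intro p
    apply Subtype.ext
    show (Psi (Phi p.1⁻¹))⁻¹ = p.1
    rw [Psi_Phi, inv_inv]
  · intro q
    apply Subtype.ext
    show Phi (((Psi q.1)⁻¹)⁻¹) = q.1
    rw [inv_inv, Phi_Psi]

end Foata


/-- The number of permutations of `[n]` with no inversion at distance greater than `r`
(i.e. avoiding `2□^r 1`) equals the number of permutations of `[n]` in which any two
elements of the same cycle differ by at most `r`. -/
theorem stmt2 (n r : ℕ) :
    Nat.card {π : Equiv.Perm (Fin n) //
        ¬ ∃ i j : Fin n, (i : ℕ) + r + 1 ≤ (j : ℕ) ∧ π j < π i} =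
    Nat.card {π : Equiv.Perm (Fin n) //
        ∀ a b : Fin n, π.SameCycle a b → (a : ℕ) ≤ (b : ℕ) + r} := by
  exact Foata.card_eq n r
end

section
/- Avoiding the distant pattern 1□2 is equivalent to simultaneously avoiding the three classical patterns 123, 132, and 213. That is, a permutation π of [n] has no pair of indices i, j with j ≥ i + 2 and π_i < π_j if and only if π contains none of the classical patterns 123, 132, 213. -/
/-- Avoiding the distant pattern `1□2` is equivalent to simultaneously avoiding the
classical patterns `123`, `132` and `213`. -/
theorem stmt5 (n : ℕ) (π : Equiv.Perm (Fin n)) :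
    (¬ ∃ i j : Fin n, (i : ℕ) + 2 ≤ (j : ℕ) ∧ π i < π j) ↔
      ((¬ ∃ i j k : Fin n, i < j ∧ j < k ∧ π i < π j ∧ π j < π k) ∧
       (¬ ∃ i j k : Fin n, i < j ∧ j < k ∧ π i < π k ∧ π k < π j) ∧
       (¬ ∃ i j k : Fin n, i < j ∧ j < k ∧ π j < π i ∧ π i < π k)) := by
  constructor
  · intro h
    refine ⟨?_, ?_, ?_⟩
    · rintro ⟨i, j, k, hij, hjk, h1, h2⟩
      exact h ⟨i, k, by exact le_trans (by omega) (by have a := hij; have b := hjk; rw [Fin.lt_def] at a b; omega : (i:ℕ) + 2 ≤ (k:ℕ)), h1.trans h2⟩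
    · rintro ⟨i, j, k, hij, hjk, h1, _⟩
      exact h ⟨i, k, by exact le_trans (by omega) (by have a := hij; have b := hjk; rw [Fin.lt_def] at a b; omega : (i:ℕ) + 2 ≤ (k:ℕ)), h1⟩
    · rintro ⟨i, j, k, hij, hjk, _, h2⟩
      exact h ⟨i, k, by exact le_trans (by omega) (by have a := hij; have b := hjk; rw [Fin.lt_def] at a b; omega : (i:ℕ) + 2 ≤ (k:ℕ)), h2⟩
  · rintro ⟨h1, h2, h3⟩ ⟨i, j, hij, hlt⟩
    have him : (i : ℕ) + 1 < n := by have := j.isLt; omega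
    set m : Fin n := ⟨(i : ℕ) + 1, by omega⟩ with hm
    have h_im : i < m := by simp [hm, Fin.lt_def]
    have h_mj : m < j := by simp [hm, Fin.lt_def]; omega
    rcases lt_trichotomy (π m) (π i) with hc | hc | hc
    · exact h3 ⟨i, m, j, h_im, h_mj, hc, hlt⟩
    · exact absurd (π.injective hc) (by simp [hm, Fin.ext_iff])
    · rcases lt_or_ge (π m) (π j) with hd | hd
      · exact h1 ⟨i, m, j, h_im, h_mj, hc, hd⟩
      · rcases lt_or_eq_of_le hd with hd | hd
        · exact h2 ⟨i, m, j, h_im, h_mj, hlt, hd⟩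
        · exact absurd (π.injective hd.symm) (by simp [hm, Fin.ext_iff]; omega)
end

section
/- The Fibonacci numbers satisfy the identity F_{n+1} = n + Σ_{k=1}^{n-3} (n - (k+2)·F_{n-(k+1)})·k·k!, for all n ≥ 4, where F_1 = F_2 = 1. -/
private def cc (k : ℕ) : ℤ := ((k : ℤ) + 2) * k * (Nat.factorial k)

private def TT (m : ℕ) : ℤ := ∑ k ∈ Finset.Icc 1 m, cc k * (Nat.fib (m + 1 - k) : ℤ)

private lemma sum_kk (m : ℕ) :
    ∑ k ∈ Finset.Icc 1 m, (k : ℤ) * (Nat.factorial k : ℤ) =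
      (Nat.factorial (m + 1) : ℤ) - 1 := by
  induction m with
  | zero => simp
  | succ m ih =>
      rw [Finset.sum_Icc_succ_top (by omega), ih, Nat.factorial_succ (m + 1)]
      push_cast
      ring

private lemma TT_rec (m : ℕ) : TT (m + 2) = TT (m + 1) + TT m + cc (m + 2) := by
  unfold TT
  rw [Finset.sum_Icc_succ_top (by omega : 1 ≤ m + 2)]
  have h1 : ∑ k ∈ Finset.Icc 1 (m + 1), cc k * (Nat.fib (m + 2 + 1 - k) : ℤ) =
      ∑ k ∈ Finset.Icc 1 (m + 1),
        (cc k * (Nat.fib (m + 1 + 1 - k) : ℤ) + cc k * (Nat.fib (m + 1 - k) : ℤ)) := by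
    apply Finset.sum_congr rfl
    intro k hk
    simp only [Finset.mem_Icc] at hk
    have h2 : m + 2 + 1 - k = (m + 1 - k) + 2 := by omega
    have h3 : m + 1 + 1 - k = (m + 1 - k) + 1 := by omega
    rw [h2, h3, Nat.fib_add_two]
    push_cast
    ring
  have h4 : ∑ k ∈ Finset.Icc 1 (m + 1), cc k * (Nat.fib (m + 1 - k) : ℤ) =
      ∑ k ∈ Finset.Icc 1 m, cc k * (Nat.fib (m + 1 - k) : ℤ) := by
    rw [Finset.sum_Icc_succ_top (by omega : 1 ≤ m + 1)]
    simp
  rw [h1, Finset.sum_add_distrib, h4]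
  simp

private lemma aux_id (m : ℕ) :
    (Nat.fib (m + 3) : ℤ) + TT m = (Nat.factorial (m + 2) : ℤ) := by
  induction m using Nat.twoStepInduction with
  | zero => simp [TT]; decide
  | one =>
      have : TT 1 = 3 := by simp [TT, cc]
      rw [this]; decide
  | more m ih1 ih2 =>
      rw [TT_rec]
      have hf : (m + 2) + 3 = (m + 3) + 2 := by ring
      rw [hf, Nat.fib_add_two]
      have hc : cc (m + 2) = ((m : ℤ) + 4) * ((m : ℤ) + 2) * (Nat.factorial (m + 2) : ℤ) := by
        unfold cc; push_cast; ring
      have h1 : (m + 3 : ℕ) + 1 = (m + 1) + 3 := by ring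
      have h2 : (Nat.factorial (m + 2 + 2) : ℤ) =
          ((m : ℤ) + 4) * ((m : ℤ) + 3) * (Nat.factorial (m + 2) : ℤ) := by
        rw [Nat.factorial_succ, Nat.factorial_succ (m + 2)]
        push_cast; ring
      have h3 : (Nat.factorial (m + 1 + 2) : ℤ) =
          ((m : ℤ) + 3) * (Nat.factorial (m + 2) : ℤ) := by
        rw [Nat.factorial_succ (m + 2)]; push_cast; ring
      rw [h1] at *
      push_cast at *
      linarith [ih1, ih2, hc, h2, h3]

/-- The Fibonacci identity
`F (n+1) = n + ∑_{k=1}^{n-3} (n - (k+2) F (n-(k+1))) k k!` for `n ≥ 4`,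
with `F 1 = F 2 = 1` (i.e. `Nat.fib`). -/
theorem stmt6 (n : ℕ) (hn : 4 ≤ n) :
    (Nat.fib (n + 1) : ℤ) =
      (n : ℤ) + ∑ k ∈ Finset.Icc 1 (n - 3),
        ((n : ℤ) - ((k : ℤ) + 2) * (Nat.fib (n - (k + 1)) : ℤ)) * (k : ℤ) *
          (Nat.factorial k : ℤ) := by
  obtain ⟨m, hm, rfl⟩ : ∃ m, 1 ≤ m ∧ n = m + 3 := ⟨n - 3, by omega, by omega⟩
  have hsub : (m + 3 : ℕ) - 3 = m := by omega
  rw [hsub]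
  have hsum : ∑ k ∈ Finset.Icc 1 m,
      (((m : ℤ) + 3) - ((k : ℤ) + 2) * (Nat.fib (m + 3 - (k + 1)) : ℤ)) * (k : ℤ) *
        (Nat.factorial k : ℤ) =
      ((m : ℤ) + 3) * (∑ k ∈ Finset.Icc 1 m, (k : ℤ) * (Nat.factorial k : ℤ)) -
      ∑ k ∈ Finset.Icc 1 m, cc k * (Nat.fib (m + 2 - k) : ℤ) := by
    rw [Finset.mul_sum, ← Finset.sum_sub_distrib]
    apply Finset.sum_congr rfl
    intro k hk
    have : m + 3 - (k + 1) = m + 2 - k := by omega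
    rw [this]
    unfold cc
    ring
  have hT : ∑ k ∈ Finset.Icc 1 m, cc k * (Nat.fib (m + 2 - k) : ℤ) =
      TT (m + 1) - cc (m + 1) := by
    unfold TT
    rw [Finset.sum_Icc_succ_top (by omega : 1 ≤ m + 1)]
    simp [Nat.sub_self]
  have haux := aux_id (m + 1)
  have h1 : (m + 1 : ℕ) + 3 = (m + 3) + 1 := by ring
  have h2 : (m + 1 : ℕ) + 2 = m + 3 := by ring
  rw [h1, h2] at haux
  have hfac : (Nat.factorial (m + 3) : ℤ) =
      ((m : ℤ) + 3) * ((m : ℤ) + 2) * (Nat.factorial (m + 1) : ℤ) := by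
    rw [Nat.factorial_succ (m + 2), Nat.factorial_succ (m + 1)]
    push_cast; ring
  have hc : cc (m + 1) = ((m : ℤ) + 3) * ((m : ℤ) + 1) * (Nat.factorial (m + 1) : ℤ) := by
    unfold cc; push_cast; ring
  push_cast at hsum ⊢
  rw [hsum, sum_kk, hT, hc]
  push_cast at haux hfac
  linarith [haux, hfac]
end

section
/- For every n ≥ 1, a permutation of [n] avoids the vincular distant pattern 13□2 (with 1, 3 adjacent and a gap of at least one before 2) if and only if it avoids the classical distant pattern 13□2 (with no adjacency requirement). Hence |Av_n(vincular 13□2)| = |Av_n(13□2)|. -/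
/-- `π` contains the vincular pattern `13□2`: there are `i`, `k` with `k ≥ i + 3`
and `π i < π k < π (i+1)`. -/
def ContainsVinc13sq2 (n : ℕ) (π : Equiv.Perm (Fin n)) : Prop :=
  ∃ i k : Fin n, ∃ h : (i : ℕ) + 1 < n,
    (i : ℕ) + 3 ≤ (k : ℕ) ∧ π i < π k ∧ π k < π ⟨(i : ℕ) + 1, h⟩

/-- `π` contains the classical distant pattern `13□2`: there are `i < j` and
`k ≥ j + 2` with `π i < π k < π j`. -/
def ContainsCl13sq2 (n : ℕ) (π : Equiv.Perm (Fin n)) : Prop :=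
  ∃ i j k : Fin n, i < j ∧ (j : ℕ) + 2 ≤ (k : ℕ) ∧ π i < π k ∧ π k < π j

private lemma aux_cl_to_vinc (n : ℕ) (π : Equiv.Perm (Fin n)) :
    ∀ d : ℕ, ∀ i j k : Fin n, (j : ℕ) - (i : ℕ) = d → i < j → (j : ℕ) + 2 ≤ (k : ℕ) →
      π i < π k → π k < π j → ContainsVinc13sq2 n π := by
  intro d
  induction d using Nat.strong_induction_on with
  | _ d ih =>
    intro i j k hd hij hjk h1 h2
    have hij' : (i : ℕ) < (j : ℕ) := hij
    have hi1n : (i : ℕ) + 1 < n := lt_of_le_of_lt hij' j.isLt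
    set i1 : Fin n := ⟨(i : ℕ) + 1, hi1n⟩ with hi1
    rcases lt_or_ge (π k) (π i1) with hlt | hle
    · exact ⟨i, k, hi1n, by omega, h1, hlt⟩
    · -- π i1 ≤ π k, and i1 ≠ k since i+1 ≤ j < k
      have hi1k : i1 ≠ k := by
        intro h
        have : (i : ℕ) + 1 = (k : ℕ) := congrArg Fin.val h
        omega
      have hne : π i1 ≠ π k := fun h => hi1k (π.injective h)
      have h1' : π i1 < π k := lt_of_le_of_ne hle hne
      have hi1j : i1 ≠ j := by
        intro h
        rw [h] at h1'
        exact absurd h1' (not_lt.2 (le_of_lt h2))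
      have hi1j' : (i : ℕ) + 1 < (j : ℕ) := by
        have := Fin.val_ne_of_ne hi1j
        simp only [hi1] at this
        omega
      exact ih ((j : ℕ) - ((i : ℕ) + 1)) (by omega) i1 j k rfl hi1j' hjk h1' h2

private lemma cl_iff_vinc (n : ℕ) (π : Equiv.Perm (Fin n)) :
    ContainsVinc13sq2 n π ↔ ContainsCl13sq2 n π := by
  constructor
  · rintro ⟨i, k, h, hk, h1, h2⟩
    exact ⟨i, ⟨(i : ℕ) + 1, h⟩, k, by simp [Fin.lt_def], by simpa using by omega, h1, h2⟩
  · rintro ⟨i, j, k, hij, hjk, h1, h2⟩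
    exact aux_cl_to_vinc n π ((j : ℕ) - (i : ℕ)) i j k rfl hij hjk h1 h2

/-- Avoiding the vincular `13□2` is the same as avoiding the classical distant
pattern `13□2`; hence the avoidance sets have the same cardinality. -/
theorem stmt11 (n : ℕ) (hn : 1 ≤ n) :
    (∀ π : Equiv.Perm (Fin n), ¬ ContainsVinc13sq2 n π ↔ ¬ ContainsCl13sq2 n π) ∧
    Nat.card {π : Equiv.Perm (Fin n) // ¬ ContainsVinc13sq2 n π} =
      Nat.card {π : Equiv.Perm (Fin n) // ¬ ContainsCl13sq2 n π} := by
  refine ⟨fun π => not_congr (cl_iff_vinc n π), ?_⟩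
  exact Nat.card_congr (Equiv.subtypeEquivRight fun π => not_congr (cl_iff_vinc n π))
end

section
/- For every n ≥ 5, the number of permutations of [n] avoiding the pattern 12□3 (with 12 adjacent, gap at least 1 before 3) is strictly greater than the number avoiding 13□2 (with 13 adjacent, gap at least 1 before 2). -/
/-- `π` contains the vincular pattern `12□3`: there are `i`, `k` with `k ≥ i + 3`
and `π i < π (i+1) < π k`. -/
def ContainsV12sq3 (n : ℕ) (π : Equiv.Perm (Fin n)) : Prop :=
  ∃ i k : Fin n, ∃ h : (i : ℕ) + 1 < n,
    (i : ℕ) + 3 ≤ (k : ℕ) ∧ π i < π ⟨(i : ℕ) + 1, h⟩ ∧ π ⟨(i : ℕ) + 1, h⟩ < π k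

/-- `π` contains the vincular pattern `13□2`: there are `i`, `k` with `k ≥ i + 3`
and `π i < π k < π (i+1)`. -/
def ContainsV13sq2 (n : ℕ) (π : Equiv.Perm (Fin n)) : Prop :=
  ∃ i k : Fin n, ∃ h : (i : ℕ) + 1 < n,
    (i : ℕ) + 3 ≤ (k : ℕ) ∧ π i < π k ∧ π k < π ⟨(i : ℕ) + 1, h⟩

namespace Stmt12Aux

open Equiv Finset

instance instDecA (n : ℕ) : DecidablePred (ContainsV12sq3 n) := fun π => by
  unfold ContainsV12sq3; infer_instance

instance instDecB (n : ℕ) : DecidablePred (ContainsV13sq2 n) := fun π => by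
  unfold ContainsV13sq2; infer_instance

/-- prepend `p` to the permutation `σ` -/
def cons {n : ℕ} (p : Fin (n+1)) (σ : Perm (Fin n)) : Perm (Fin (n+1)) :=
  (finSuccEquiv n).trans ((Equiv.optionCongr σ).trans (finSuccEquiv' p).symm)

@[simp] lemma cons_zero {n : ℕ} (p : Fin (n+1)) (σ : Perm (Fin n)) : cons p σ 0 = p := by
  simp [cons]

@[simp] lemma cons_succ {n : ℕ} (p : Fin (n+1)) (σ : Perm (Fin n)) (j : Fin n) :
    cons p σ j.succ = p.succAbove (σ j) := by
  simp [cons]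

lemma cons_inj {n : ℕ} {p p' : Fin (n+1)} {σ σ' : Perm (Fin n)}
    (h : cons p σ = cons p' σ') : p = p' ∧ σ = σ' := by
  have h0 : p = p' := by
    have := congrArg (fun e : Perm (Fin (n+1)) => e 0) h
    simpa using this
  refine ⟨h0, ?_⟩
  ext j
  have := congrArg (fun e : Perm (Fin (n+1)) => e j.succ) h
  simp only [cons_succ, h0] at this
  exact congrArg Fin.val (Fin.succAbove_right_injective this)

lemma cons_surj {n : ℕ} (π : Perm (Fin (n+1))) : ∃ p σ, π = cons p σ := by
  have hbij : Function.Bijective (fun x : Fin (n+1) × Perm (Fin n) => cons x.1 x.2) := by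
    rw [Fintype.bijective_iff_injective_and_card]
    constructor
    · intro x y hxy
      obtain ⟨h1, h2⟩ := cons_inj hxy
      exact Prod.ext h1 h2
    · simp [Fintype.card_perm, Nat.factorial_succ]
  obtain ⟨⟨p, σ⟩, hx⟩ := hbij.2 π
  exact ⟨p, σ, hx.symm⟩

/-- value facts about succAbove -/
lemma succAbove_val_of_lt {n : ℕ} {p : Fin (n+1)} {i : Fin n} (h : (i:ℕ) < (p:ℕ)) :
    ((p.succAbove i : Fin (n+1)) : ℕ) = (i:ℕ) := by
  rw [Fin.succAbove_of_castSucc_lt]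
  · simp
  · exact h

lemma succAbove_val_of_ge {n : ℕ} {p : Fin (n+1)} {i : Fin n} (h : (p:ℕ) ≤ (i:ℕ)) :
    ((p.succAbove i : Fin (n+1)) : ℕ) = (i:ℕ) + 1 := by
  rw [Fin.succAbove_of_le_castSucc]
  · simp
  · exact h

lemma lt_succAbove_iff_nat {n : ℕ} {p : Fin (n+1)} {i : Fin n} :
    p < p.succAbove i ↔ (p:ℕ) ≤ (i:ℕ) := by
  rcases Nat.lt_or_ge (i:ℕ) (p:ℕ) with h | h
  · rw [Fin.lt_def, succAbove_val_of_lt h]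
    omega
  · rw [Fin.lt_def, succAbove_val_of_ge h]
    omega

lemma succAbove_lt_iff_nat {n : ℕ} {p : Fin (n+1)} {i : Fin n} :
    p.succAbove i < p ↔ (i:ℕ) < (p:ℕ) := by
  rcases Nat.lt_or_ge (i:ℕ) (p:ℕ) with h | h
  · rw [Fin.lt_def, succAbove_val_of_lt h]
  · rw [Fin.lt_def, succAbove_val_of_ge h]
    omega


def BadA {n : ℕ} (t : ℕ) (σ : Perm (Fin (n+1))) : Prop :=
  t ≤ (σ 0 : ℕ) ∧ ∃ k : Fin (n+1), 2 ≤ (k:ℕ) ∧ σ 0 < σ k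

def BadB {n : ℕ} (t : ℕ) (σ : Perm (Fin (n+1))) : Prop :=
  ∃ k : Fin (n+1), 2 ≤ (k:ℕ) ∧ t ≤ (σ k : ℕ) ∧ σ k < σ 0

instance instDecBadA {n : ℕ} (t : ℕ) : DecidablePred (BadA (n := n) t) := fun σ => by
  unfold BadA; infer_instance

instance instDecBadB {n : ℕ} (t : ℕ) : DecidablePred (BadB (n := n) t) := fun σ => by
  unfold BadB; infer_instance

lemma idx_one {n : ℕ} (h : ((0 : Fin (n+2)) : ℕ) + 1 < n + 2) :
    (⟨((0 : Fin (n+2)) : ℕ) + 1, h⟩ : Fin (n+2)) = (0 : Fin (n+1)).succ := by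
  apply Fin.ext; simp

lemma idx_succ {n : ℕ} (j : Fin (n+1)) (h : ((j.succ : Fin (n+2)) : ℕ) + 1 < n + 2)
    (h' : (j : ℕ) + 1 < n + 1) :
    (⟨((j.succ : Fin (n+2)) : ℕ) + 1, h⟩ : Fin (n+2)) = (⟨(j : ℕ) + 1, h'⟩ : Fin (n+1)).succ := by
  apply Fin.ext; simp

theorem containsA_cons {n : ℕ} (p : Fin (n+2)) (σ : Perm (Fin (n+1))) :
    ContainsV12sq3 (n+2) (cons p σ) ↔ ContainsV12sq3 (n+1) σ ∨ BadA (p : ℕ) σ := by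
  constructor
  · rintro ⟨i, k, h, hk, h1, h2⟩
    rcases Fin.eq_zero_or_eq_succ k with rfl | ⟨l, rfl⟩
    · simp at hk
    rcases Fin.eq_zero_or_eq_succ i with rfl | ⟨j, rfl⟩
    · right
      rw [idx_one h, cons_succ, cons_zero] at h1
      rw [idx_one h, cons_succ, cons_succ] at h2
      refine ⟨lt_succAbove_iff_nat.mp h1, l, ?_, Fin.succAbove_lt_succAbove_iff.mp h2⟩
      simp at hk ⊢; omega
    · left
      have h' : (j : ℕ) + 1 < n + 1 := by simp at h; omega
      rw [idx_succ j h h', cons_succ, cons_succ] at h1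
      rw [idx_succ j h h', cons_succ, cons_succ] at h2
      refine ⟨j, l, h', ?_, Fin.succAbove_lt_succAbove_iff.mp h1,
        Fin.succAbove_lt_succAbove_iff.mp h2⟩
      simp at hk ⊢; omega
  · rintro (⟨j, l, h', hk, h1, h2⟩ | ⟨hple, l, hl2, hlt⟩)
    · have h : ((j.succ : Fin (n+2)) : ℕ) + 1 < n + 2 := by simp; omega
      refine ⟨j.succ, l.succ, h, ?_, ?_, ?_⟩
      · simp; omega
      · rw [idx_succ j h h', cons_succ, cons_succ]
        exact Fin.succAbove_lt_succAbove_iff.mpr h1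
      · rw [idx_succ j h h', cons_succ, cons_succ]
        exact Fin.succAbove_lt_succAbove_iff.mpr h2
    · have h : ((0 : Fin (n+2)) : ℕ) + 1 < n + 2 := by simp
      refine ⟨0, l.succ, h, ?_, ?_, ?_⟩
      · simp; omega
      · rw [idx_one h, cons_succ, cons_zero]
        exact lt_succAbove_iff_nat.mpr hple
      · rw [idx_one h, cons_succ, cons_succ]
        exact Fin.succAbove_lt_succAbove_iff.mpr hlt

theorem containsB_cons {n : ℕ} (p : Fin (n+2)) (σ : Perm (Fin (n+1))) :
    ContainsV13sq2 (n+2) (cons p σ) ↔ ContainsV13sq2 (n+1) σ ∨ BadB (p : ℕ) σ := by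
  constructor
  · rintro ⟨i, k, h, hk, h1, h2⟩
    rcases Fin.eq_zero_or_eq_succ k with rfl | ⟨l, rfl⟩
    · simp at hk
    rcases Fin.eq_zero_or_eq_succ i with rfl | ⟨j, rfl⟩
    · right
      rw [cons_zero, cons_succ] at h1
      rw [idx_one h, cons_succ, cons_succ] at h2
      refine ⟨l, ?_, lt_succAbove_iff_nat.mp h1, Fin.succAbove_lt_succAbove_iff.mp h2⟩
      simp at hk ⊢; omega
    · left
      have h' : (j : ℕ) + 1 < n + 1 := by simp at h; omega
      rw [cons_succ, cons_succ] at h1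
      rw [idx_succ j h h', cons_succ, cons_succ] at h2
      refine ⟨j, l, h', ?_, Fin.succAbove_lt_succAbove_iff.mp h1,
        Fin.succAbove_lt_succAbove_iff.mp h2⟩
      simp at hk ⊢; omega
  · rintro (⟨j, l, h', hk, h1, h2⟩ | ⟨l, hl2, hge, hlt⟩)
    · have h : ((j.succ : Fin (n+2)) : ℕ) + 1 < n + 2 := by simp; omega
      refine ⟨j.succ, l.succ, h, ?_, ?_, ?_⟩
      · simp; omega
      · rw [cons_succ, cons_succ]
        exact Fin.succAbove_lt_succAbove_iff.mpr h1
      · rw [idx_succ j h h', cons_succ, cons_succ]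
        exact Fin.succAbove_lt_succAbove_iff.mpr h2
    · have h : ((0 : Fin (n+2)) : ℕ) + 1 < n + 2 := by simp
      refine ⟨0, l.succ, h, ?_, ?_, ?_⟩
      · simp; omega
      · rw [cons_zero, cons_succ]
        exact lt_succAbove_iff_nat.mpr hge
      · rw [idx_one h, cons_succ, cons_succ]
        exact Fin.succAbove_lt_succAbove_iff.mpr hlt


def avA (n : ℕ) : Finset (Perm (Fin n)) := univ.filter (fun σ => ¬ ContainsV12sq3 n σ)
def avB (n : ℕ) : Finset (Perm (Fin n)) := univ.filter (fun σ => ¬ ContainsV13sq2 n σ)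
def aC (n : ℕ) : ℕ := (avA n).card
def bC (n : ℕ) : ℕ := (avB n).card
def FA (n t : ℕ) : ℕ := (univ.filter (fun σ : Perm (Fin (n+1)) =>
    ¬ ContainsV12sq3 (n+1) σ ∧ ¬ BadA t σ)).card
def FB (n t : ℕ) : ℕ := (univ.filter (fun σ : Perm (Fin (n+1)) =>
    ¬ ContainsV13sq2 (n+1) σ ∧ ¬ BadB t σ)).card
def HA (n t : ℕ) (p : Fin (n+2)) : ℕ := (univ.filter (fun σ : Perm (Fin (n+1)) =>
    (¬ ContainsV12sq3 (n+1) σ ∧ ¬ BadA (p:ℕ) σ) ∧ ¬ BadA t (cons p σ))).card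
def HB (n t : ℕ) (p : Fin (n+2)) : ℕ := (univ.filter (fun σ : Perm (Fin (n+1)) =>
    (¬ ContainsV13sq2 (n+1) σ ∧ ¬ BadB (p:ℕ) σ) ∧ ¬ BadB t (cons p σ))).card

/-- Master decomposition: count over `Perm (Fin (n+2))` as a sum over first values. -/
lemma card_filter_cons_eq {n : ℕ} (R : Perm (Fin (n+2)) → Prop) [DecidablePred R] :
    (univ.filter R).card =
      ∑ p : Fin (n+2), (univ.filter (fun σ : Perm (Fin (n+1)) => R (cons p σ))).card := by
  classical
  rw [← Finset.card_sigma]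
  apply (Finset.card_bij (fun (x : Σ _ : Fin (n+2), Perm (Fin (n+1))) _ => cons x.1 x.2)
    ?_ ?_ ?_).symm
  · rintro ⟨p, σ⟩ hx
    simp only [Finset.mem_sigma, Finset.mem_filter, Finset.mem_univ, true_and] at hx ⊢
    exact hx
  · rintro ⟨p, σ⟩ _ ⟨p', σ'⟩ _ h
    obtain ⟨h1, h2⟩ := cons_inj h
    subst h1
    simpa using h2
  · intro π hπ
    obtain ⟨p, σ, rfl⟩ := cons_surj π
    refine ⟨⟨p, σ⟩, ?_, rfl⟩
    simp only [Finset.mem_sigma, Finset.mem_filter, Finset.mem_univ, true_and]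
    simpa using (Finset.mem_filter.mp hπ).2

lemma master_aC {n : ℕ} : aC (n+2) = ∑ p : Fin (n+2), FA n (p:ℕ) := by
  have h := card_filter_cons_eq (n := n) (fun π => ¬ ContainsV12sq3 (n+2) π)
  rw [aC, avA, h]
  refine Finset.sum_congr rfl (fun p _ => ?_)
  unfold FA
  congr 1
  refine Finset.filter_congr (fun σ _ => ?_)
  rw [containsA_cons]
  tauto

lemma master_bC {n : ℕ} : bC (n+2) = ∑ p : Fin (n+2), FB n (p:ℕ) := by
  have h := card_filter_cons_eq (n := n) (fun π => ¬ ContainsV13sq2 (n+2) π)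
  rw [bC, avB, h]
  refine Finset.sum_congr rfl (fun p _ => ?_)
  unfold FB
  congr 1
  refine Finset.filter_congr (fun σ _ => ?_)
  rw [containsB_cons]
  tauto

lemma master_FA {n : ℕ} (t : ℕ) : FA (n+1) t = ∑ p : Fin (n+2), HA n t p := by
  have h := card_filter_cons_eq (n := n)
    (fun π => ¬ ContainsV12sq3 (n+2) π ∧ ¬ BadA t π)
  rw [FA, h]
  refine Finset.sum_congr rfl (fun p _ => ?_)
  unfold HA
  congr 1
  refine Finset.filter_congr (fun σ _ => ?_)
  rw [containsA_cons]
  tauto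

lemma master_FB {n : ℕ} (t : ℕ) : FB (n+1) t = ∑ p : Fin (n+2), HB n t p := by
  have h := card_filter_cons_eq (n := n)
    (fun π => ¬ ContainsV13sq2 (n+2) π ∧ ¬ BadB t π)
  rw [FB, h]
  refine Finset.sum_congr rfl (fun p _ => ?_)
  unfold HB
  congr 1
  refine Finset.filter_congr (fun σ _ => ?_)
  rw [containsB_cons]
  tauto

lemma FA_stab {n t : ℕ} (ht : n ≤ t) : FA n t = aC (n+1) := by
  rw [FA, aC, avA]
  congr 1
  refine Finset.filter_congr (fun σ _ => ?_)
  have : ¬ BadA t σ := by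
    rintro ⟨h1, k, hk2, hlt⟩
    have h0 : (σ 0 : ℕ) ≤ n := by omega
    have : (σ 0 : ℕ) < (σ k : ℕ) := hlt
    have : (σ k : ℕ) ≤ n := by omega
    omega
  tauto

lemma FB_stab {n t : ℕ} (ht : n ≤ t) : FB n t = bC (n+1) := by
  rw [FB, bC, avB]
  congr 1
  refine Finset.filter_congr (fun σ _ => ?_)
  have : ¬ BadB t σ := by
    rintro ⟨k, hk2, hge, hlt⟩
    have : (σ k : ℕ) < (σ 0 : ℕ) := hlt
    have : (σ 0 : ℕ) ≤ n := by omega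
    omega
  tauto

lemma FB_le_bC {n t : ℕ} : FB n t ≤ bC (n+1) := by
  rw [bC, avB]
  apply Finset.card_le_card
  intro σ hσ
  simp only [Finset.mem_filter, Finset.mem_univ, true_and] at hσ ⊢
  exact hσ.1


lemma FA_eq_filter {n t : ℕ} :
    FA n t = ((avA (n+1)).filter (fun σ => ¬ BadA t σ)).card := by
  rw [FA, avA, Finset.filter_filter]

lemma HA_eq_of_lt {n t : ℕ} {p : Fin (n+2)} (hp : (p:ℕ) < t) :
    HA n t p = FA n (p:ℕ) := by
  rw [HA, FA]
  congr 1
  refine Finset.filter_congr (fun σ _ => ?_)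
  have h3 : ¬ BadA t (cons p σ) := by
    rintro ⟨h1, -⟩
    rw [cons_zero] at h1
    omega
  tauto

lemma HA_eq_of_last {n t : ℕ} {p : Fin (n+2)} (hp : (p:ℕ) = n+1) :
    HA n t p = aC (n+1) := by
  have hpl : p = Fin.last (n+1) := Fin.ext (by simpa using hp)
  rw [HA, aC, avA]
  congr 1
  refine Finset.filter_congr (fun σ _ => ?_)
  have h2 : ¬ BadA (p:ℕ) σ := by
    rintro ⟨h1, -⟩
    have := (σ 0).isLt
    omega
  have h3 : ¬ BadA t (cons p σ) := by
    rintro ⟨-, k, -, hlt⟩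
    rw [cons_zero, hpl] at hlt
    exact absurd hlt (Fin.not_lt.mpr (Fin.le_last _))
  tauto

lemma HA_ge_of_snd {n t : ℕ} {p : Fin (n+3)} (hp : (p:ℕ) = n+1) :
    aC (n+1) ≤ HA (n+1) t p := by
  rw [aC, HA, avA]
  apply Finset.card_le_card_of_injOn (fun τ => cons (Fin.last (n+1)) τ)
  · intro τ hτ
    simp only [Finset.mem_coe, Finset.mem_filter, Finset.mem_univ, true_and] at hτ ⊢
    set σ : Perm (Fin (n+2)) := cons (Fin.last (n+1)) τ with hσ
    have hσ0 : σ 0 = Fin.last (n+1) := cons_zero _ _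
    refine ⟨⟨?_, ?_⟩, ?_⟩
    · rw [hσ, containsA_cons]
      rintro (h | ⟨h1, -⟩)
      · exact hτ h
      · simp only [Fin.val_last] at h1
        have := (τ 0).isLt
        omega
    · rintro ⟨-, k, -, hlt⟩
      rw [hσ0] at hlt
      exact absurd hlt (Fin.not_lt.mpr (Fin.le_last _))
    · rintro ⟨-, k, hk2, hlt⟩
      rcases Fin.eq_zero_or_eq_succ k with rfl | ⟨l, rfl⟩
      · simp at hk2
      rw [cons_zero, cons_succ] at hlt
      have hl0 : l ≠ 0 := by
        rintro rfl
        simp at hk2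
      have hσl : σ l ≠ Fin.last (n+1) := by
        rw [← hσ0]
        intro h
        exact hl0 (σ.injective h)
      have hσlv : (σ l : ℕ) < n+1 := by
        have := Fin.lt_last_iff_ne_last.mpr hσl
        exact this
      have := lt_succAbove_iff_nat.mp hlt
      omega
  · intro τ₁ _ τ₂ _ h
    exact (cons_inj h).2

lemma FB_eq_filter {n t : ℕ} :
    FB n t = ((avB (n+1)).filter (fun σ => ¬ BadB t σ)).card := by
  rw [FB, avB, Finset.filter_filter]

lemma HB_le_FB {n t : ℕ} (p : Fin (n+2)) : HB n t p ≤ FB n (p:ℕ) := by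
  rw [HB, FB]
  apply Finset.card_le_card
  intro σ hσ
  simp only [Finset.mem_filter, Finset.mem_univ, true_and] at hσ ⊢
  exact hσ.1

lemma badB_classify {n t : ℕ} {p : Fin (n+2)} {σ : Perm (Fin (n+1))}
    (hnb : ¬ BadB t (cons p σ)) : (p:ℕ) ≤ t ∨ ((p:ℕ) = t + 1 ∧ (σ 0 : ℕ) = t) := by
  by_cases hpt : (p:ℕ) ≤ t
  · exact Or.inl hpt
  right
  have key : ∀ v : ℕ, t ≤ v → v + 1 ≤ (p:ℕ) → (σ 0 : ℕ) = v := by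
    intro v hv1 hv2
    have hvn : v < n+1 := by have := p.isLt; omega
    obtain ⟨j, hj⟩ := σ.surjective ⟨v, hvn⟩
    rcases Fin.eq_zero_or_eq_succ j with rfl | hj0
    · rw [hj]
    exfalso
    apply hnb
    refine ⟨j.succ, ?_, ?_, ?_⟩
    · obtain ⟨l, rfl⟩ := hj0
      simp
    · rw [cons_succ, hj]
      rw [succAbove_val_of_lt (by simpa using hv2)]
      exact hv1
    · rw [cons_succ, cons_zero, hj]
      rw [Fin.lt_def, succAbove_val_of_lt (by simpa using hv2)]
      simpa using hv2
  have h1 : (σ 0 : ℕ) = (p:ℕ) - 1 := key ((p:ℕ) - 1) (by omega) (by omega)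
  by_cases hp1 : (p:ℕ) = t + 1
  · exact ⟨hp1, by omega⟩
  · have h2 : (σ 0 : ℕ) = t := key t le_rfl (by omega)
    omega

lemma HB_eq_zero {n t : ℕ} {p : Fin (n+2)} (hp : t + 2 ≤ (p:ℕ)) : HB n t p = 0 := by
  rw [HB, Finset.card_eq_zero, Finset.filter_eq_empty_iff]
  rintro σ - ⟨-, h3⟩
  rcases badB_classify h3 with h | ⟨h, -⟩ <;> omega

lemma HB_le_of_eq {n t : ℕ} {p : Fin (n+3)} (hp : (p:ℕ) = t + 1) :
    HB (n+1) t p ≤ bC (n+1) := by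
  rw [HB, bC, avB]
  have htn : t < n + 2 := by have := p.isLt; omega
  apply Finset.card_le_card_of_surjOn (fun τ => cons (⟨t, htn⟩ : Fin (n+2)) τ)
  intro σ hσ
  simp only [Finset.coe_filter, Finset.mem_univ, true_and, Set.mem_setOf_eq] at hσ
  obtain ⟨⟨hCB, -⟩, h3⟩ := hσ
  obtain ⟨q, τ, rfl⟩ := cons_surj σ
  have hq : q = ⟨t, htn⟩ := by
    rcases badB_classify h3 with h | ⟨-, h0⟩
    · omega
    · rw [cons_zero] at h0
      exact Fin.ext h0
  subst hq
  refine ⟨τ, ?_, rfl⟩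
  simp only [Finset.coe_filter, Finset.mem_univ, true_and, Set.mem_setOf_eq]
  rw [containsB_cons] at hCB
  tauto


lemma step {n : ℕ} (IH1 : ∀ t, FB (n+1) t ≤ FA (n+1) t) (IH2 : bC (n+2) < aC (n+2))
    (IH3 : bC (n+1) ≤ aC (n+1)) :
    (∀ t, FB (n+2) t ≤ FA (n+2) t) ∧ bC (n+3) < aC (n+3) ∧ bC (n+2) ≤ aC (n+2) := by
  have htot : bC (n+3) < aC (n+3) := by
    have e1 : bC (n+3) = ∑ p : Fin (n+3), FB (n+1) (p:ℕ) := master_bC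
    have e2 : aC (n+3) = ∑ p : Fin (n+3), FA (n+1) (p:ℕ) := master_aC
    rw [e1, e2]
    refine Finset.sum_lt_sum (fun p _ => IH1 (p:ℕ)) ⟨Fin.last (n+2), Finset.mem_univ _, ?_⟩
    have hl : ((Fin.last (n+2)) : ℕ) = n+2 := rfl
    rw [hl, FB_stab (by omega), FA_stab (by omega)]
    exact IH2
  refine ⟨?_, htot, IH2.le⟩
  intro t
  rcases le_or_gt (n+2) t with h | h
  · rw [FB_stab h, FA_stab h]
    exact htot.le
  -- t ≤ n+1
  have ht : t ≤ n+1 := by omega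
  set gB : ℕ → ℕ := fun s => if s ≤ t then FB (n+1) s else if s = t+1 then bC (n+1) else 0
    with hgB
  set gA : ℕ → ℕ := fun s => if s < t then FA (n+1) s
      else if s = n+2 then aC (n+2) else if s = n+1 then aC (n+1) else 0 with hgA
  have hub : FB (n+2) t ≤ ∑ s ∈ Finset.range t, FB (n+1) s + FB (n+1) t + bC (n+1) := by
    have e : FB (n+2) t = ∑ p : Fin (n+3), HB (n+1) t p := master_FB t
    have h1 : ∑ p : Fin (n+3), HB (n+1) t p ≤ ∑ p : Fin (n+3), gB (p:ℕ) := by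
      apply Finset.sum_le_sum
      intro p _
      rcases Nat.lt_or_ge t (p:ℕ) with hp | hp
      · rcases Nat.eq_or_lt_of_le hp with hp2 | hp2
        · have : (p:ℕ) = t+1 := by omega
          rw [hgB]
          simp only [this]
          simpa using HB_le_of_eq this
        · rw [HB_eq_zero (by omega)]
          exact Nat.zero_le _
      · have := HB_le_FB (n := n+1) (t := t) p
        rw [hgB]
        simpa [if_pos hp] using this
    have h2 : ∑ p : Fin (n+3), gB (p:ℕ) = ∑ s ∈ Finset.range (n+3), gB s :=
      Fin.sum_univ_eq_sum_range gB (n+3)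
    have h3 : ∑ s ∈ Finset.range (t+2), gB s = ∑ s ∈ Finset.range (n+3), gB s := by
      apply Finset.sum_subset (Finset.range_subset_range.mpr (by omega))
      intro x _ hx
      rw [Finset.mem_range] at hx
      rw [hgB]
      simp only
      rw [if_neg (by omega), if_neg (by omega)]
    have h4 : ∑ s ∈ Finset.range (t+2), gB s
        = ∑ s ∈ Finset.range (t+1), gB s + gB (t+1) := Finset.sum_range_succ _ _
    have h5 : gB (t+1) = bC (n+1) := by
      rw [hgB]; simp only
      split_ifs <;> first | rfl | omega
    have h6 : ∑ s ∈ Finset.range (t+1), gB s = ∑ s ∈ Finset.range (t+1), FB (n+1) s := by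
      refine Finset.sum_congr rfl (fun s hs => ?_)
      rw [Finset.mem_range] at hs
      rw [hgB]; simp only; rw [if_pos (by omega)]
    have h7 : ∑ s ∈ Finset.range (t+1), FB (n+1) s
        = ∑ s ∈ Finset.range t, FB (n+1) s + FB (n+1) t := Finset.sum_range_succ _ _
    omega
  have hlb : ∑ s ∈ Finset.range t, FA (n+1) s + aC (n+1) + aC (n+2) ≤ FA (n+2) t := by
    have e : FA (n+2) t = ∑ p : Fin (n+3), HA (n+1) t p := master_FA t
    have h1 : ∑ p : Fin (n+3), gA (p:ℕ) ≤ ∑ p : Fin (n+3), HA (n+1) t p := by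
      apply Finset.sum_le_sum
      intro p _
      rcases Nat.lt_or_ge (p:ℕ) t with hp | hp
      · rw [hgA]; simp only; rw [if_pos hp, HA_eq_of_lt hp]
      · have hple : (p:ℕ) ≤ n+2 := by omega
        rcases Nat.eq_or_lt_of_le hple with hp2 | hp2
        · rw [hgA]; simp only
          rw [if_neg (by omega), if_pos hp2, HA_eq_of_last hp2]
        · rcases Nat.eq_or_lt_of_le (Nat.lt_succ_iff.mp hp2) with hp3 | hp3
          · rw [hgA]; simp only
            rw [if_neg (by omega), if_neg (by omega), if_pos hp3]
            exact HA_ge_of_snd hp3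
          · rw [hgA]; simp only
            rw [if_neg (by omega), if_neg (by omega), if_neg (by omega)]
            exact Nat.zero_le _
    have h2 : ∑ p : Fin (n+3), gA (p:ℕ) = ∑ s ∈ Finset.range (n+3), gA s :=
      Fin.sum_univ_eq_sum_range gA (n+3)
    have h3 : ∑ s ∈ Finset.range (n+3), gA s
        = ∑ s ∈ Finset.range (n+2), gA s + gA (n+2) := Finset.sum_range_succ _ _
    have h4 : ∑ s ∈ Finset.range (n+2), gA s
        = ∑ s ∈ Finset.range (n+1), gA s + gA (n+1) := Finset.sum_range_succ _ _
    have h5 : gA (n+2) = aC (n+2) := by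
      rw [hgA]; simp only
      split_ifs <;> first | rfl | omega
    have h6 : gA (n+1) = aC (n+1) := by
      rw [hgA]; simp only
      split_ifs <;> first | rfl | omega
    have h7 : ∑ s ∈ Finset.range t, gA s = ∑ s ∈ Finset.range (n+1), gA s := by
      apply Finset.sum_subset (Finset.range_subset_range.mpr (by omega))
      intro x hx1 hx2
      rw [Finset.mem_range] at hx1 hx2
      rw [hgA]; simp only
      rw [if_neg (by omega), if_neg (by omega), if_neg (by omega)]
    have h8 : ∑ s ∈ Finset.range t, gA s = ∑ s ∈ Finset.range t, FA (n+1) s := by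
      refine Finset.sum_congr rfl (fun s hs => ?_)
      rw [Finset.mem_range] at hs
      rw [hgA]; simp only; rw [if_pos hs]
    omega
  have hS : ∑ s ∈ Finset.range t, FB (n+1) s ≤ ∑ s ∈ Finset.range t, FA (n+1) s :=
    Finset.sum_le_sum (fun s _ => IH1 s)
  have hFBt : FB (n+1) t ≤ bC (n+2) := FB_le_bC
  omega


lemma base : (∀ t, FB 4 t ≤ FA 4 t) ∧ bC 5 < aC 5 ∧ bC 4 ≤ aC 4 := by
  have hb5 : bC 5 < aC 5 := by decide
  refine ⟨?_, hb5, by decide⟩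
  intro t
  rcases le_or_gt 4 t with h | h
  · rw [FB_stab h, FA_stab h]
    exact hb5.le
  · interval_cases t <;> decide

lemma chain (k : ℕ) : (∀ t, FB (k+4) t ≤ FA (k+4) t) ∧ bC (k+5) < aC (k+5) ∧
    bC (k+4) ≤ aC (k+4) := by
  induction k with
  | zero => exact base
  | succ k ih => exact step ih.1 ih.2.1 ih.2.2

lemma main_ineq (n : ℕ) (hn : 5 ≤ n) : bC n < aC n := by
  obtain ⟨k, rfl⟩ : ∃ k, n = k + 5 := ⟨n - 5, by omega⟩
  exact (chain k).2.1

end Stmt12Aux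


/-- For `n ≥ 5`, `|Av_n(12□3)| > |Av_n(13□2)|`. -/
theorem stmt12 (n : ℕ) (hn : 5 ≤ n) :
    Nat.card {π : Equiv.Perm (Fin n) // ¬ ContainsV12sq3 n π} >
      Nat.card {π : Equiv.Perm (Fin n) // ¬ ContainsV13sq2 n π} := by
  have ha : Nat.card {π : Equiv.Perm (Fin n) // ¬ ContainsV12sq3 n π} = Stmt12Aux.aC n := by
    rw [Nat.card_eq_fintype_card, Fintype.card_subtype]
    rfl
  have hb : Nat.card {π : Equiv.Perm (Fin n) // ¬ ContainsV13sq2 n π} = Stmt12Aux.bC n := by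
    rw [Nat.card_eq_fintype_card, Fintype.card_subtype]
    rfl
  rw [ha, hb]
  exact Stmt12Aux.main_ineq n hn
end

section
/- For n ≥ 4 and 1 ≤ i ≤ n - 1, the number of permutations of [n] that avoid the vincular pattern 13□2 and begin with the value i is at most the number of (13□2)-avoiders of [n] beginning with n, which equals |Av_{n-1}(13□2)|; moreover the inequality is strict when 1 ≤ i ≤ n - 2. -/
noncomputable def permOf {n : ℕ} (f : Fin n → Fin n) (hf : Function.Injective f) :
    Equiv.Perm (Fin n) :=
  Equiv.ofBijective f (Finite.injective_iff_bijective.mp hf)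

@[simp] lemma permOf_apply {n : ℕ} (f : Fin n → Fin n) (hf) (x : Fin n) :
    permOf f hf x = f x := rfl

lemma containsV_iff (n : ℕ) (π : Equiv.Perm (Fin n)) :
    ContainsV13sq2 n π ↔ ∃ i k : ℕ, ∃ hk : k < n, ∃ hik : i + 3 ≤ k,
      ((π ⟨i, by omega⟩ : Fin n) : ℕ) < (π ⟨k, hk⟩ : ℕ) ∧
      ((π ⟨k, hk⟩ : Fin n) : ℕ) < (π ⟨i+1, by omega⟩ : ℕ) := by
  constructor
  · rintro ⟨i, k, h, hik, h1, h2⟩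
    exact ⟨(i : ℕ), (k : ℕ), k.isLt, hik, h1, h2⟩
  · rintro ⟨i, k, hk, hik, h1, h2⟩
    exact ⟨⟨i, by omega⟩, ⟨k, hk⟩, (by omega : i + 1 < n), hik, h1, h2⟩

lemma pos_of_four {n : ℕ} (hn : 4 ≤ n) : 0 < n := by omega

def cval (n a v : ℕ) : ℕ := if v = a then n - 1 else if a < v then v - 1 else v

def cfun (n a : ℕ) : Fin n → Fin n := fun v =>
  ⟨cval n a (v : ℕ), by have := v.isLt; unfold cval; split_ifs <;> omega⟩

lemma cfun_inj (n a : ℕ) (ha : a < n) : Function.Injective (cfun n a) := by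
  intro u v h
  have hu := u.isLt; have hv := v.isLt
  have h' : cval n a (u : ℕ) = cval n a (v : ℕ) := congrArg Fin.val h
  apply Fin.ext
  unfold cval at h'; split_ifs at h' <;> omega

lemma cval_lt_iff (n a u v : ℕ) (hu : u < n) (hv : v < n) (hu' : u ≠ a) (hv' : v ≠ a) :
    cval n a u < cval n a v ↔ u < v := by
  unfold cval; split_ifs <;> omega

noncomputable def cPerm (n a : ℕ) (ha : a < n) : Equiv.Perm (Fin n) :=
  permOf (cfun n a) (cfun_inj n a ha)

lemma cPerm_val (n a : ℕ) (ha : a < n) (x : Fin n) :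
    ((cPerm n a ha x : Fin n) : ℕ) = cval n a (x : ℕ) := rfl

lemma cval_lt (n a v : ℕ) (ha : a < n) (hv : v < n) : cval n a v < n := by
  unfold cval; split_ifs <;> omega

lemma val_ne_of_pos (n : ℕ) (hn : 0 < n) (π : Equiv.Perm (Fin n)) (x : Fin n)
    (hx : (x : ℕ) ≠ 0) : ((π x : Fin n) : ℕ) ≠ ((π ⟨0, hn⟩ : Fin n) : ℕ) := by
  intro h
  have : π x = π ⟨0, hn⟩ := Fin.ext h
  have := π.injective this
  apply hx
  simpa [Fin.ext_iff] using this

lemma cPerm_mul_contains_elim (n a : ℕ) (ha : a < n) (hn : 4 ≤ n) (π : Equiv.Perm (Fin n))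
    (h0 : ((π ⟨0, pos_of_four hn⟩ : Fin n) : ℕ) = a)
    (hc : ContainsV13sq2 n (cPerm n a ha * π)) :
    ∃ i k : ℕ, ∃ hk : k < n, ∃ hik : i + 3 ≤ k, 1 ≤ i ∧
      ((π ⟨i, by omega⟩ : Fin n) : ℕ) < (π ⟨k, hk⟩ : ℕ) ∧
      ((π ⟨k, hk⟩ : Fin n) : ℕ) < (π ⟨i+1, by omega⟩ : ℕ) := by
  rw [containsV_iff] at hc
  obtain ⟨i, k, hk, hik, h1, h2⟩ := hc
  have e1 : (((cPerm n a ha * π) ⟨i, by omega⟩ : Fin n) : ℕ)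
      = cval n a ((π ⟨i, by omega⟩ : Fin n) : ℕ) := rfl
  have e2 : (((cPerm n a ha * π) ⟨k, hk⟩ : Fin n) : ℕ)
      = cval n a ((π ⟨k, hk⟩ : Fin n) : ℕ) := rfl
  have e3 : (((cPerm n a ha * π) ⟨i+1, by omega⟩ : Fin n) : ℕ)
      = cval n a ((π ⟨i+1, by omega⟩ : Fin n) : ℕ) := rfl
  rw [e1, e2] at h1
  rw [e2, e3] at h2
  rcases Nat.eq_zero_or_pos i with hi0 | hi1
  · subst hi0
    rw [h0] at h1
    have hb : cval n a ((π ⟨k, hk⟩ : Fin n) : ℕ) < n :=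
      cval_lt n a _ ha (π ⟨k, hk⟩).isLt
    have : cval n a a = n - 1 := by unfold cval; simp
    omega
  · have hne1 : ((π ⟨i, by omega⟩ : Fin n) : ℕ) ≠ a := fun h =>
      val_ne_of_pos n (pos_of_four hn) π ⟨i, by omega⟩ (by omega : i ≠ 0) (by omega)
    have hne2 : ((π ⟨k, hk⟩ : Fin n) : ℕ) ≠ a := fun h =>
      val_ne_of_pos n (pos_of_four hn) π ⟨k, hk⟩ (by omega : k ≠ 0) (by omega)
    have hne3 : ((π ⟨i+1, by omega⟩ : Fin n) : ℕ) ≠ a := fun h =>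
      val_ne_of_pos n (pos_of_four hn) π ⟨i+1, by omega⟩ (by omega : i + 1 ≠ 0) (by omega)
    exact ⟨i, k, hk, hik, hi1,
      (cval_lt_iff n a _ _ (π _).isLt (π _).isLt hne1 hne2).mp h1,
      (cval_lt_iff n a _ _ (π _).isLt (π _).isLt hne2 hne3).mp h2⟩

lemma cPerm_mul_avoid (n a : ℕ) (ha : a < n) (hn : 4 ≤ n) (π : Equiv.Perm (Fin n))
    (h0 : ((π ⟨0, pos_of_four hn⟩ : Fin n) : ℕ) = a) (hπ : ¬ ContainsV13sq2 n π) :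
    ¬ ContainsV13sq2 n (cPerm n a ha * π) := by
  intro hc
  obtain ⟨i, k, hk, hik, _, h1, h2⟩ := cPerm_mul_contains_elim n a ha hn π h0 hc
  exact hπ ((containsV_iff n π).mpr ⟨i, k, hk, hik, h1, h2⟩)

lemma cPerm_mul_zero (n a : ℕ) (ha : a < n) (hn : 4 ≤ n) (π : Equiv.Perm (Fin n))
    (h0 : ((π ⟨0, pos_of_four hn⟩ : Fin n) : ℕ) = a) :
    (((cPerm n a ha * π) ⟨0, pos_of_four hn⟩ : Fin n) : ℕ) = n - 1 := by
  have e : (((cPerm n a ha * π) ⟨0, pos_of_four hn⟩ : Fin n) : ℕ)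
      = cval n a ((π ⟨0, pos_of_four hn⟩ : Fin n) : ℕ) := rfl
  rw [e, h0]; unfold cval; simp

def upFun (n : ℕ) (hn : 4 ≤ n) (σ : Equiv.Perm (Fin (n-1))) : Fin n → Fin n := fun j =>
  if h : (j : ℕ) = 0 then ⟨n-1, by omega⟩
  else ⟨((σ ⟨(j : ℕ) - 1, by have := j.isLt; omega⟩ : Fin (n-1)) : ℕ), by
    have := (σ ⟨(j : ℕ) - 1, by have := j.isLt; omega⟩).isLt; omega⟩

lemma upFun_inj (n : ℕ) (hn : 4 ≤ n) (σ : Equiv.Perm (Fin (n-1))) :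
    Function.Injective (upFun n hn σ) := by
  intro u v h
  have h' := congrArg Fin.val h
  simp only [upFun] at h'
  split_ifs at h' with hu hv hv
  · exact Fin.ext (by omega)
  · exfalso
    have hlt := (σ ⟨(v : ℕ) - 1, by have := v.isLt; omega⟩).isLt
    have he : (n - 1 : ℕ) = ((σ ⟨(v : ℕ) - 1, by have := v.isLt; omega⟩ : Fin (n-1)) : ℕ) := h'
    omega
  · exfalso
    have hlt := (σ ⟨(u : ℕ) - 1, by have := u.isLt; omega⟩).isLt
    have he : ((σ ⟨(u : ℕ) - 1, by have := u.isLt; omega⟩ : Fin (n-1)) : ℕ) = (n - 1 : ℕ) := h'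
    omega
  · have he : ((σ ⟨(u : ℕ) - 1, by have := u.isLt; omega⟩ : Fin (n-1)) : ℕ)
        = ((σ ⟨(v : ℕ) - 1, by have := v.isLt; omega⟩ : Fin (n-1)) : ℕ) := h'
    have h2 := σ.injective (Fin.ext he)
    have h3 : (u : ℕ) - 1 = (v : ℕ) - 1 := congrArg Fin.val h2
    exact Fin.ext (by omega)

noncomputable def upPerm (n : ℕ) (hn : 4 ≤ n) (σ : Equiv.Perm (Fin (n-1))) :
    Equiv.Perm (Fin n) := permOf (upFun n hn σ) (upFun_inj n hn σ)

lemma upPerm_val_zero (n : ℕ) (hn : 4 ≤ n) (σ : Equiv.Perm (Fin (n-1))) (x : Fin n)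
    (hx : (x : ℕ) = 0) : ((upPerm n hn σ x : Fin n) : ℕ) = n - 1 := by
  simp [upPerm, upFun, hx]

lemma upPerm_val_pos (n : ℕ) (hn : 4 ≤ n) (σ : Equiv.Perm (Fin (n-1))) (x : Fin n)
    (hx : ¬ (x : ℕ) = 0) : ((upPerm n hn σ x : Fin n) : ℕ)
      = ((σ ⟨(x : ℕ) - 1, by have := x.isLt; omega⟩ : Fin (n-1)) : ℕ) := by
  simp [upPerm, upFun, hx]

lemma perm_val_congr {m : ℕ} (σ : Equiv.Perm (Fin m)) {x y : ℕ} (hx : x < m) (hy : y < m)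
    (h : x = y) : ((σ ⟨x, hx⟩ : Fin m) : ℕ) = ((σ ⟨y, hy⟩ : Fin m) : ℕ) := by subst h; rfl

lemma upPerm_avoid (n : ℕ) (hn : 4 ≤ n) (σ : Equiv.Perm (Fin (n-1)))
    (hσ : ¬ ContainsV13sq2 (n-1) σ) : ¬ ContainsV13sq2 n (upPerm n hn σ) := by
  intro hc
  rw [containsV_iff] at hc
  obtain ⟨i, k, hk, hik, h1, h2⟩ := hc
  have vk := upPerm_val_pos n hn σ ⟨k, hk⟩ (by omega : ¬ k = 0)
  rcases Nat.eq_zero_or_pos i with rfl | hi1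
  · rw [upPerm_val_zero n hn σ ⟨0, pos_of_four hn⟩ rfl, vk] at h1
    have := (σ ⟨k - 1, by omega⟩).isLt
    omega
  · have vi := upPerm_val_pos n hn σ ⟨i, by omega⟩ (by omega : ¬ i = 0)
    have vi1 := upPerm_val_pos n hn σ ⟨i+1, by omega⟩ (by omega : ¬ i + 1 = 0)
    simp only [vi, vk] at h1
    simp only [vk, vi1] at h2
    apply hσ
    rw [containsV_iff]
    refine ⟨i - 1, k - 1, by omega, by omega, ?_, ?_⟩
    · have e1 := perm_val_congr σ (by omega : i - 1 < n - 1) (by omega : i - 1 < n - 1) rfl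
      have e2 := perm_val_congr σ (by omega : k - 1 < n - 1) (by omega : k - 1 < n - 1) rfl
      omega
    · have e3 := perm_val_congr σ (by omega : i - 1 + 1 < n - 1)
        (by omega : i + 1 - 1 < n - 1) (by omega : i - 1 + 1 = i + 1 - 1)
      have e2 := perm_val_congr σ (by omega : k - 1 < n - 1) (by omega : k - 1 < n - 1) rfl
      omega

def badval (n a j : ℕ) : ℕ :=
  if j = 0 then a else if j = n - 1 then a + 1
  else if j ≤ n - 2 - a then n - j else n - j - 2

def badFun (n a : ℕ) (hn : 4 ≤ n) (ha : a + 3 ≤ n) : Fin n → Fin n := fun j =>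
  ⟨badval n a (j : ℕ), by have := j.isLt; unfold badval; split_ifs <;> omega⟩

lemma badFun_inj (n a : ℕ) (hn : 4 ≤ n) (ha : a + 3 ≤ n) :
    Function.Injective (badFun n a hn ha) := by
  intro u v h
  have h' : badval n a (u : ℕ) = badval n a (v : ℕ) := congrArg Fin.val h
  have hu := u.isLt; have hv := v.isLt
  apply Fin.ext
  unfold badval at h'; split_ifs at h' <;> omega

noncomputable def badPerm (n a : ℕ) (hn : 4 ≤ n) (ha : a + 3 ≤ n) : Equiv.Perm (Fin n) :=
  permOf (badFun n a hn ha) (badFun_inj n a hn ha)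

lemma bad_descent (n a : ℕ) (hn : 4 ≤ n) (ha : a + 3 ≤ n) (i : ℕ) (h1 : 1 ≤ i)
    (h2 : i + 1 ≤ n - 2) : badval n a (i + 1) < badval n a i := by
  unfold badval; split_ifs <;> try omega
  all_goals exact (by assumption : False).elim

lemma bad_no_tail (n a : ℕ) (hn : 4 ≤ n) (ha : a + 3 ≤ n) :
    ¬ ∃ i k : ℕ, ∃ hk : k < n, ∃ hik : i + 3 ≤ k, 1 ≤ i ∧
      ((badPerm n a hn ha ⟨i, by omega⟩ : Fin n) : ℕ)
        < ((badPerm n a hn ha ⟨k, hk⟩ : Fin n) : ℕ) ∧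
      ((badPerm n a hn ha ⟨k, hk⟩ : Fin n) : ℕ)
        < ((badPerm n a hn ha ⟨i+1, by omega⟩ : Fin n) : ℕ) := by
  rintro ⟨i, k, hk, hik, hi1, h1, h2⟩
  have e1 : ((badPerm n a hn ha ⟨i, by omega⟩ : Fin n) : ℕ) = badval n a i := rfl
  have e2 : ((badPerm n a hn ha ⟨k, hk⟩ : Fin n) : ℕ) = badval n a k := rfl
  have e3 : ((badPerm n a hn ha ⟨i+1, by omega⟩ : Fin n) : ℕ) = badval n a (i+1) := rfl
  have hd := bad_descent n a hn ha i hi1 (by omega)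
  omega

lemma badPerm_zero (n a : ℕ) (hn : 4 ≤ n) (ha : a + 3 ≤ n) :
    ((badPerm n a hn ha ⟨0, pos_of_four hn⟩ : Fin n) : ℕ) = a := by
  show badval n a 0 = a
  unfold badval; simp

lemma badPerm_contains (n a : ℕ) (hn : 4 ≤ n) (ha : a + 3 ≤ n) :
    ContainsV13sq2 n (badPerm n a hn ha) := by
  rw [containsV_iff]
  refine ⟨0, n - 1, by omega, by omega, ?_, ?_⟩
  · show badval n a 0 < badval n a (n - 1)
    unfold badval; split_ifs <;> try omega
    all_goals exact (by assumption : False).elim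
  · show badval n a (n - 1) < badval n a (0 + 1)
    unfold badval; split_ifs <;> try omega
    all_goals exact (by assumption : False).elim

lemma up_surj (n : ℕ) (hn : 4 ≤ n) (π : Equiv.Perm (Fin n)) (hπ : ¬ ContainsV13sq2 n π)
    (h0 : ((π ⟨0, pos_of_four hn⟩ : Fin n) : ℕ) = n - 1) :
    ∃ σ : Equiv.Perm (Fin (n-1)), ¬ ContainsV13sq2 (n-1) σ ∧ upPerm n hn σ = π := by
  have key : ∀ j : Fin (n-1),
      ((π ⟨(j:ℕ)+1, by have := j.isLt; omega⟩ : Fin n) : ℕ) < n - 1 := by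
    intro j
    have hlt := (π ⟨(j:ℕ)+1, by have := j.isLt; omega⟩).isLt
    have hne := val_ne_of_pos n (pos_of_four hn) π ⟨(j:ℕ)+1, by have := j.isLt; omega⟩
      (by omega : (j:ℕ)+1 ≠ 0)
    omega
  have τinj : Function.Injective (fun j : Fin (n-1) =>
      (⟨((π ⟨(j:ℕ)+1, by have := j.isLt; omega⟩ : Fin n) : ℕ), key j⟩ : Fin (n-1))) := by
    intro u v h
    have h0' := congrArg Fin.val h
    have h' : ((π ⟨(u:ℕ)+1, by have := u.isLt; omega⟩ : Fin n) : ℕ)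
        = ((π ⟨(v:ℕ)+1, by have := v.isLt; omega⟩ : Fin n) : ℕ) := h0'
    have h2 := π.injective (Fin.ext h')
    have h3 : (u:ℕ)+1 = (v:ℕ)+1 := congrArg Fin.val h2
    exact Fin.ext (by omega)
  refine ⟨permOf _ τinj, ?_, ?_⟩
  · intro hc
    rw [containsV_iff] at hc
    obtain ⟨i, k, hk, hik, h1, h2⟩ := hc
    apply hπ
    rw [containsV_iff]
    exact ⟨i+1, k+1, by omega, by omega, h1, h2⟩
  · apply Equiv.ext
    intro j
    apply Fin.ext
    by_cases hj : (j : ℕ) = 0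
    · rw [upPerm_val_zero n hn _ j hj]
      have hje : j = ⟨0, pos_of_four hn⟩ := Fin.ext hj
      rw [hje, h0]
    · rw [upPerm_val_pos n hn _ j hj]
      have e := perm_val_congr π (show (j:ℕ)-1+1 < n by have := j.isLt; omega) j.isLt
        (by omega : (j:ℕ)-1+1 = (j:ℕ))
      exact e


lemma part2 (n : ℕ) (hn : 4 ≤ n) :
    Nat.card {π : Equiv.Perm (Fin n) //
        ¬ ContainsV13sq2 n π ∧ ((π ⟨0, pos_of_four hn⟩ : Fin n) : ℕ) = n - 1} =
      Nat.card {π : Equiv.Perm (Fin (n - 1)) // ¬ ContainsV13sq2 (n - 1) π} := by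
  refine (Nat.card_eq_of_bijective
    (fun s : {π : Equiv.Perm (Fin (n - 1)) // ¬ ContainsV13sq2 (n - 1) π} =>
      (⟨upPerm n hn s.1, upPerm_avoid n hn s.1 s.2,
        upPerm_val_zero n hn s.1 ⟨0, pos_of_four hn⟩ rfl⟩ :
        {π : Equiv.Perm (Fin n) //
          ¬ ContainsV13sq2 n π ∧ ((π ⟨0, pos_of_four hn⟩ : Fin n) : ℕ) = n - 1}))
    ⟨?_, ?_⟩).symm
  · intro s t h
    have hv' : upPerm n hn s.1 = upPerm n hn t.1 := congrArg Subtype.val h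
    apply Subtype.ext
    apply Equiv.ext
    intro j
    apply Fin.ext
    have e : ((upPerm n hn s.1 ⟨(j:ℕ)+1, by have := j.isLt; omega⟩ : Fin n) : ℕ)
        = ((upPerm n hn t.1 ⟨(j:ℕ)+1, by have := j.isLt; omega⟩ : Fin n) : ℕ) := by
      rw [hv']
    simp only [upPerm_val_pos n hn s.1 ⟨(j:ℕ)+1, by have := j.isLt; omega⟩
        (by omega : ¬ (j:ℕ)+1 = 0),
      upPerm_val_pos n hn t.1 ⟨(j:ℕ)+1, by have := j.isLt; omega⟩
        (by omega : ¬ (j:ℕ)+1 = 0)] at e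
    exact e
  · intro p
    obtain ⟨σ, hσ, hu⟩ := up_surj n hn p.1 p.2.1 p.2.2
    exact ⟨⟨σ, hσ⟩, Subtype.ext hu⟩

lemma part1 (n i : ℕ) (hn : 4 ≤ n) (hi1 : 1 ≤ i) (hi2 : i - 1 < n) :
    Nat.card {π : Equiv.Perm (Fin n) //
        ¬ ContainsV13sq2 n π ∧ ((π ⟨0, pos_of_four hn⟩ : Fin n) : ℕ) = i - 1} ≤
      Nat.card {π : Equiv.Perm (Fin n) //
        ¬ ContainsV13sq2 n π ∧ ((π ⟨0, pos_of_four hn⟩ : Fin n) : ℕ) = n - 1} := by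
  apply Nat.card_le_card_of_injective
    (fun p : {π : Equiv.Perm (Fin n) //
        ¬ ContainsV13sq2 n π ∧ ((π ⟨0, pos_of_four hn⟩ : Fin n) : ℕ) = i - 1} =>
      (⟨cPerm n (i-1) hi2 * p.1,
        cPerm_mul_avoid n (i-1) hi2 hn p.1 p.2.2 p.2.1,
        cPerm_mul_zero n (i-1) hi2 hn p.1 p.2.2⟩ :
        {π : Equiv.Perm (Fin n) //
          ¬ ContainsV13sq2 n π ∧ ((π ⟨0, pos_of_four hn⟩ : Fin n) : ℕ) = n - 1}))
  intro p q h
  exact Subtype.ext (mul_left_cancel (congrArg Subtype.val h))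

lemma part3 (n i : ℕ) (hn : 4 ≤ n) (hi1 : 1 ≤ i) (hi3 : i ≤ n - 2) :
    Nat.card {π : Equiv.Perm (Fin n) //
        ¬ ContainsV13sq2 n π ∧ ((π ⟨0, pos_of_four hn⟩ : Fin n) : ℕ) = i - 1} <
      Nat.card {π : Equiv.Perm (Fin n) //
        ¬ ContainsV13sq2 n π ∧ ((π ⟨0, pos_of_four hn⟩ : Fin n) : ℕ) = n - 1} := by
  classical
  have ha : i - 1 < n := by omega
  have hab : (i - 1) + 3 ≤ n := by omega
  haveI : Fintype {π : Equiv.Perm (Fin n) //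
      ¬ ContainsV13sq2 n π ∧ ((π ⟨0, pos_of_four hn⟩ : Fin n) : ℕ) = i - 1} := Fintype.ofFinite _
  haveI : Fintype {π : Equiv.Perm (Fin n) //
      ¬ ContainsV13sq2 n π ∧ ((π ⟨0, pos_of_four hn⟩ : Fin n) : ℕ) = n - 1} := Fintype.ofFinite _
  rw [Nat.card_eq_fintype_card, Nat.card_eq_fintype_card]
  have hbavoid : ¬ ContainsV13sq2 n (cPerm n (i-1) ha * badPerm n (i-1) hn hab) := by
    intro hc
    obtain ⟨i', k, hk, hik, hi1', h1, h2⟩ :=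
      cPerm_mul_contains_elim n (i-1) ha hn (badPerm n (i-1) hn hab)
        (badPerm_zero n (i-1) hn hab) hc
    exact bad_no_tail n (i-1) hn hab ⟨i', k, hk, hik, hi1', h1, h2⟩
  refine Fintype.card_lt_of_injective_of_notMem
    (fun p : {π : Equiv.Perm (Fin n) //
        ¬ ContainsV13sq2 n π ∧ ((π ⟨0, pos_of_four hn⟩ : Fin n) : ℕ) = i - 1} =>
      (⟨cPerm n (i-1) ha * p.1,
        cPerm_mul_avoid n (i-1) ha hn p.1 p.2.2 p.2.1,
        cPerm_mul_zero n (i-1) ha hn p.1 p.2.2⟩ :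
        {π : Equiv.Perm (Fin n) //
          ¬ ContainsV13sq2 n π ∧ ((π ⟨0, pos_of_four hn⟩ : Fin n) : ℕ) = n - 1}))
    (fun p q h => Subtype.ext (mul_left_cancel (congrArg Subtype.val h)))
    (b := ⟨cPerm n (i-1) ha * badPerm n (i-1) hn hab, hbavoid,
      cPerm_mul_zero n (i-1) ha hn (badPerm n (i-1) hn hab)
        (badPerm_zero n (i-1) hn hab)⟩) ?_
  rintro ⟨⟨π, hπ, hz⟩, hEq⟩
  have h' := congrArg Subtype.val hEq
  have hπb : π = badPerm n (i-1) hn hab := mul_left_cancel h'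
  rw [hπb] at hπ
  exact hπ (badPerm_contains n (i-1) hn hab)

/-- For `n ≥ 4` and `1 ≤ i ≤ n - 1` (one-based value `i`, i.e. zero-based `i - 1`):
the number of `13□2`-avoiders of `[n]` starting with `i` is at most the number of
those starting with `n`, which equals `|Av_{n-1}(13□2)|`; the inequality is strict
when `i ≤ n - 2`. -/
theorem stmt13 (n i : ℕ) (hn : 4 ≤ n) (hi1 : 1 ≤ i) (hi2 : i ≤ n - 1) :
    (Nat.card {π : Equiv.Perm (Fin n) //
        ¬ ContainsV13sq2 n π ∧ (π ⟨0, by omega⟩ : ℕ) = i - 1} ≤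
      Nat.card {π : Equiv.Perm (Fin n) //
        ¬ ContainsV13sq2 n π ∧ (π ⟨0, by omega⟩ : ℕ) = n - 1}) ∧
    (Nat.card {π : Equiv.Perm (Fin n) //
        ¬ ContainsV13sq2 n π ∧ (π ⟨0, by omega⟩ : ℕ) = n - 1} =
      Nat.card {π : Equiv.Perm (Fin (n - 1)) // ¬ ContainsV13sq2 (n - 1) π}) ∧
    (i ≤ n - 2 →
      Nat.card {π : Equiv.Perm (Fin n) //
          ¬ ContainsV13sq2 n π ∧ (π ⟨0, by omega⟩ : ℕ) = i - 1} <
        Nat.card {π : Equiv.Perm (Fin n) //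
          ¬ ContainsV13sq2 n π ∧ (π ⟨0, by omega⟩ : ℕ) = n - 1}) :=
  ⟨part1 n i hn hi1 (by omega), part2 n hn, fun hi3 => part3 n i hn hi1 hi3⟩
end

section
/- The number of permutations of [n] avoiding the consecutive distant pattern 1□2 (i.e., having no index i with π_i < π_{i+2}) equals the central binomial coefficient C(n, ⌊n/2⌋). -/
open Finset

namespace Stmt14

variable {n : ℕ}

/-- The avoidance condition. -/
def Cond (π : Equiv.Perm (Fin n)) : Prop :=
  ∀ i : Fin n, ∀ h : (i : ℕ) + 2 < n, ¬ π i < π ⟨(i : ℕ) + 2, h⟩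

lemma pi_congr (π : Equiv.Perm (Fin n)) {x y : ℕ} (hx : x < n) (hy : y < n) (h : x = y) :
    π ⟨x, hx⟩ = π ⟨y, hy⟩ := by subst h; rfl

lemma step2 (π : Equiv.Perm (Fin n)) (hπ : Cond π) {a : ℕ} (ha : a < n) (h2 : a + 2 < n) :
    π ⟨a + 2, h2⟩ < π ⟨a, ha⟩ := by
  have h := hπ ⟨a, ha⟩ h2
  have hne : π ⟨a + 2, h2⟩ ≠ π ⟨a, ha⟩ := by
    intro he
    have := π.injective he
    simp only [Fin.mk.injEq] at this
    omega
  exact lt_of_le_of_ne (not_lt.mp h) hne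

lemma step_lt (π : Equiv.Perm (Fin n)) (hπ : Cond π) {a t : ℕ} (ha : a < n)
    (hb : a + 2 * (t + 1) < n) :
    π ⟨a + 2 * (t + 1), hb⟩ < π ⟨a, ha⟩ := by
  induction t with
  | zero =>
      have := step2 π hπ ha (show a + 2 < n by omega)
      exact lt_of_eq_of_lt (pi_congr π hb (by omega) (by ring)) this
  | succ t ih =>
      have hb' : a + 2 * (t + 1) < n := by omega
      have h2 : a + 2 * (t + 1) + 2 < n := by omega
      have := step2 π hπ hb' h2
      exact lt_trans (lt_of_eq_of_lt (pi_congr π hb h2 (by ring)) this) (ih hb')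

lemma anti (π : Equiv.Perm (Fin n)) (hπ : Cond π) {a b : ℕ} (ha : a < n) (hb : b < n)
    (hpar : a % 2 = b % 2) (hab : a < b) :
    π ⟨b, hb⟩ < π ⟨a, ha⟩ := by
  obtain ⟨t, rfl⟩ : ∃ t, b = a + 2 * (t + 1) := ⟨(b - a) / 2 - 1, by omega⟩
  exact step_lt π hπ ha hb

/-- The even positions of `Fin n`. -/
def evens (n : ℕ) : Finset (Fin n) :=
  (univ : Finset (Fin ((n + 1) / 2))).image fun j => ⟨2 * j.val, by have := j.isLt; omega⟩

lemma mem_evens {i : Fin n} : i ∈ evens n ↔ i.val % 2 = 0 := by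
  simp only [evens, mem_image, mem_univ, true_and]
  constructor
  · rintro ⟨j, rfl⟩; simp
  · intro h
    exact ⟨⟨i.val / 2, by have := i.isLt; omega⟩, Fin.ext (by simp; omega)⟩

lemma card_evens : (evens n).card = (n + 1) / 2 := by
  rw [evens, card_image_of_injective _ (fun a b h => by
    have : 2 * a.val = 2 * b.val := by
      simpa only [Fin.mk.injEq] using h
    exact Fin.ext (by omega)), card_univ, Fintype.card_fin]

lemma pi_even (π : Equiv.Perm (Fin n)) (hπ : Cond π)
    {s : Finset (Fin n)} (hs : s.card = (n + 1) / 2)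
    (hss : ∀ q (hq : 2 * q < n), π ⟨2 * q, hq⟩ ∈ s)
    (q : ℕ) (hq : 2 * q < n) :
    π ⟨2 * q, hq⟩ = s.orderEmbOfFin hs ⟨(n + 1) / 2 - 1 - q, by omega⟩ := by
  set k := (n + 1) / 2 with hk
  set f : Fin k → Fin n := fun j =>
    π ⟨2 * (k - 1 - j.val), by have := j.isLt; omega⟩ with hf
  have hmem : ∀ x, f x ∈ s := fun x => hss _ _
  have hmono : StrictMono f := by
    intro j1 j2 hj
    refine anti π hπ (by have := j2.isLt; omega) (by have := j1.isLt; omega) (by omega) ?_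
    have := j1.isLt; have := j2.isLt
    omega
  have hu := Finset.orderEmbOfFin_unique hs hmem hmono
  have h1 : f ⟨k - 1 - q, by omega⟩ = π ⟨2 * q, hq⟩ :=
    pi_congr π _ hq (by simp only [Fin.val_mk]; omega)
  rw [← h1, hu]

lemma pi_odd (π : Equiv.Perm (Fin n)) (hπ : Cond π)
    {s : Finset (Fin n)} (hs : s.card = n / 2)
    (hss : ∀ q (hq : 2 * q + 1 < n), π ⟨2 * q + 1, hq⟩ ∈ s)
    (q : ℕ) (hq : 2 * q + 1 < n) :
    π ⟨2 * q + 1, hq⟩ = s.orderEmbOfFin hs ⟨n / 2 - 1 - q, by omega⟩ := by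
  set m := n / 2 with hm
  set f : Fin m → Fin n := fun j =>
    π ⟨2 * (m - 1 - j.val) + 1, by have := j.isLt; omega⟩ with hf
  have hmem : ∀ x, f x ∈ s := fun x => hss _ _
  have hmono : StrictMono f := by
    intro j1 j2 hj
    refine anti π hπ (by have := j2.isLt; omega) (by have := j1.isLt; omega) (by omega) ?_
    have := j1.isLt; have := j2.isLt
    omega
  have hu := Finset.orderEmbOfFin_unique hs hmem hmono
  have h1 : f ⟨m - 1 - q, by omega⟩ = π ⟨2 * q + 1, hq⟩ :=
    pi_congr π _ hq (by simp only [Fin.val_mk]; omega)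
  rw [← h1, hu]

lemma card_image_evens (π : Equiv.Perm (Fin n)) :
    ((evens n).image π).card = (n + 1) / 2 := by
  rw [card_image_of_injective _ π.injective, card_evens]

lemma card_compl_image_evens (π : Equiv.Perm (Fin n)) :
    ((evens n).image π)ᶜ.card = n / 2 := by
  rw [card_compl, card_image_evens, Fintype.card_fin]; omega

lemma even_mem_image (π : Equiv.Perm (Fin n)) (q : ℕ) (hq : 2 * q < n) :
    π ⟨2 * q, hq⟩ ∈ (evens n).image π :=
  mem_image_of_mem π (mem_evens.mpr (by simp))

lemma odd_mem_compl (π : Equiv.Perm (Fin n)) (q : ℕ) (hq : 2 * q + 1 < n) :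
    π ⟨2 * q + 1, hq⟩ ∈ ((evens n).image π)ᶜ := by
  rw [mem_compl]
  rintro hmem
  obtain ⟨j, hj, he⟩ := mem_image.mp hmem
  have heq := π.injective he
  have hj2 := mem_evens.mp hj
  rw [heq] at hj2
  simp only [Fin.val_mk] at hj2
  omega

lemma inj_aux (π σ : Equiv.Perm (Fin n)) (hπ : Cond π) (hσ : Cond σ)
    (h : (evens n).image π = (evens n).image σ) : π = σ := by
  set s := (evens n).image σ with hsdef
  have hs : s.card = (n + 1) / 2 := card_image_evens σ
  have hsc : sᶜ.card = n / 2 := card_compl_image_evens σ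
  refine Equiv.ext fun i => ?_
  by_cases hpar : i.val % 2 = 0
  · have h2 : 2 * (i.val / 2) < n := by have := i.isLt; omega
    have hi : i = ⟨2 * (i.val / 2), h2⟩ := Fin.ext (by simp; omega)
    rw [hi,
      pi_even π hπ hs (fun q hq => h ▸ even_mem_image π q hq) _ h2,
      pi_even σ hσ hs (fun q hq => even_mem_image σ q hq) _ h2]
  · have h2 : 2 * (i.val / 2) + 1 < n := by have := i.isLt; omega
    have hi : i = ⟨2 * (i.val / 2) + 1, h2⟩ := Fin.ext (by simp; omega)
    rw [hi,
      pi_odd π hπ hsc (fun q hq => h ▸ odd_mem_compl π q hq) _ h2,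
      pi_odd σ hσ hsc (fun q hq => odd_mem_compl σ q hq) _ h2]

lemma card_compl_of (s : Finset (Fin n)) (hs : s.card = (n + 1) / 2) :
    sᶜ.card = n / 2 := by
  rw [card_compl, hs, Fintype.card_fin]; omega

/-- Building the canonical avoider from a set of values for even positions. -/
def build (s : Finset (Fin n)) (hs : s.card = (n + 1) / 2) : Fin n → Fin n := fun i =>
  if h : i.val % 2 = 0 then
    s.orderEmbOfFin hs ⟨(n + 1) / 2 - 1 - i.val / 2, by have := i.isLt; omega⟩
  else
    sᶜ.orderEmbOfFin (card_compl_of s hs) ⟨n / 2 - 1 - i.val / 2, by have := i.isLt; omega⟩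

lemma build_inj (s : Finset (Fin n)) (hs : s.card = (n + 1) / 2) :
    Function.Injective (build s hs) := by
  intro i1 i2 he
  by_cases h1 : i1.val % 2 = 0 <;> by_cases h2 : i2.val % 2 = 0 <;>
    simp only [build, h1, h2, dif_pos, dif_neg, not_false_iff] at he
  · have := (s.orderEmbOfFin hs).injective he
    simp only [Fin.mk.injEq] at this
    have := i1.isLt; have := i2.isLt
    exact Fin.ext (by omega)
  · exact absurd (he ▸ Finset.orderEmbOfFin_mem s hs _)
      (mem_compl.mp (Finset.orderEmbOfFin_mem sᶜ (card_compl_of s hs) _))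
  · exact absurd (he.symm ▸ Finset.orderEmbOfFin_mem s hs _)
      (mem_compl.mp (Finset.orderEmbOfFin_mem sᶜ (card_compl_of s hs) _))
  · have := (sᶜ.orderEmbOfFin (card_compl_of s hs)).injective he
    simp only [Fin.mk.injEq] at this
    have := i1.isLt; have := i2.isLt
    exact Fin.ext (by omega)

/-- The canonical avoider as a permutation. -/
noncomputable def buildPerm (s : Finset (Fin n)) (hs : s.card = (n + 1) / 2) :
    Equiv.Perm (Fin n) :=
  Equiv.ofBijective (build s hs) (Finite.injective_iff_bijective.mp (build_inj s hs))

lemma buildPerm_apply (s : Finset (Fin n)) (hs : s.card = (n + 1) / 2) (i : Fin n) :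
    buildPerm s hs i = build s hs i := rfl

lemma buildPerm_cond (s : Finset (Fin n)) (hs : s.card = (n + 1) / 2) :
    Cond (buildPerm s hs) := by
  intro i h
  have hlt : buildPerm s hs ⟨(i : ℕ) + 2, h⟩ < buildPerm s hs i := by
    rw [buildPerm_apply, buildPerm_apply]
    by_cases hpar : i.val % 2 = 0
    · have hpar2 : ((⟨(i : ℕ) + 2, h⟩ : Fin n)).val % 2 = 0 := by simpa using by omega
      simp only [build, hpar, hpar2, dif_pos]
      refine (s.orderEmbOfFin hs).strictMono ?_
      rw [Fin.mk_lt_mk]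
      have := i.isLt
      omega
    · have hpar2 : ¬ ((⟨(i : ℕ) + 2, h⟩ : Fin n)).val % 2 = 0 := by simpa using by omega
      simp only [build, hpar, hpar2, dif_neg, not_false_iff]
      refine (sᶜ.orderEmbOfFin (card_compl_of s hs)).strictMono ?_
      rw [Fin.mk_lt_mk]
      have := i.isLt
      omega
  exact fun hc => absurd hc (lt_asymm hlt)

lemma buildPerm_image (s : Finset (Fin n)) (hs : s.card = (n + 1) / 2) :
    (evens n).image (buildPerm s hs) = s := by
  have hsub : (evens n).image (buildPerm s hs) ⊆ s := by
    intro v hv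
    obtain ⟨j, hj, rfl⟩ := mem_image.mp hv
    have hj0 := mem_evens.mp hj
    rw [buildPerm_apply]
    simp only [build, hj0, dif_pos]
    exact Finset.orderEmbOfFin_mem s hs _
  refine Finset.eq_of_subset_of_card_le hsub ?_
  rw [card_image_of_injective _ (buildPerm s hs).injective, card_evens, hs]

end Stmt14

open Stmt14 in
/-- The number of permutations of `[n]` avoiding the consecutive distant pattern
`1□2` (no index `i` with `π i < π (i+2)`) is the central binomial coefficient
`C(n, ⌊n/2⌋)`. -/
theorem stmt14 (n : ℕ) :
    Nat.card {π : Equiv.Perm (Fin n) //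
        ∀ i : Fin n, ∀ h : (i : ℕ) + 2 < n, ¬ π i < π ⟨(i : ℕ) + 2, h⟩} =
      Nat.choose n (n / 2) := by
  have key :
      Nat.card {π : Equiv.Perm (Fin n) // Cond π} =
        Nat.card {s : Finset (Fin n) // s.card = (n + 1) / 2} := by
    refine Nat.card_eq_of_bijective
      (fun π => ⟨(evens n).image π.1, card_image_evens π.1⟩) ⟨?_, ?_⟩
    · intro π σ h
      exact Subtype.ext (inj_aux π.1 σ.1 π.2 σ.2 (congrArg Subtype.val h))
    · rintro ⟨s, hs⟩
      exact ⟨⟨buildPerm s hs, buildPerm_cond s hs⟩,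
        Subtype.ext (buildPerm_image s hs)⟩
  have : Nat.card {π : Equiv.Perm (Fin n) // Cond π} =
      Nat.choose n (n / 2) := by
    rw [key, Nat.card_eq_fintype_card, Fintype.card_finset_len, Fintype.card_fin,
      show n / 2 = n - (n + 1) / 2 from by omega, Nat.choose_symm (by omega)]
  exact this
end

section
/- For a classical pattern q of size k, distance r ≥ 0 and n with l = ⌊n/(r+1)⌋ and u = n mod (r+1), the number of permutations of [n] avoiding the consecutive distant pattern dist_r(q) with all gaps exactly r equals n!/(l!^{r+1-u}·(l+1)!^{u}) · |Av_l(underline q)|^{r+1-u} · |Av_{l+1}(underline q)|^{u}, where Av_m(underline q) is the set of m-permutations avoiding q as a consecutive pattern. -/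
/-- `π` contains the consecutive distant pattern `dist_r(q)` with all gaps
exactly `r`: at some position `i`, the letters `π i, π (i+r+1), …,
π (i+(k-1)(r+1))` are order-isomorphic to `q`.  Taking `r = 0` gives ordinary
consecutive pattern containment. -/
def ContainsTight {n k : ℕ} (π : Equiv.Perm (Fin n)) (q : Fin k → Fin k)
    (r : ℕ) : Prop :=
  ∃ i : ℕ, ∃ h : i + (k - 1) * (r + 1) < n,
    ∀ a b : Fin k,
      (π ⟨i + (a : ℕ) * (r + 1), by
          have ha : (a : ℕ) * (r + 1) ≤ (k - 1) * (r + 1) :=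
            Nat.mul_le_mul_right _ (Nat.le_pred_of_lt a.isLt)
          omega⟩ <
        π ⟨i + (b : ℕ) * (r + 1), by
          have hb : (b : ℕ) * (r + 1) ≤ (k - 1) * (r + 1) :=
            Nat.mul_le_mul_right _ (Nat.le_pred_of_lt b.isLt)
          omega⟩) ↔ q a < q b

namespace Stmt15

open Equiv Function

/-- Size of the residue class `j` among `{0, …, n-1}` modulo `r+1`. -/
def S (r n : ℕ) (j : Fin (r + 1)) : ℕ :=
  if (j : ℕ) < n % (r + 1) then n / (r + 1) + 1 else n / (r + 1)

lemma lt_S_iff (r n : ℕ) (j : Fin (r + 1)) (t : ℕ) :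
    (j : ℕ) + t * (r + 1) < n ↔ t < S r n j := by
  have hdm : (r + 1) * (n / (r + 1)) + n % (r + 1) = n := Nat.div_add_mod n (r + 1)
  have hu : n % (r + 1) < r + 1 := Nat.mod_lt _ (Nat.succ_pos r)
  have hj : (j : ℕ) < r + 1 := j.isLt
  unfold S
  split_ifs with h
  · constructor
    · intro hlt
      by_contra hc
      push_neg at hc
      have h1 : (n / (r + 1) + 1) * (r + 1) ≤ t * (r + 1) := Nat.mul_le_mul_right _ hc
      have e1 : (n / (r + 1) + 1) * (r + 1) = (r + 1) * (n / (r + 1)) + (r + 1) := by ring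
      omega
    · intro ht
      have h1 : t * (r + 1) ≤ (n / (r + 1)) * (r + 1) := Nat.mul_le_mul_right _ (by omega)
      have e1 : (n / (r + 1)) * (r + 1) = (r + 1) * (n / (r + 1)) := by ring
      omega
  · push_neg at h
    constructor
    · intro hlt
      by_contra hc
      push_neg at hc
      have h1 : (n / (r + 1)) * (r + 1) ≤ t * (r + 1) := Nat.mul_le_mul_right _ hc
      have e1 : (n / (r + 1)) * (r + 1) = (r + 1) * (n / (r + 1)) := by ring
      omega
    · intro ht
      have h1 : (t + 1) * (r + 1) ≤ (n / (r + 1)) * (r + 1) :=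
        Nat.mul_le_mul_right _ (by omega)
      have e1 : (t + 1) * (r + 1) = t * (r + 1) + (r + 1) := by ring
      have e2 : (n / (r + 1)) * (r + 1) = (r + 1) * (n / (r + 1)) := by ring
      omega

/-- The positions `{0,…,n-1}` split into residue classes modulo `r+1`. -/
def posE (r n : ℕ) : (Σ j : Fin (r + 1), Fin (S r n j)) ≃ Fin n where
  toFun x := ⟨(x.1 : ℕ) + (x.2 : ℕ) * (r + 1), (lt_S_iff r n x.1 x.2).2 x.2.isLt⟩
  invFun i := ⟨⟨(i : ℕ) % (r + 1), Nat.mod_lt _ (Nat.succ_pos r)⟩,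
    ⟨(i : ℕ) / (r + 1), by
      apply (lt_S_iff r n ⟨(i : ℕ) % (r + 1), Nat.mod_lt _ (Nat.succ_pos r)⟩ _).1
      simpa [Nat.mod_add_div'] using i.isLt⟩⟩
  left_inv := by
    rintro ⟨j, t⟩
    have h1 : ((j : ℕ) + (t : ℕ) * (r + 1)) % (r + 1) = (j : ℕ) := by
      rw [Nat.add_mul_mod_self_right, Nat.mod_eq_of_lt j.isLt]
    have h2 : ((j : ℕ) + (t : ℕ) * (r + 1)) / (r + 1) = (t : ℕ) := by
      rw [Nat.add_mul_div_right _ _ (Nat.succ_pos r), Nat.div_eq_of_lt j.isLt, Nat.zero_add]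
    refine Sigma.ext (Fin.ext h1) ?_
    exact (Fin.heq_ext_iff (congrArg (S r n) (Fin.ext h1))).2 h2
  right_inv := by
    intro i
    exact Fin.ext (by simpa using Nat.mod_add_div' (i : ℕ) (r + 1))

/-- The position of the `t`-th entry of class `j`. -/
def pos (r n : ℕ) (j : Fin (r + 1)) (t : Fin (S r n j)) : Fin n := posE r n ⟨j, t⟩

lemma pos_val (r n : ℕ) (j : Fin (r + 1)) (t : Fin (S r n j)) :
    (pos r n j t : ℕ) = (j : ℕ) + (t : ℕ) * (r + 1) := rfl

lemma pos_surj (r n : ℕ) (x : Fin n) : ∃ j t, x = pos r n j t := by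
  obtain ⟨⟨j, t⟩, hx⟩ := (posE r n).surjective x
  exact ⟨j, t, hx.symm⟩

/-- The permutation of positions acting as `σ j` inside each class `j`. -/
def tau (r n : ℕ) (σ : ∀ j, Perm (Fin (S r n j))) : Perm (Fin n) :=
  (posE r n).permCongr (Equiv.sigmaCongrRight σ)

lemma tau_pos (r n : ℕ) (σ : ∀ j, Perm (Fin (S r n j))) (j : Fin (r + 1))
    (t : Fin (S r n j)) : tau r n σ (pos r n j t) = pos r n j (σ j t) := by
  simp [tau, pos, Equiv.permCongr_apply]

/-- The pattern (standardization) of a word with distinct letters. -/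
def patt {N M : ℕ} (w : Fin N → Fin M) : Perm (Fin N) := (Tuple.sort w)⁻¹

lemma patt_lt {N M : ℕ} {w : Fin N → Fin M} (hw : Injective w) (a b : Fin N) :
    w a < w b ↔ patt w a < patt w b := by
  have hmono : StrictMono (w ∘ Tuple.sort w) :=
    Monotone.strictMono_of_injective (Tuple.monotone_sort w) (hw.comp (Tuple.sort w).injective)
  have hab : ∀ x : Fin N, w x = (w ∘ Tuple.sort w) ((Tuple.sort w)⁻¹ x) := by
    intro x
    simp [patt]
  rw [hab a, hab b]
  exact hmono.lt_iff_lt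

lemma patt_unique {N M : ℕ} {w : Fin N → Fin M} (hw : Injective w) (p : Perm (Fin N))
    (hp : ∀ a b, w a < w b ↔ p a < p b) : p = patt w := by
  have hlt : ∀ x y, patt w x < patt w y ↔ p x < p y := fun x y =>
    ((patt_lt hw x y).symm.trans (hp x y))
  set f : Fin N → Fin N := fun x => patt w (p.symm x) with hf
  have hfm : StrictMono f := by
    intro x y hxy
    have := (hlt (p.symm x) (p.symm y)).2 (by simpa using hxy)
    simpa [hf] using this
  have hfr : Set.range f = Set.range (id : Fin N → Fin N) := by
    rw [Set.range_id]
    exact ((patt w).surjective.comp p.symm.surjective).range_eq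
  have hid : f = id := (hfm.range_inj strictMono_id).1 hfr
  refine Equiv.ext fun x => ?_
  have h5 := congrFun hid (p x)
  simp only [hf, id_eq] at h5
  simpa using h5.symm

lemma patt_comp {N M : ℕ} {w : Fin N → Fin M} (hw : Injective w) (σ : Perm (Fin N)) :
    patt (w ∘ σ) = patt w * σ := by
  refine (patt_unique (hw.comp σ.injective) (patt w * σ) fun a b => ?_).symm
  simpa [Perm.mul_apply] using patt_lt hw (σ a) (σ b)

/-- The word of `π` read along class `j`. -/
def word (r n : ℕ) (π : Perm (Fin n)) (j : Fin (r + 1)) : Fin (S r n j) → Fin n :=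
  fun t => π (pos r n j t)

lemma word_inj (r n : ℕ) (π : Perm (Fin n)) (j : Fin (r + 1)) :
    Injective (word r n π j) := by
  intro a b h
  have h1 := π.injective h
  have h2 := (posE r n).injective h1
  injection h2

/-- The pattern of `π` on class `j`. -/
def P (r n : ℕ) (π : Perm (Fin n)) (j : Fin (r + 1)) : Perm (Fin (S r n j)) :=
  patt (word r n π j)

lemma P_mul_tau (r n : ℕ) (π : Perm (Fin n)) (σ : ∀ j, Perm (Fin (S r n j)))
    (j : Fin (r + 1)) : P r n (π * tau r n σ) j = P r n π j * σ j := by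
  have hw : word r n (π * tau r n σ) j = word r n π j ∘ σ j := by
    funext t
    simp [word, Perm.mul_apply, tau_pos]
  rw [P, hw, patt_comp (word_inj r n π j)]
  rfl

lemma P_recover (r n : ℕ) (ρ : Perm (Fin n)) (a : ∀ j, Perm (Fin (S r n j)))
    (j : Fin (r + 1)) :
    P r n (ρ * (tau r n (fun j => (a j)⁻¹ * P r n ρ j))⁻¹) j = a j := by
  have h := P_mul_tau r n (ρ * (tau r n (fun j => (a j)⁻¹ * P r n ρ j))⁻¹)
    (fun j => (a j)⁻¹ * P r n ρ j) j
  rw [inv_mul_cancel_right] at h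
  apply mul_right_cancel (b := (a j)⁻¹ * P r n ρ j)
  rw [← h]
  group

lemma contains_iff (r n k : ℕ) (π : Perm (Fin n)) (q : Fin k → Fin k) :
    ContainsTight π q r ↔ ∃ j, ContainsTight (P r n π j) q 0 := by
  constructor
  · rintro ⟨i, h, hq⟩
    obtain ⟨j, d, rfl⟩ : ∃ (j : Fin (r + 1)) (d : ℕ), i = (j : ℕ) + d * (r + 1) :=
      ⟨⟨i % (r + 1), Nat.mod_lt _ (Nat.succ_pos r)⟩, i / (r + 1), by
        simp [Nat.mod_add_div']⟩
    have hbound : d + (k - 1) < S r n j := by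
      apply (lt_S_iff r n j (d + (k - 1))).1
      have e : (j : ℕ) + (d + (k - 1)) * (r + 1)
          = (j : ℕ) + d * (r + 1) + (k - 1) * (r + 1) := by ring
      rw [e]; exact h
    have hb2 : d + (k - 1) * (0 + 1) < S r n j := by
      have e1 : (k - 1) * (0 + 1) = k - 1 := by ring
      omega
    have hc1 : ∀ c : Fin k, d + (c : ℕ) * (0 + 1) < S r n j := by
      intro c
      have h3 := Nat.le_pred_of_lt c.isLt
      have e1 : (c : ℕ) * (0 + 1) = (c : ℕ) := by ring
      have e2 : (k - 1) * (0 + 1) = k - 1 := by ring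
      omega
    have hc2 : ∀ c : Fin k, (j : ℕ) + d * (r + 1) + (c : ℕ) * (r + 1) < n := fun c =>
      lt_of_le_of_lt
        (Nat.add_le_add_left (Nat.mul_le_mul_right _ (Nat.le_pred_of_lt c.isLt)) _) h
    have we : ∀ (c : Fin k) (pf : d + (c : ℕ) * (0 + 1) < S r n j)
        (pf2 : (j : ℕ) + d * (r + 1) + (c : ℕ) * (r + 1) < n),
        word r n π j ⟨d + (c : ℕ) * (0 + 1), pf⟩ = π ⟨(j : ℕ) + d * (r + 1) + (c : ℕ) * (r + 1), pf2⟩ := by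
      intro c pf pf2
      unfold word
      apply congrArg
      apply Fin.ext
      rw [pos_val]
      show (j : ℕ) + (d + (c : ℕ) * (0 + 1)) * (r + 1) = _
      ring
    have hmain : ∀ a b : Fin k,
        ((P r n π j) ⟨d + (a : ℕ) * (0 + 1), hc1 a⟩ <
          (P r n π j) ⟨d + (b : ℕ) * (0 + 1), hc1 b⟩ ↔ q a < q b) := by
      intro a b
      rw [P, ← patt_lt (word_inj r n π j), we a (hc1 a) (hc2 a), we b (hc1 b) (hc2 b)]
      exact hq a b
    refine ⟨j, ?_⟩
    unfold ContainsTight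
    exact ⟨d, hb2, hmain⟩
  · rintro ⟨j, d, hb, hq⟩
    have hb' : d + (k - 1) < S r n j := by
      have e1 : (k - 1) * (0 + 1) = k - 1 := by ring
      omega
    have hbound : (j : ℕ) + d * (r + 1) + (k - 1) * (r + 1) < n := by
      have := (lt_S_iff r n j (d + (k - 1))).2 hb'
      have e : (j : ℕ) + (d + (k - 1)) * (r + 1)
          = (j : ℕ) + d * (r + 1) + (k - 1) * (r + 1) := by ring
      rw [e] at this; exact this
    unfold ContainsTight
    refine ⟨(j : ℕ) + d * (r + 1), hbound, fun a b => ?_⟩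
    have hc1 : ∀ c : Fin k, d + (c : ℕ) * (0 + 1) < S r n j := by
      intro c
      have h3 := Nat.le_pred_of_lt c.isLt
      have e1 : (c : ℕ) * (0 + 1) = (c : ℕ) := by ring
      have e2 : (k - 1) * (0 + 1) = k - 1 := by ring
      omega
    have hc2 : ∀ c : Fin k, (j : ℕ) + d * (r + 1) + (c : ℕ) * (r + 1) < n := fun c =>
      lt_of_le_of_lt
        (Nat.add_le_add_left (Nat.mul_le_mul_right _ (Nat.le_pred_of_lt c.isLt)) _) hbound
    have we : ∀ (c : Fin k) (pf : d + (c : ℕ) * (0 + 1) < S r n j)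
        (pf2 : (j : ℕ) + d * (r + 1) + (c : ℕ) * (r + 1) < n),
        word r n π j ⟨d + (c : ℕ) * (0 + 1), pf⟩ = π ⟨(j : ℕ) + d * (r + 1) + (c : ℕ) * (r + 1), pf2⟩ := by
      intro c pf pf2
      unfold word
      apply congrArg
      apply Fin.ext
      rw [pos_val]
      show (j : ℕ) + (d + (c : ℕ) * (0 + 1)) * (r + 1) = _
      ring
    rw [← we a (hc1 a) (hc2 a), ← we b (hc1 b) (hc2 b), patt_lt (word_inj r n π j)]
    exact hq a b

lemma not_contains_iff (r n k : ℕ) (π : Perm (Fin n)) (q : Fin k → Fin k) :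
    ¬ ContainsTight π q r ↔ ∀ j, ¬ ContainsTight (P r n π j) q 0 := by
  rw [contains_iff r n k π q]
  push_neg
  rfl

/-- The key bijection. -/
def mainEquiv (r n k : ℕ) (q : Fin k → Fin k) :
    ({π : Perm (Fin n) // ¬ ContainsTight π q r} × ∀ j : Fin (r + 1), Perm (Fin (S r n j))) ≃
    (Perm (Fin n) × ∀ j : Fin (r + 1), {p : Perm (Fin (S r n j)) // ¬ ContainsTight p q 0}) where
  toFun x := (x.1.1 * tau r n x.2, fun j =>
    ⟨P r n x.1.1 j, ((not_contains_iff r n k x.1.1 q).1 x.1.2) j⟩)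
  invFun y :=
    (⟨y.1 * (tau r n (fun j => ((y.2 j : Perm (Fin (S r n j))))⁻¹ * P r n y.1 j))⁻¹, by
      rw [not_contains_iff r n k _ q]
      intro j
      rw [P_recover r n y.1 (fun j => (y.2 j : Perm (Fin (S r n j)))) j]
      exact (y.2 j).2⟩,
     fun j => ((y.2 j : Perm (Fin (S r n j))))⁻¹ * P r n y.1 j)
  left_inv := by
    rintro ⟨⟨π, hπ⟩, σ⟩
    have hσ : (fun j => (P r n π j)⁻¹ * P r n (π * tau r n σ) j) = σ := by
      funext j
      rw [P_mul_tau]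
      group
    refine Prod.ext (Subtype.ext ?_) ?_
    · show π * tau r n σ * (tau r n _)⁻¹ = π
      rw [hσ, mul_inv_cancel_right]
    · show (fun j => (P r n π j)⁻¹ * P r n (π * tau r n σ) j) = σ
      exact hσ
  right_inv := by
    rintro ⟨ρ, a⟩
    have hP : ∀ j, P r n (ρ * (tau r n (fun j => ((a j : Perm (Fin (S r n j))))⁻¹ * P r n ρ j))⁻¹) j
        = (a j : Perm (Fin (S r n j))) :=
      P_recover r n ρ (fun j => (a j : Perm (Fin (S r n j))))
    refine Prod.ext ?_ ?_
    · show ρ * (tau r n _)⁻¹ * tau r n _ = ρ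
      rw [inv_mul_cancel_right]
    · funext j
      refine Subtype.ext ?_
      show P r n _ j = (a j : Perm (Fin (S r n j)))
      exact hP j

lemma card_filter (r n : ℕ) :
    (Finset.univ.filter fun j : Fin (r + 1) => (j : ℕ) < n % (r + 1)).card = n % (r + 1) := by
  have e : {j : Fin (r + 1) // (j : ℕ) < n % (r + 1)} ≃ Fin (n % (r + 1)) :=
    { toFun := fun x => ⟨(x.1 : ℕ), x.2⟩
      invFun := fun y => ⟨⟨(y : ℕ), lt_trans y.isLt (Nat.mod_lt _ (Nat.succ_pos r))⟩, y.isLt⟩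
      left_inv := fun x => Subtype.ext (Fin.ext rfl)
      right_inv := fun y => rfl }
  rw [← Fintype.card_subtype, Fintype.card_congr e, Fintype.card_fin]

lemma prod_S (r n : ℕ) (g : ℕ → ℕ) :
    ∏ j : Fin (r + 1), g (S r n j)
      = g (n / (r + 1) + 1) ^ (n % (r + 1)) * g (n / (r + 1)) ^ (r + 1 - n % (r + 1)) := by
  have h1 : ∀ j : Fin (r + 1),
      g (S r n j) = if (j : ℕ) < n % (r + 1) then g (n / (r + 1) + 1) else g (n / (r + 1)) := by
    intro j
    unfold S
    split_ifs <;> rfl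
  rw [Finset.prod_congr rfl fun j _ => h1 j, Finset.prod_ite, Finset.prod_const,
    Finset.prod_const, card_filter]
  have h2 := Finset.card_filter_add_card_filter_not
    (s := (Finset.univ : Finset (Fin (r + 1)))) (p := fun j : Fin (r + 1) => (j : ℕ) < n % (r + 1))
  rw [card_filter] at h2
  simp only [Finset.card_univ, Fintype.card_fin] at h2
  have hu : n % (r + 1) < r + 1 := Nat.mod_lt _ (Nat.succ_pos r)
  have h3 : (Finset.univ.filter fun j : Fin (r + 1) => ¬ (j : ℕ) < n % (r + 1)).card
      = r + 1 - n % (r + 1) := by omega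
  rw [h3]

end Stmt15

/-- With `l = ⌊n/(r+1)⌋` and `u = n mod (r+1)`,
`|Av_n(dist_r(q), tight gaps)| = n!/(l!^{r+1-u} (l+1)!^u)
  ⬝ |Av_l(q consecutive)|^{r+1-u} ⬝ |Av_{l+1}(q consecutive)|^u`
(stated in cross-multiplied form). -/
theorem stmt15 (k r n : ℕ) (hk : 1 ≤ k) (q : Fin k → Fin k) :
    Nat.card {π : Equiv.Perm (Fin n) // ¬ ContainsTight π q r} *
        ((n / (r + 1)).factorial ^ (r + 1 - n % (r + 1)) *
          (n / (r + 1) + 1).factorial ^ (n % (r + 1))) =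
      n.factorial *
        (Nat.card {π : Equiv.Perm (Fin (n / (r + 1))) // ¬ ContainsTight π q 0}) ^
          (r + 1 - n % (r + 1)) *
        (Nat.card {π : Equiv.Perm (Fin (n / (r + 1) + 1)) // ¬ ContainsTight π q 0}) ^
          (n % (r + 1)) := by
  classical
  have hcard := Nat.card_congr (Stmt15.mainEquiv r n k q)
  rw [Nat.card_prod, Nat.card_prod, Nat.card_pi, Nat.card_pi] at hcard
  have hperm : ∀ j : Fin (r + 1),
      Nat.card (Equiv.Perm (Fin (Stmt15.S r n j))) = (Stmt15.S r n j).factorial := fun j => by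
    rw [Nat.card_eq_fintype_card, Fintype.card_perm, Fintype.card_fin]
  rw [Finset.prod_congr rfl fun j _ => hperm j, Stmt15.prod_S r n Nat.factorial] at hcard
  have hn : Nat.card (Equiv.Perm (Fin n)) = n.factorial := by
    rw [Nat.card_eq_fintype_card, Fintype.card_perm, Fintype.card_fin]
  rw [hn] at hcard
  have hg := Stmt15.prod_S r n
    (fun N => Nat.card {p : Equiv.Perm (Fin N) // ¬ ContainsTight p q 0})
  rw [hg] at hcard
  rw [mul_comm ((n / (r + 1) + 1).factorial ^ (n % (r + 1)))
    ((n / (r + 1)).factorial ^ (r + 1 - n % (r + 1)))] at hcard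
  rw [hcard]
  ring
end

section
/- Let Π = {2431, 2143, 3142, 4132, 1432, 1342, 1324, 1423, 1243}. For n ≥ 4, the permutations of [n] avoiding all patterns in Π are exactly the 132-avoiding permutations together with the permutations of the form (n-2) n α (n-1) where α is a 132-avoiding permutation of {1, ..., n-3}. Consequently |Av_n(Π)| = Cat(n) + Cat(n-3), where Cat(m) is the m-th Catalan number. -/
/-- Classical pattern containment: `π` has a subsequence order-isomorphic to `q`. -/
def ContainsPat {n k : ℕ} (π : Equiv.Perm (Fin n)) (q : Fin k → Fin k) : Prop :=
  ∃ idx : Fin k → Fin n, StrictMono idx ∧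
    ∀ a b : Fin k, π (idx a) < π (idx b) ↔ q a < q b

/-- The set `Π = {2431, 2143, 3142, 4132, 1432, 1342, 1324, 1423, 1243}`
(zero-based one-line notation). -/
def Pi17 : List (Fin 4 → Fin 4) :=
  [![1,3,2,0], ![1,0,3,2], ![2,0,3,1], ![3,0,2,1], ![0,3,2,1],
   ![0,2,3,1], ![0,2,1,3], ![0,3,1,2], ![0,1,3,2]]

namespace Stmt17

def Has132 {n : ℕ} (π : Equiv.Perm (Fin n)) : Prop :=
  ∃ i j k : Fin n, i < j ∧ j < k ∧ π i < π k ∧ π k < π j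

theorem strictMono_vec3 {n : ℕ} {a b c : Fin n} (h1 : a < b) (h2 : b < c) :
    StrictMono ![a, b, c] := by
  intro x y hxy
  fin_cases x <;> fin_cases y <;>
    first
      | exact absurd hxy (by decide)
      | exact h1 | exact h2 | exact h1.trans h2

theorem strictMono_vec4 {n : ℕ} {a b c d : Fin n} (h1 : a < b) (h2 : b < c) (h3 : c < d) :
    StrictMono ![a, b, c, d] := by
  intro x y hxy
  fin_cases x <;> fin_cases y <;>
    first
      | exact absurd hxy (by decide)
      | exact h1 | exact h2 | exact h3
      | exact h1.trans h2 | exact h2.trans h3 | exact (h1.trans h2).trans h3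

theorem containsPat_of_chain {n k : ℕ} (π : Equiv.Perm (Fin n)) {p : Fin k → Fin k}
    (hp : Function.Injective p) {idx : Fin k → Fin n} (hmono : StrictMono idx)
    (h : ∀ a b, p a < p b → π (idx a) < π (idx b)) : ContainsPat π p := by
  refine ⟨idx, hmono, fun a b => ⟨fun hw => ?_, h a b⟩⟩
  rcases lt_trichotomy (p a) (p b) with h1 | h1 | h1
  · exact h1
  · exact absurd hw (by rw [hp h1]; exact lt_irrefl _)
  · exact absurd (hw.trans (h b a h1)) (lt_irrefl _)

theorem has132_of_contains {n : ℕ} {π : Equiv.Perm (Fin n)}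
    (h : ContainsPat π (![0,2,1] : Fin 3 → Fin 3)) : Has132 π := by
  obtain ⟨idx, hm, hiff⟩ := h
  exact ⟨idx 0, idx 1, idx 2, hm (by decide), hm (by decide),
    (hiff 0 2).mpr (by decide), (hiff 2 1).mpr (by decide)⟩

theorem contains_of_has132 {n : ℕ} {π : Equiv.Perm (Fin n)}
    (h : Has132 π) : ContainsPat π (![0,2,1] : Fin 3 → Fin 3) := by
  obtain ⟨i, j, k, hij, hjk, h1, h2⟩ := h
  refine containsPat_of_chain π (by decide) (strictMono_vec3 hij hjk) ?_
  intro a b hab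
  fin_cases a <;> fin_cases b <;>
    first
      | exact absurd hab (by decide)
      | exact h1 | exact h2 | exact h1.trans h2

theorem has132_of_mem {n : ℕ} {π : Equiv.Perm (Fin n)} {p : Fin 4 → Fin 4}
    (hp : p ∈ Pi17) (h : ContainsPat π p) : Has132 π := by
  obtain ⟨idx, hm, hiff⟩ := h
  simp only [Pi17, List.mem_cons, List.not_mem_nil, or_false] at hp
  rcases hp with rfl | rfl | rfl | rfl | rfl | rfl | rfl | rfl | rfl
  · exact ⟨idx 0, idx 1, idx 2, hm (by decide), hm (by decide),
      (hiff 0 2).mpr (by decide), (hiff 2 1).mpr (by decide)⟩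
  · exact ⟨idx 0, idx 2, idx 3, hm (by decide), hm (by decide),
      (hiff 0 3).mpr (by decide), (hiff 3 2).mpr (by decide)⟩
  · exact ⟨idx 1, idx 2, idx 3, hm (by decide), hm (by decide),
      (hiff 1 3).mpr (by decide), (hiff 3 2).mpr (by decide)⟩
  · exact ⟨idx 1, idx 2, idx 3, hm (by decide), hm (by decide),
      (hiff 1 3).mpr (by decide), (hiff 3 2).mpr (by decide)⟩
  · exact ⟨idx 0, idx 1, idx 2, hm (by decide), hm (by decide),
      (hiff 0 2).mpr (by decide), (hiff 2 1).mpr (by decide)⟩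
  · exact ⟨idx 0, idx 2, idx 3, hm (by decide), hm (by decide),
      (hiff 0 3).mpr (by decide), (hiff 3 2).mpr (by decide)⟩
  · exact ⟨idx 0, idx 1, idx 2, hm (by decide), hm (by decide),
      (hiff 0 2).mpr (by decide), (hiff 2 1).mpr (by decide)⟩
  · exact ⟨idx 0, idx 1, idx 3, hm (by decide), hm (by decide),
      (hiff 0 3).mpr (by decide), (hiff 3 1).mpr (by decide)⟩
  · exact ⟨idx 0, idx 2, idx 3, hm (by decide), hm (by decide),
      (hiff 0 3).mpr (by decide), (hiff 3 2).mpr (by decide)⟩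

theorem chain4_strictMono {α : Type*} [Preorder α] {t : Fin 4 → α}
    (h0 : t 0 < t 1) (h1 : t 1 < t 2) (h2 : t 2 < t 3) : StrictMono t := by
  intro a b hab
  fin_cases a <;> fin_cases b <;>
    first
      | exact absurd hab (by decide)
      | exact h0 | exact h1 | exact h2
      | exact h0.trans h1 | exact h1.trans h2 | exact (h0.trans h1).trans h2

theorem containsPat4 {n : ℕ} (π : Equiv.Perm (Fin n)) (p s : Fin 4 → Fin 4)
    (hp : Function.Injective p) (hs : ∀ a, s (p a) = a)
    {q1 q2 q3 q4 : Fin n} (ha : q1 < q2) (hb : q2 < q3) (hc : q3 < q4)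
    (t0 : π (![q1,q2,q3,q4] (s 0)) < π (![q1,q2,q3,q4] (s 1)))
    (t1 : π (![q1,q2,q3,q4] (s 1)) < π (![q1,q2,q3,q4] (s 2)))
    (t2 : π (![q1,q2,q3,q4] (s 2)) < π (![q1,q2,q3,q4] (s 3))) :
    ContainsPat π p := by
  refine containsPat_of_chain π hp (strictMono_vec4 ha hb hc) ?_
  intro a b hab
  have hmono : StrictMono (fun r => π (![q1,q2,q3,q4] (s r))) :=
    chain4_strictMono t0 t1 t2
  have h2 := hmono hab
  simp only [hs] at h2
  exact h2

theorem key {n : ℕ} {π : Equiv.Perm (Fin n)} (hav : ∀ p ∈ Pi17, ¬ ContainsPat π p)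
    {i j k : Fin n} (hij : i < j) (hjk : j < k) (h1 : π i < π k) (h2 : π k < π j) :
    (∀ l, ¬ l < i) ∧ (∀ l, ¬ k < l) ∧ (∀ l, i < l → l < k → l ≠ j → π l < π i) := by
  have hik := hij.trans hjk
  have h3 : π i < π j := h1.trans h2
  refine ⟨?_, ?_, ?_⟩
  · intro l hl
    have e1 : π l ≠ π i := fun h => (ne_of_lt hl) (π.injective h)
    have e2 : π l ≠ π k := fun h => (ne_of_lt (hl.trans hik)) (π.injective h)
    have e3 : π l ≠ π j := fun h => (ne_of_lt (hl.trans hij)) (π.injective h)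
    rcases e1.lt_or_gt with c1 | c1
    · exact hav ![0,1,3,2] (by decide)
        (containsPat4 π _ ![0,1,3,2] (by decide) (by decide) hl hij hjk c1 h1 h2)
    rcases e2.lt_or_gt with c2 | c2
    · exact hav ![1,0,3,2] (by decide)
        (containsPat4 π _ ![1,0,3,2] (by decide) (by decide) hl hij hjk c1 c2 h2)
    rcases e3.lt_or_gt with c3 | c3
    · exact hav ![2,0,3,1] (by decide)
        (containsPat4 π _ ![1,3,0,2] (by decide) (by decide) hl hij hjk h1 c2 c3)
    · exact hav ![3,0,2,1] (by decide)
        (containsPat4 π _ ![1,3,2,0] (by decide) (by decide) hl hij hjk h1 h2 c3)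
  · intro l hl
    have e1 : π l ≠ π i := fun h => (ne_of_lt (hik.trans hl)) (π.injective h).symm
    have e2 : π l ≠ π k := fun h => (ne_of_lt hl) (π.injective h).symm
    have e3 : π l ≠ π j := fun h => (ne_of_lt (hjk.trans hl)) (π.injective h).symm
    rcases e1.lt_or_gt with c1 | c1
    · exact hav ![1,3,2,0] (by decide)
        (containsPat4 π _ ![3,0,2,1] (by decide) (by decide) hij hjk hl c1 h1 h2)
    rcases e2.lt_or_gt with c2 | c2
    · exact hav ![0,3,2,1] (by decide)
        (containsPat4 π _ ![0,3,2,1] (by decide) (by decide) hij hjk hl c1 c2 h2)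
    rcases e3.lt_or_gt with c3 | c3
    · exact hav ![0,3,1,2] (by decide)
        (containsPat4 π _ ![0,2,3,1] (by decide) (by decide) hij hjk hl h1 c2 c3)
    · exact hav ![0,2,1,3] (by decide)
        (containsPat4 π _ ![0,2,1,3] (by decide) (by decide) hij hjk hl h1 h2 c3)
  · intro l hil hlk hlj
    have e1 : π l ≠ π i := fun h => (ne_of_lt hil) (π.injective h).symm
    have e2 : π l ≠ π k := fun h => (ne_of_lt hlk) (π.injective h)
    have e3 : π l ≠ π j := fun h => hlj (π.injective h)
    rcases e1.lt_or_gt with c1 | c1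
    · exact c1
    exfalso
    rcases hlj.lt_or_gt with hlj' | hlj'
    · -- i < l < j, positions (i, l, j, k)
      rcases e2.lt_or_gt with c2 | c2
      · exact hav ![0,1,3,2] (by decide)
          (containsPat4 π _ ![0,1,3,2] (by decide) (by decide) hil hlj' hjk c1 c2 h2)
      rcases e3.lt_or_gt with c3 | c3
      · exact hav ![0,2,3,1] (by decide)
          (containsPat4 π _ ![0,3,1,2] (by decide) (by decide) hil hlj' hjk h1 c2 c3)
      · exact hav ![0,3,2,1] (by decide)
          (containsPat4 π _ ![0,3,2,1] (by decide) (by decide) hil hlj' hjk h1 h2 c3)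
    · -- j < l < k, positions (i, j, l, k)
      rcases e2.lt_or_gt with c2 | c2
      · exact hav ![0,3,1,2] (by decide)
          (containsPat4 π _ ![0,2,3,1] (by decide) (by decide) hij hlj' hlk c1 c2 h2)
      rcases e3.lt_or_gt with c3 | c3
      · exact hav ![0,3,2,1] (by decide)
          (containsPat4 π _ ![0,3,2,1] (by decide) (by decide) hij hlj' hlk h1 c2 c3)
      · exact hav ![0,2,3,1] (by decide)
          (containsPat4 π _ ![0,3,1,2] (by decide) (by decide) hij hlj' hlk h1 h2 c3)

theorem structure_of {n : ℕ} (hn : 4 ≤ n) {π : Equiv.Perm (Fin n)}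
    (hav : ∀ p ∈ Pi17, ¬ ContainsPat π p) (h : Has132 π) :
    (π ⟨0, Nat.lt_of_lt_of_le (by decide) hn⟩ : ℕ) = n - 3 ∧ (π ⟨1, Nat.lt_of_lt_of_le (by decide) hn⟩ : ℕ) = n - 1 ∧
      (π ⟨n - 1, Nat.sub_lt (Nat.lt_of_lt_of_le (by decide) hn) Nat.one_pos⟩ : ℕ) = n - 2 ∧
      (∀ a b c : Fin n, 2 ≤ (a : ℕ) → a < b → b < c → (c : ℕ) ≤ n - 2 →
        ¬ (π a < π c ∧ π c < π b)) := by
  obtain ⟨i, j, k, hij, hjk, h1, h2⟩ := h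
  obtain ⟨K1, K2, K3⟩ := key hav hij hjk h1 h2
  have hik := hij.trans hjk
  have h3 : π i < π j := h1.trans h2
  have hi0 : (i : ℕ) = 0 := by
    by_contra hne
    exact K1 ⟨0, Nat.lt_of_lt_of_le (by decide) hn⟩ (by rw [Fin.lt_def]; exact Nat.pos_of_ne_zero hne)
  have hkn : (k : ℕ) = n - 1 := by
    have hh := K2 ⟨n - 1, Nat.sub_lt (Nat.lt_of_lt_of_le (by decide) hn) Nat.one_pos⟩
    rw [Fin.lt_def] at hh
    simp only [not_lt] at hh
    have := k.is_lt
    omega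
  have hmid : ∀ m : Fin n, m ≠ i → m ≠ j → m ≠ k → π m < π i := by
    intro m mi mj mk
    exact K3 m ((not_lt.mp (K1 m)).lt_of_ne mi.symm) ((not_lt.mp (K2 m)).lt_of_ne mk) mj
  have hmaxj : ∀ m : Fin n, π m ≤ π j := by
    intro m
    rcases eq_or_ne m j with rfl | mj
    · exact le_refl _
    rcases eq_or_ne m i with rfl | mi
    · exact h3.le
    rcases eq_or_ne m k with rfl | mk
    · exact h2.le
    exact ((hmid m mi mj mk).trans h3).le
  have hvj : (π j : ℕ) = n - 1 := by
    have hh := hmaxj (π.symm ⟨n - 1, Nat.sub_lt (Nat.lt_of_lt_of_le (by decide) hn) Nat.one_pos⟩)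
    rw [Equiv.apply_symm_apply] at hh
    rw [Fin.le_def] at hh
    have := (π j).is_lt
    simp only at hh
    omega
  have hvk : (π k : ℕ) = n - 2 := by
    obtain ⟨m, hpmv⟩ : ∃ m : Fin n, (π m : ℕ) = n - 2 :=
      ⟨π.symm ⟨n - 2, by omega⟩, by rw [Equiv.apply_symm_apply]⟩
    have mj : m ≠ j := fun e => by rw [e, hvj] at hpmv; omega
    have hle : π m ≤ π k := by
      rcases eq_or_ne m k with rfl | mk
      · exact le_refl _
      rcases eq_or_ne m i with rfl | mi
      · exact h1.le
      exact ((hmid m mi mj mk).trans h1).le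
    rw [Fin.le_def, hpmv] at hle
    have hlt := h2
    rw [Fin.lt_def, hvj] at hlt
    omega
  have hvi : (π i : ℕ) = n - 3 := by
    obtain ⟨m, hpmv⟩ : ∃ m : Fin n, (π m : ℕ) = n - 3 :=
      ⟨π.symm ⟨n - 3, by omega⟩, by rw [Equiv.apply_symm_apply]⟩
    have hup : (π i : ℕ) ≤ n - 3 := by
      have := h1
      rw [Fin.lt_def, hvk] at this
      omega
    rcases eq_or_ne m i with rfl | mi
    · omega
    · have mj : m ≠ j := fun e => by rw [e, hvj] at hpmv; omega
      have mk : m ≠ k := fun e => by rw [e, hvk] at hpmv; omega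
      have := hmid m mi mj mk
      rw [Fin.lt_def, hpmv] at this
      omega
  have hj1 : (j : ℕ) = 1 := by
    have hj_pos : 0 < (j : ℕ) := by
      have := hij
      rw [Fin.lt_def] at this
      omega
    by_contra hne
    have hj2 : 2 ≤ (j : ℕ) := by omega
    have hil : i < (⟨1, Nat.lt_of_lt_of_le (by decide) hn⟩ : Fin n) := by rw [Fin.lt_def]; simp [hi0]
    have hlk : (⟨1, Nat.lt_of_lt_of_le (by decide) hn⟩ : Fin n) < k := by rw [Fin.lt_def]; simp [hkn]; omega
    have hlj : (⟨1, Nat.lt_of_lt_of_le (by decide) hn⟩ : Fin n) ≠ j := fun e => by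
      have := congrArg Fin.val e
      simp at this
      omega
    have hpl : π ⟨1, Nat.lt_of_lt_of_le (by decide) hn⟩ < π i := K3 _ hil hlk hlj
    have hlj' : (⟨1, Nat.lt_of_lt_of_le (by decide) hn⟩ : Fin n) < j := by rw [Fin.lt_def]; simp; omega
    obtain ⟨K1', -, -⟩ := key hav hlj' hjk (hpl.trans h1) h2
    exact K1' ⟨0, Nat.lt_of_lt_of_le (by decide) hn⟩ (by rw [Fin.lt_def]; simp)
  have hi : i = ⟨0, Nat.lt_of_lt_of_le (by decide) hn⟩ := Fin.ext hi0
  have hj : j = ⟨1, Nat.lt_of_lt_of_le (by decide) hn⟩ := Fin.ext hj1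
  have hk : k = ⟨n - 1, Nat.sub_lt (Nat.lt_of_lt_of_le (by decide) hn) Nat.one_pos⟩ := Fin.ext hkn
  refine ⟨by rw [← hi]; exact hvi, by rw [← hj]; exact hvj, by rw [← hk]; exact hvk, ?_⟩
  rintro a b c ha2 hab hbc hc2 ⟨w1, w2⟩
  obtain ⟨K1'', -, -⟩ := key hav hab hbc w1 w2
  exact K1'' ⟨0, Nat.lt_of_lt_of_le (by decide) hn⟩ (by rw [Fin.lt_def]; simp; omega)

set_option maxHeartbeats 1000000 in
theorem only132 {n : ℕ} (hn : 4 ≤ n) {π : Equiv.Perm (Fin n)}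
    (h0 : (π ⟨0, Nat.lt_of_lt_of_le (by decide) hn⟩ : ℕ) = n - 3) (h1 : (π ⟨1, Nat.lt_of_lt_of_le (by decide) hn⟩ : ℕ) = n - 1)
    (h2 : (π ⟨n - 1, Nat.sub_lt (Nat.lt_of_lt_of_le (by decide) hn) Nat.one_pos⟩ : ℕ) = n - 2)
    (hm : ∀ a b c : Fin n, 2 ≤ (a : ℕ) → a < b → b < c → (c : ℕ) ≤ n - 2 →
        ¬ (π a < π c ∧ π c < π b))
    {i j k : Fin n} (hij : i < j) (hjk : j < k) (ha : π i < π k) (hb : π k < π j) :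
    (i : ℕ) = 0 ∧ (j : ℕ) = 1 ∧ (k : ℕ) = n - 1 := by
  have hijv := hij; rw [Fin.lt_def] at hijv
  have hjkv := hjk; rw [Fin.lt_def] at hjkv
  rcases eq_or_ne (k : ℕ) (n - 1) with hk | hk
  · have hkk : k = ⟨n - 1, Nat.sub_lt (Nat.lt_of_lt_of_le (by decide) hn) Nat.one_pos⟩ := Fin.ext hk
    have hvk : (π k : ℕ) = n - 2 := by rw [hkk]; exact h2
    have hvj : (π j : ℕ) = n - 1 := by
      have hbv := hb; rw [Fin.lt_def, hvk] at hbv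
      have := (π j).is_lt
      omega
    have hjj : j = ⟨1, Nat.lt_of_lt_of_le (by decide) hn⟩ := π.injective (Fin.ext (hvj.trans h1.symm))
    have hj1 : (j : ℕ) = 1 := by rw [hjj]
    exact ⟨by omega, hj1, hk⟩
  · exfalso
    have hk2 : (k : ℕ) ≤ n - 2 := by have := k.is_lt; omega
    rcases Nat.lt_or_ge (i : ℕ) 2 with hi2 | hi2
    · have : (i : ℕ) = 0 ∨ (i : ℕ) = 1 := by omega
      rcases this with hi | hi
      · have hvi : (π i : ℕ) = n - 3 := by rw [show i = ⟨0, Nat.lt_of_lt_of_le (by decide) hn⟩ from Fin.ext hi]; exact h0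
        have hav := ha; rw [Fin.lt_def, hvi] at hav
        have := (π k).is_lt
        have : (π k : ℕ) = n - 2 ∨ (π k : ℕ) = n - 1 := by omega
        rcases this with hvk | hvk
        · have : k = ⟨n - 1, Nat.sub_lt (Nat.lt_of_lt_of_le (by decide) hn) Nat.one_pos⟩ := π.injective (Fin.ext (hvk.trans h2.symm))
          rw [this] at hk
          simp at hk
        · have : k = ⟨1, Nat.lt_of_lt_of_le (by decide) hn⟩ := π.injective (Fin.ext (hvk.trans h1.symm))
          have : (k : ℕ) = 1 := by rw [this]
          omega
      · have hvi : (π i : ℕ) = n - 1 := by rw [show i = ⟨1, Nat.lt_of_lt_of_le (by decide) hn⟩ from Fin.ext hi]; exact h1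
        have hav := ha; rw [Fin.lt_def, hvi] at hav
        have := (π k).is_lt
        omega
    · exact hm i j k hi2 hij hjk hk2 ⟨ha, hb⟩

set_option maxHeartbeats 1000000 in
theorem avoid_of_special {n : ℕ} (hn : 4 ≤ n) {π : Equiv.Perm (Fin n)}
    (h0 : (π ⟨0, Nat.lt_of_lt_of_le (by decide) hn⟩ : ℕ) = n - 3) (h1 : (π ⟨1, Nat.lt_of_lt_of_le (by decide) hn⟩ : ℕ) = n - 1)
    (h2 : (π ⟨n - 1, Nat.sub_lt (Nat.lt_of_lt_of_le (by decide) hn) Nat.one_pos⟩ : ℕ) = n - 2)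
    (hm : ∀ a b c : Fin n, 2 ≤ (a : ℕ) → a < b → b < c → (c : ℕ) ≤ n - 2 →
        ¬ (π a < π c ∧ π c < π b)) :
    ∀ p ∈ Pi17, ¬ ContainsPat π p := by
  have hval : ∀ l : Fin n, (l : ℕ) ≠ 0 → (l : ℕ) ≠ 1 → (l : ℕ) ≠ n - 1 →
      (π l : ℕ) < n - 3 := by
    intro l hl0 hl1 hln
    have b1 : π l ≠ π ⟨0, Nat.lt_of_lt_of_le (by decide) hn⟩ := fun e => hl0 (congrArg Fin.val (π.injective e))
    have b2 : π l ≠ π ⟨1, Nat.lt_of_lt_of_le (by decide) hn⟩ := fun e => hl1 (congrArg Fin.val (π.injective e))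
    have b3 : π l ≠ π ⟨n - 1, Nat.sub_lt (Nat.lt_of_lt_of_le (by decide) hn) Nat.one_pos⟩ := fun e => hln (congrArg Fin.val (π.injective e))
    have c1 : (π l : ℕ) ≠ n - 3 := fun e => b1 (Fin.ext (e.trans h0.symm))
    have c2 : (π l : ℕ) ≠ n - 1 := fun e => b2 (Fin.ext (e.trans h1.symm))
    have c3 : (π l : ℕ) ≠ n - 2 := fun e => b3 (Fin.ext (e.trans h2.symm))
    have := (π l).is_lt
    omega
  intro p hp hcon
  obtain ⟨idx, hmono, hiff⟩ := hcon
  have m01 := hmono (show (0 : Fin 4) < 1 by decide)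
  have m12 := hmono (show (1 : Fin 4) < 2 by decide)
  have m23 := hmono (show (2 : Fin 4) < 3 by decide)
  have m01v := m01; rw [Fin.lt_def] at m01v
  have m12v := m12; rw [Fin.lt_def] at m12v
  have m23v := m23; rw [Fin.lt_def] at m23v
  have i3lt := (idx 3).is_lt
  simp only [Pi17, List.mem_cons, List.not_mem_nil, or_false] at hp
  rcases hp with rfl | rfl | rfl | rfl | rfl | rfl | rfl | rfl | rfl
  · obtain ⟨e0, e1, e2⟩ :=
      only132 hn h0 h1 h2 hm m01 m12 ((hiff 0 2).mpr (by decide)) ((hiff 2 1).mpr (by decide))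
    omega
  · obtain ⟨e0, e1, e2⟩ :=
      only132 hn h0 h1 h2 hm (m01.trans m12) m23 ((hiff 0 3).mpr (by decide)) ((hiff 3 2).mpr (by decide))
    omega
  · obtain ⟨e0, e1, e2⟩ :=
      only132 hn h0 h1 h2 hm m12 m23 ((hiff 1 3).mpr (by decide)) ((hiff 3 2).mpr (by decide))
    omega
  · obtain ⟨e0, e1, e2⟩ :=
      only132 hn h0 h1 h2 hm m12 m23 ((hiff 1 3).mpr (by decide)) ((hiff 3 2).mpr (by decide))
    omega
  · obtain ⟨e0, e1, e2⟩ :=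
      only132 hn h0 h1 h2 hm m01 m12 ((hiff 0 2).mpr (by decide)) ((hiff 2 1).mpr (by decide))
    omega
  · obtain ⟨e0, e1, e2⟩ :=
      only132 hn h0 h1 h2 hm m01 (m12.trans m23) ((hiff 0 3).mpr (by decide)) ((hiff 3 1).mpr (by decide))
    have hv := hval (idx 2) (by omega) (by omega) (by omega)
    have v0 : (π (idx 0) : ℕ) = n - 3 := by
      rw [show idx 0 = ⟨0, Nat.lt_of_lt_of_le (by decide) hn⟩ from Fin.ext e0]; exact h0
    have hlt := (hiff 0 2).mpr (by decide)
    rw [Fin.lt_def, v0] at hlt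
    omega
  · obtain ⟨e0, e1, e2⟩ :=
      only132 hn h0 h1 h2 hm m01 m12 ((hiff 0 2).mpr (by decide)) ((hiff 2 1).mpr (by decide))
    omega
  · obtain ⟨e0, e1, e2⟩ :=
      only132 hn h0 h1 h2 hm m01 (m12.trans m23) ((hiff 0 3).mpr (by decide)) ((hiff 3 1).mpr (by decide))
    have hv := hval (idx 2) (by omega) (by omega) (by omega)
    have v0 : (π (idx 0) : ℕ) = n - 3 := by
      rw [show idx 0 = ⟨0, Nat.lt_of_lt_of_le (by decide) hn⟩ from Fin.ext e0]; exact h0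
    have hlt := (hiff 0 2).mpr (by decide)
    rw [Fin.lt_def, v0] at hlt
    omega
  · obtain ⟨e0, e1, e2⟩ :=
      only132 hn h0 h1 h2 hm (m01.trans m12) m23 ((hiff 0 3).mpr (by decide)) ((hiff 3 2).mpr (by decide))
    omega

instance {m : ℕ} (π : Equiv.Perm (Fin m)) : Decidable (Has132 π) := by
  unfold Has132; infer_instance

/-- Glue `β` (top values, left) , max, `γ` (bottom values, right). -/
def glueFun (m a : ℕ) (ha : a ≤ m) (β : Equiv.Perm (Fin a)) (γ : Equiv.Perm (Fin (m - a)))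
    (x : Fin (m + 1)) : Fin (m + 1) :=
  if h : (x : ℕ) < a then ⟨(β ⟨x, h⟩ : ℕ) + (m - a), by have := (β ⟨x, h⟩).is_lt; omega⟩
  else if h2 : (x : ℕ) = a then ⟨m, by omega⟩
  else ⟨(γ ⟨(x : ℕ) - a - 1, by have := x.is_lt; omega⟩ : ℕ),
    by have := (γ ⟨(x : ℕ) - a - 1, by have := x.is_lt; omega⟩).is_lt; omega⟩

theorem glueFun_lt {m a : ℕ} (ha : a ≤ m) (β : Equiv.Perm (Fin a)) (γ : Equiv.Perm (Fin (m - a)))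
    {x : Fin (m + 1)} (hx : (x : ℕ) < a) :
    (glueFun m a ha β γ x : ℕ) = (β ⟨x, hx⟩ : ℕ) + (m - a) := by
  simp [glueFun, hx]

theorem glueFun_eq {m a : ℕ} (ha : a ≤ m) (β : Equiv.Perm (Fin a)) (γ : Equiv.Perm (Fin (m - a)))
    {x : Fin (m + 1)} (hx : (x : ℕ) = a) :
    (glueFun m a ha β γ x : ℕ) = m := by
  have h1 : ¬ (x : ℕ) < a := by omega
  simp [glueFun, h1, hx]

theorem glueFun_gt {m a : ℕ} (ha : a ≤ m) (β : Equiv.Perm (Fin a)) (γ : Equiv.Perm (Fin (m - a)))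
    {x : Fin (m + 1)} (hx : a < (x : ℕ)) :
    (glueFun m a ha β γ x : ℕ) = (γ ⟨(x : ℕ) - a - 1, by have := x.is_lt; omega⟩ : ℕ) := by
  have h1 : ¬ (x : ℕ) < a := by omega
  have h2 : ¬ (x : ℕ) = a := by omega
  simp [glueFun, h1, h2]

theorem glueFun_inj {m a : ℕ} (ha : a ≤ m) (β : Equiv.Perm (Fin a))
    (γ : Equiv.Perm (Fin (m - a))) : Function.Injective (glueFun m a ha β γ) := by
  intro x y hxy
  have hv := congrArg Fin.val hxy
  apply Fin.ext
  rcases lt_trichotomy (x : ℕ) a with hx | hx | hx <;>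
    rcases lt_trichotomy (y : ℕ) a with hy | hy | hy
  · rw [glueFun_lt ha β γ hx, glueFun_lt ha β γ hy] at hv
    have : β ⟨x, hx⟩ = β ⟨y, hy⟩ := Fin.ext (by omega)
    have := congrArg Fin.val (β.injective this)
    simpa using this
  · rw [glueFun_lt ha β γ hx, glueFun_eq ha β γ hy] at hv
    have := (β ⟨x, hx⟩).is_lt
    omega
  · rw [glueFun_lt ha β γ hx, glueFun_gt ha β γ hy] at hv
    have := (γ ⟨(y : ℕ) - a - 1, by have := y.is_lt; omega⟩).is_lt
    omega
  · rw [glueFun_eq ha β γ hx, glueFun_lt ha β γ hy] at hv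
    have := (β ⟨y, hy⟩).is_lt
    omega
  · omega
  · rw [glueFun_eq ha β γ hx, glueFun_gt ha β γ hy] at hv
    have := (γ ⟨(y : ℕ) - a - 1, by have := y.is_lt; omega⟩).is_lt
    omega
  · rw [glueFun_gt ha β γ hx, glueFun_lt ha β γ hy] at hv
    have := (γ ⟨(x : ℕ) - a - 1, by have := x.is_lt; omega⟩).is_lt
    omega
  · rw [glueFun_gt ha β γ hx, glueFun_eq ha β γ hy] at hv
    have := (γ ⟨(x : ℕ) - a - 1, by have := x.is_lt; omega⟩).is_lt
    omega
  · rw [glueFun_gt ha β γ hx, glueFun_gt ha β γ hy] at hv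
    have : γ ⟨(x : ℕ) - a - 1, by have := x.is_lt; omega⟩ =
        γ ⟨(y : ℕ) - a - 1, by have := y.is_lt; omega⟩ := Fin.ext hv
    have := congrArg Fin.val (γ.injective this)
    simp only at this
    omega

noncomputable def glue (m a : ℕ) (ha : a ≤ m) (β : Equiv.Perm (Fin a))
    (γ : Equiv.Perm (Fin (m - a))) : Equiv.Perm (Fin (m + 1)) :=
  Equiv.ofBijective _ (Finite.injective_iff_bijective.mp (glueFun_inj ha β γ))

theorem glue_apply {m a : ℕ} (ha : a ≤ m) (β : Equiv.Perm (Fin a))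
    (γ : Equiv.Perm (Fin (m - a))) (x : Fin (m + 1)) :
    glue m a ha β γ x = glueFun m a ha β γ x := rfl

theorem glue_avoid {m a : ℕ} (ha : a ≤ m) {β : Equiv.Perm (Fin a)}
    {γ : Equiv.Perm (Fin (m - a))} (hβ : ¬ Has132 β) (hγ : ¬ Has132 γ) :
    ¬ Has132 (glue m a ha β γ) := by
  rintro ⟨i, j, k, hij, hjk, h1, h2⟩
  rw [Fin.lt_def] at hij hjk h1 h2
  rw [glue_apply, glue_apply] at h1 h2
  have hik : (i : ℕ) < (k : ℕ) := by omega
  rcases lt_trichotomy (j : ℕ) a with hj | hj | hj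
  · have hi : (i : ℕ) < a := by omega
    rcases lt_trichotomy (k : ℕ) a with hk | hk | hk
    · refine hβ ⟨⟨i, hi⟩, ⟨j, hj⟩, ⟨k, hk⟩, by rw [Fin.lt_def]; exact hij,
        by rw [Fin.lt_def]; exact hjk, ?_, ?_⟩
      · rw [glueFun_lt ha β γ hi, glueFun_lt ha β γ hk] at h1
        rw [Fin.lt_def]; omega
      · rw [glueFun_lt ha β γ hj, glueFun_lt ha β γ hk] at h2
        rw [Fin.lt_def]; omega
    · rw [glueFun_eq ha β γ hk, glueFun_lt ha β γ hj] at h2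
      have := (β ⟨j, hj⟩).is_lt
      omega
    · rw [glueFun_gt ha β γ hk, glueFun_lt ha β γ hi] at h1
      have := (γ ⟨(k : ℕ) - a - 1, by have := k.is_lt; omega⟩).is_lt
      omega
  · have hi : (i : ℕ) < a := by omega
    have hk : a < (k : ℕ) := by omega
    rw [glueFun_lt ha β γ hi, glueFun_gt ha β γ hk] at h1
    have := (γ ⟨(k : ℕ) - a - 1, by have := k.is_lt; omega⟩).is_lt
    omega
  · have hk : a < (k : ℕ) := by omega
    rcases lt_trichotomy (i : ℕ) a with hi | hi | hi
    · rw [glueFun_lt ha β γ hi, glueFun_gt ha β γ hk] at h1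
      have := (γ ⟨(k : ℕ) - a - 1, by have := k.is_lt; omega⟩).is_lt
      omega
    · rw [glueFun_eq ha β γ hi, glueFun_gt ha β γ hk] at h1
      have := (γ ⟨(k : ℕ) - a - 1, by have := k.is_lt; omega⟩).is_lt
      omega
    · refine hγ ⟨⟨(i : ℕ) - a - 1, by have := i.is_lt; omega⟩,
        ⟨(j : ℕ) - a - 1, by have := j.is_lt; omega⟩,
        ⟨(k : ℕ) - a - 1, by have := k.is_lt; omega⟩, by rw [Fin.lt_def]; simp; omega,
        by rw [Fin.lt_def]; simp; omega, ?_, ?_⟩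
      · rw [glueFun_gt ha β γ hi, glueFun_gt ha β γ hk] at h1
        rw [Fin.lt_def]; exact h1
      · rw [glueFun_gt ha β γ hj, glueFun_gt ha β γ hk] at h2
        rw [Fin.lt_def]; exact h2

theorem exists_perm_of_inj {N : ℕ} (f : Fin N → Fin N) (hf : Function.Injective f) :
    ∃ σ : Equiv.Perm (Fin N), ∀ x, σ x = f x :=
  ⟨Equiv.ofBijective f (Finite.injective_iff_bijective.mp hf), fun _ => rfl⟩

theorem unglue {m : ℕ} {π : Equiv.Perm (Fin (m + 1))} (hπ : ¬ Has132 π)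
    (b : Fin (m + 1)) (hb : π b = ⟨m, by omega⟩) :
    ∃ (β : Equiv.Perm (Fin (b : ℕ))) (γ : Equiv.Perm (Fin (m - (b : ℕ)))),
      ¬ Has132 β ∧ ¬ Has132 γ ∧
        glue m (b : ℕ) (Nat.lt_succ_iff.mp b.is_lt) β γ = π := by
  have hble : (b : ℕ) ≤ m := Nat.lt_succ_iff.mp b.is_lt
  have hne : ∀ x : Fin (m + 1), x ≠ b → (π x : ℕ) < m := by
    intro x hx
    have h1 : π x ≠ π b := fun e => hx (π.injective e)
    rw [hb] at h1
    have h2 : (π x : ℕ) ≠ m := fun e => h1 (Fin.ext e)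
    have := (π x).is_lt
    omega
  have S1 : ∀ x y : Fin (m + 1), (x : ℕ) < (b : ℕ) → (b : ℕ) < (y : ℕ) → π y < π x := by
    intro x y hx hy
    have hxyne : π x ≠ π y := fun e => by
      have := congrArg Fin.val (π.injective e); omega
    rcases hxyne.lt_or_gt with h | h
    · exfalso
      have hyb : y ≠ b := fun e => by rw [e] at hy; omega
      refine hπ ⟨x, b, y, by rw [Fin.lt_def]; omega, by rw [Fin.lt_def]; omega, h, ?_⟩
      rw [hb, Fin.lt_def]
      exact hne y hyb
    · exact h
  have S2 : ∀ y : Fin (m + 1), (b : ℕ) < (y : ℕ) → (π y : ℕ) < m - (b : ℕ) := by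
    intro y hy
    have hcard := Finset.card_le_card_of_injOn (f := fun x => π x)
      (s := Finset.Iic b) (t := Finset.Ioi (π y)) ?_ ?_
    · rw [Fin.card_Iic, Fin.card_Ioi] at hcard
      have := y.is_lt
      omega
    · intro x hx
      rw [Finset.mem_coe, Finset.mem_Iic] at hx
      rw [Finset.mem_coe, Finset.mem_Ioi]
      show π y < π x
      rcases eq_or_ne x b with he | hxb
      · rw [he, hb, Fin.lt_def]
        exact hne y (fun e => by rw [e] at hy; omega)
      · have hxv : (x : ℕ) < (b : ℕ) := by
          rw [Fin.le_def] at hx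
          have : (x : ℕ) ≠ (b : ℕ) := fun e => hxb (Fin.ext e)
          omega
        exact S1 x y hxv hy
    · intro u _ v _ he
      exact π.injective he
  have S3 : ∀ x : Fin (m + 1), (x : ℕ) < (b : ℕ) → m - (b : ℕ) ≤ (π x : ℕ) := by
    intro x hx
    have hcard := Finset.card_le_card_of_injOn (f := fun y => π y)
      (s := Finset.Ioi b) (t := Finset.Iio (π x)) ?_ ?_
    · rw [Fin.card_Ioi, Fin.card_Iio] at hcard
      omega
    · intro y hy
      rw [Finset.mem_coe, Finset.mem_Ioi] at hy
      rw [Finset.mem_coe, Finset.mem_Iio]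
      show π y < π x
      exact S1 x y hx hy
    · intro u _ v _ he
      exact π.injective he
  have hβb : ∀ t : Fin (b : ℕ),
      (π ⟨(t : ℕ), by have := t.is_lt; omega⟩ : ℕ) - (m - (b : ℕ)) < (b : ℕ) := by
    intro t
    have ht := t.is_lt
    have h2 : (π ⟨(t : ℕ), by have := t.is_lt; omega⟩ : ℕ) < m := by
      apply hne
      intro e
      have hv := congrArg Fin.val e
      simp only at hv
      omega
    omega
  obtain ⟨β, hβeq⟩ := exists_perm_of_inj
    (fun t : Fin (b : ℕ) =>
      (⟨(π ⟨(t : ℕ), by have := t.is_lt; omega⟩ : ℕ) - (m - (b : ℕ)), hβb t⟩ : Fin (b : ℕ)))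
    (by
      intro s t hst
      have hv := congrArg Fin.val hst
      simp only at hv
      have h1 := S3 ⟨(s : ℕ), by have := s.is_lt; omega⟩ s.is_lt
      have h2 := S3 ⟨(t : ℕ), by have := t.is_lt; omega⟩ t.is_lt
      have he : π ⟨(s : ℕ), by have := s.is_lt; omega⟩ =
          π ⟨(t : ℕ), by have := t.is_lt; omega⟩ := Fin.ext (by omega)
      have := congrArg Fin.val (π.injective he)
      simp only at this
      exact Fin.ext this)
  have hγb : ∀ t : Fin (m - (b : ℕ)),
      (π ⟨(b : ℕ) + 1 + (t : ℕ), by have := t.is_lt; omega⟩ : ℕ) < m - (b : ℕ) := by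
    intro t
    exact S2 _ (show (b : ℕ) < (b : ℕ) + 1 + (t : ℕ) by omega)
  obtain ⟨γ, hγeq⟩ := exists_perm_of_inj
    (fun t : Fin (m - (b : ℕ)) =>
      (⟨(π ⟨(b : ℕ) + 1 + (t : ℕ), by have := t.is_lt; omega⟩ : ℕ), hγb t⟩ : Fin (m - (b : ℕ))))
    (by
      intro s t hst
      have hv := congrArg Fin.val hst
      simp only at hv
      have he : π ⟨(b : ℕ) + 1 + (s : ℕ), by have := s.is_lt; omega⟩ =
          π ⟨(b : ℕ) + 1 + (t : ℕ), by have := t.is_lt; omega⟩ := Fin.ext (by omega)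
      have := congrArg Fin.val (π.injective he)
      simp only at this
      exact Fin.ext (by omega))
  have hβval : ∀ t : Fin (b : ℕ),
      (β t : ℕ) = (π ⟨(t : ℕ), by have := t.is_lt; omega⟩ : ℕ) - (m - (b : ℕ)) := by
    intro t
    have := congrArg Fin.val (hβeq t)
    simpa using this
  have hγval : ∀ t : Fin (m - (b : ℕ)),
      (γ t : ℕ) = (π ⟨(b : ℕ) + 1 + (t : ℕ), by have := t.is_lt; omega⟩ : ℕ) := by
    intro t
    have := congrArg Fin.val (hγeq t)
    simpa using this
  refine ⟨β, γ, ?_, ?_, ?_⟩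
  · rintro ⟨i, j, k, hij, hjk, h1, h2⟩
    rw [Fin.lt_def] at hij hjk h1 h2
    rw [hβval i, hβval k] at h1
    rw [hβval k, hβval j] at h2
    have bi := S3 ⟨(i : ℕ), by have := i.is_lt; omega⟩ i.is_lt
    have bj := S3 ⟨(j : ℕ), by have := j.is_lt; omega⟩ j.is_lt
    have bk := S3 ⟨(k : ℕ), by have := k.is_lt; omega⟩ k.is_lt
    refine hπ ⟨⟨(i : ℕ), by have := i.is_lt; omega⟩, ⟨(j : ℕ), by have := j.is_lt; omega⟩,
      ⟨(k : ℕ), by have := k.is_lt; omega⟩, by rw [Fin.lt_def]; exact hij,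
      by rw [Fin.lt_def]; exact hjk, by rw [Fin.lt_def]; omega, by rw [Fin.lt_def]; omega⟩
  · rintro ⟨i, j, k, hij, hjk, h1, h2⟩
    rw [Fin.lt_def] at hij hjk h1 h2
    rw [hγval i, hγval k] at h1
    rw [hγval k, hγval j] at h2
    refine hπ ⟨⟨(b : ℕ) + 1 + (i : ℕ), by have := i.is_lt; omega⟩,
      ⟨(b : ℕ) + 1 + (j : ℕ), by have := j.is_lt; omega⟩,
      ⟨(b : ℕ) + 1 + (k : ℕ), by have := k.is_lt; omega⟩, by rw [Fin.lt_def]; simp; omega,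
      by rw [Fin.lt_def]; simp; omega, by rw [Fin.lt_def]; omega, by rw [Fin.lt_def]; omega⟩
  · apply Equiv.ext
    intro x
    apply Fin.ext
    rw [glue_apply]
    rcases lt_trichotomy (x : ℕ) (b : ℕ) with hx | hx | hx
    · rw [glueFun_lt hble β γ hx]
      rw [hβval ⟨(x : ℕ), hx⟩]
      have h3 := S3 x hx
      have hxm := hne x (fun e => by rw [e] at hx; omega)
      have he : π ⟨((⟨(x : ℕ), hx⟩ : Fin (b : ℕ)) : ℕ), by
          have := (⟨(x : ℕ), hx⟩ : Fin (b : ℕ)).is_lt; omega⟩ = π x :=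
        congrArg π (Fin.ext rfl)
      rw [he]
      omega
    · rw [glueFun_eq hble β γ hx]
      have : x = b := Fin.ext hx
      rw [this, hb]
    · rw [glueFun_gt hble β γ hx]
      rw [hγval ⟨(x : ℕ) - (b : ℕ) - 1, by have := x.is_lt; omega⟩]
      have he : π ⟨(b : ℕ) + 1 + ((⟨(x : ℕ) - (b : ℕ) - 1, by have := x.is_lt; omega⟩ :
          Fin (m - (b : ℕ))) : ℕ), by
          have := (⟨(x : ℕ) - (b : ℕ) - 1, by have := x.is_lt; omega⟩ :
            Fin (m - (b : ℕ))).is_lt; omega⟩ = π x :=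
        congrArg π (Fin.ext (by simp; omega))
      rw [he]

theorem nat_card_sigma {N : ℕ} (F : Fin N → Type*) [∀ i, Finite (F i)] :
    Nat.card (Σ i, F i) = ∑ i, Nat.card (F i) := by
  letI : ∀ i, Fintype (F i) := fun i => Fintype.ofFinite _
  simp [Nat.card_eq_fintype_card]

noncomputable def glueMap (m : ℕ) (b : Fin (m + 1))
    (p : {β : Equiv.Perm (Fin (b : ℕ)) // ¬ Has132 β} ×
      {γ : Equiv.Perm (Fin (m - (b : ℕ))) // ¬ Has132 γ}) :
    {π : Equiv.Perm (Fin (m + 1)) // ¬ Has132 π ∧ π.symm ⟨m, Nat.lt_succ_self m⟩ = b} :=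
  ⟨glue m (b : ℕ) (Nat.lt_succ_iff.mp b.is_lt) p.1.1 p.2.1,
    glue_avoid _ p.1.2 p.2.2, by
      rw [Equiv.symm_apply_eq]
      apply Fin.ext
      rw [glue_apply, glueFun_eq (Nat.lt_succ_iff.mp b.is_lt) p.1.1 p.2.1 rfl]⟩

set_option maxHeartbeats 2000000 in
theorem glueMap_bijective (m : ℕ) (b : Fin (m + 1)) :
    Function.Bijective (glueMap m b) := by
  constructor
  · rintro ⟨⟨β1, hβ1⟩, ⟨γ1, hγ1⟩⟩ ⟨⟨β2, hβ2⟩, ⟨γ2, hγ2⟩⟩ h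
    have hg : glue m (b : ℕ) (Nat.lt_succ_iff.mp b.is_lt) β1 γ1 =
        glue m (b : ℕ) (Nat.lt_succ_iff.mp b.is_lt) β2 γ2 := congrArg Subtype.val h
    have hgx := Equiv.ext_iff.mp hg
    have hβ : β1 = β2 := by
      apply Equiv.ext
      intro t
      have ht := t.is_lt
      have hx := congrArg Fin.val (hgx ⟨(t : ℕ), by omega⟩)
      rw [glue_apply, glue_apply,
        glueFun_lt (Nat.lt_succ_iff.mp b.is_lt) β1 γ1 ht,
        glueFun_lt (Nat.lt_succ_iff.mp b.is_lt) β2 γ2 ht] at hx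
      apply Fin.ext
      simp only [Fin.eta] at hx
      omega
    have hγ : γ1 = γ2 := by
      apply Equiv.ext
      intro t
      have ht := t.is_lt
      have hblt : (b : ℕ) < (b : ℕ) + 1 + (t : ℕ) := by omega
      have hx := congrArg Fin.val (hgx ⟨(b : ℕ) + 1 + (t : ℕ), by omega⟩)
      rw [glue_apply, glue_apply,
        glueFun_gt (Nat.lt_succ_iff.mp b.is_lt) β1 γ1 hblt,
        glueFun_gt (Nat.lt_succ_iff.mp b.is_lt) β2 γ2 hblt] at hx
      apply Fin.ext
      have he : (⟨(b : ℕ) + 1 + (t : ℕ) - (b : ℕ) - 1, by omega⟩ : Fin (m - (b : ℕ))) = t :=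
        Fin.ext (by simp; omega)
      rw [he] at hx
      exact hx
    simp [hβ, hγ]
  · rintro ⟨π, hπ, hsym⟩
    have hπb : π b = ⟨m, Nat.lt_succ_self m⟩ := ((Equiv.symm_apply_eq π).mp hsym).symm
    obtain ⟨β, γ, hβ, hγ, hglue⟩ := unglue hπ b hπb
    exact ⟨⟨⟨β, hβ⟩, ⟨γ, hγ⟩⟩, Subtype.ext hglue⟩

theorem card_avoid : ∀ m : ℕ, Nat.card {π : Equiv.Perm (Fin m) // ¬ Has132 π} = catalan m := by
  intro m
  induction m using Nat.strong_induction_on with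
  | _ m IH =>
    match m, IH with
    | 0, _ =>
      have h : ∀ π : Equiv.Perm (Fin 0), ¬ Has132 π := by
        rintro π ⟨i, -⟩
        exact i.elim0
      rw [Nat.card_congr (Equiv.subtypeUnivEquiv h), catalan_zero]
      rw [Nat.card_eq_fintype_card, Fintype.card_perm]
      simp
    | (m + 1), IH =>
      have e1 : {π : Equiv.Perm (Fin (m + 1)) // ¬ Has132 π} ≃
          Σ b : Fin (m + 1), {x : {π : Equiv.Perm (Fin (m + 1)) // ¬ Has132 π} //
            x.1.symm ⟨m, Nat.lt_succ_self m⟩ = b} :=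
        (Equiv.sigmaFiberEquiv _).symm
      rw [Nat.card_congr e1, nat_card_sigma, catalan_succ m]
      apply Finset.sum_congr rfl
      intro b _
      have e2 : {x : {π : Equiv.Perm (Fin (m + 1)) // ¬ Has132 π} //
          x.1.symm ⟨m, Nat.lt_succ_self m⟩ = b} ≃
          {π : Equiv.Perm (Fin (m + 1)) // ¬ Has132 π ∧ π.symm ⟨m, Nat.lt_succ_self m⟩ = b} :=
        Equiv.subtypeSubtypeEquivSubtypeInter (fun π : Equiv.Perm (Fin (m + 1)) => ¬ Has132 π)
          (fun π => π.symm ⟨m, Nat.lt_succ_self m⟩ = b)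
      rw [Nat.card_congr e2, ← Nat.card_eq_of_bijective _ (glueMap_bijective m b),
        Nat.card_prod, IH (b : ℕ) b.is_lt, IH (m - (b : ℕ)) (by omega)]

def Sp (n : ℕ) (hn : 4 ≤ n) (π : Equiv.Perm (Fin n)) : Prop :=
  (π ⟨0, Nat.lt_of_lt_of_le (by decide) hn⟩ : ℕ) = n - 3 ∧ (π ⟨1, Nat.lt_of_lt_of_le (by decide) hn⟩ : ℕ) = n - 1 ∧
    (π ⟨n - 1, Nat.sub_lt (Nat.lt_of_lt_of_le (by decide) hn) Nat.one_pos⟩ : ℕ) = n - 2 ∧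
    (∀ a b c : Fin n, 2 ≤ (a : ℕ) → a < b → b < c → (c : ℕ) ≤ n - 2 →
      ¬ (π a < π c ∧ π c < π b))

def specFun (n : ℕ) (hn : 4 ≤ n) (α : Equiv.Perm (Fin (n - 3))) (x : Fin n) : Fin n :=
  if h0 : (x : ℕ) = 0 then ⟨n - 3, by omega⟩
  else if h1 : (x : ℕ) = 1 then ⟨n - 1, by omega⟩
  else if h2 : (x : ℕ) = n - 1 then ⟨n - 2, by omega⟩
  else ⟨(α ⟨(x : ℕ) - 2, by have := x.is_lt; omega⟩ : ℕ),
    by have := (α ⟨(x : ℕ) - 2, by have := x.is_lt; omega⟩).is_lt; omega⟩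

theorem specFun_zero {n : ℕ} (hn : 4 ≤ n) (α : Equiv.Perm (Fin (n - 3)))
    {x : Fin n} (hx : (x : ℕ) = 0) : (specFun n hn α x : ℕ) = n - 3 := by
  simp [specFun, hx]

theorem specFun_one {n : ℕ} (hn : 4 ≤ n) (α : Equiv.Perm (Fin (n - 3)))
    {x : Fin n} (hx : (x : ℕ) = 1) : (specFun n hn α x : ℕ) = n - 1 := by
  have h0 : ¬ (x : ℕ) = 0 := by omega
  simp [specFun, h0, hx]

theorem specFun_last {n : ℕ} (hn : 4 ≤ n) (α : Equiv.Perm (Fin (n - 3)))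
    {x : Fin n} (hx : (x : ℕ) = n - 1) : (specFun n hn α x : ℕ) = n - 2 := by
  have h0 : ¬ (x : ℕ) = 0 := by omega
  have h1 : ¬ (x : ℕ) = 1 := by omega
  simp only [specFun]
  rw [dif_neg h0, dif_neg h1, dif_pos hx]

theorem specFun_mid {n : ℕ} (hn : 4 ≤ n) (α : Equiv.Perm (Fin (n - 3)))
    {x : Fin n} (h2 : 2 ≤ (x : ℕ)) (h3 : (x : ℕ) ≤ n - 2) :
    (specFun n hn α x : ℕ) =
      (α ⟨(x : ℕ) - 2, by have := x.is_lt; omega⟩ : ℕ) := by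
  have h0 : ¬ (x : ℕ) = 0 := by omega
  have h1 : ¬ (x : ℕ) = 1 := by omega
  have hl : ¬ (x : ℕ) = n - 1 := by omega
  simp [specFun, h0, h1, hl]

theorem specFun_mid_lt {n : ℕ} (hn : 4 ≤ n) (α : Equiv.Perm (Fin (n - 3)))
    {x : Fin n} (h2 : 2 ≤ (x : ℕ)) (h3 : (x : ℕ) ≤ n - 2) :
    (specFun n hn α x : ℕ) < n - 3 := by
  rw [specFun_mid hn α h2 h3]
  exact (α _).is_lt

theorem specFun_inj {n : ℕ} (hn : 4 ≤ n) (α : Equiv.Perm (Fin (n - 3))) :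
    Function.Injective (specFun n hn α) := by
  intro x y hxy
  have hv := congrArg Fin.val hxy
  apply Fin.ext
  have hxl := x.is_lt
  have hyl := y.is_lt
  have hc : ∀ z : Fin n, (z : ℕ) = 0 ∨ (z : ℕ) = 1 ∨ (z : ℕ) = n - 1 ∨
      (2 ≤ (z : ℕ) ∧ (z : ℕ) ≤ n - 2) := by
    intro z
    have := z.is_lt
    omega
  rcases hc x with hx | hx | hx | ⟨hx1, hx2⟩ <;> rcases hc y with hy | hy | hy | ⟨hy1, hy2⟩ <;>
    [skip; skip; skip; skip; skip; skip; skip; skip; skip; skip; skip; skip; skip; skip; skip;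
      skip] <;>
    first
      | omega
      | (rw [specFun_zero hn α hx] at hv
         first
           | (rw [specFun_one hn α hy] at hv; omega)
           | (rw [specFun_last hn α hy] at hv; omega)
           | (have := specFun_mid_lt hn α hy1 hy2; omega))
      | (rw [specFun_one hn α hx] at hv
         first
           | (rw [specFun_zero hn α hy] at hv; omega)
           | (rw [specFun_last hn α hy] at hv; omega)
           | (have := specFun_mid_lt hn α hy1 hy2; omega))
      | (rw [specFun_last hn α hx] at hv
         first
           | (rw [specFun_zero hn α hy] at hv; omega)
           | (rw [specFun_one hn α hy] at hv; omega)
           | (have := specFun_mid_lt hn α hy1 hy2; omega))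
      | (have hmx := specFun_mid_lt hn α hx1 hx2
         first
           | (rw [specFun_zero hn α hy] at hv; omega)
           | (rw [specFun_one hn α hy] at hv; omega)
           | (rw [specFun_last hn α hy] at hv; omega)
           | (rw [specFun_mid hn α hx1 hx2, specFun_mid hn α hy1 hy2] at hv
              have := congrArg Fin.val (α.injective (Fin.ext hv))
              simp only at this
              omega))

noncomputable def spec (n : ℕ) (hn : 4 ≤ n) (α : Equiv.Perm (Fin (n - 3))) :
    Equiv.Perm (Fin n) :=
  Equiv.ofBijective _ (Finite.injective_iff_bijective.mp (specFun_inj hn α))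

theorem spec_apply {n : ℕ} (hn : 4 ≤ n) (α : Equiv.Perm (Fin (n - 3))) (x : Fin n) :
    spec n hn α x = specFun n hn α x := rfl

theorem spec_sp {n : ℕ} (hn : 4 ≤ n) {α : Equiv.Perm (Fin (n - 3))}
    (hα : ¬ Has132 α) : Sp n hn (spec n hn α) := by
  refine ⟨specFun_zero hn α rfl, specFun_one hn α rfl, specFun_last hn α rfl, ?_⟩
  rintro a b c ha hab hbc hc ⟨w1, w2⟩
  rw [Fin.lt_def] at hab hbc w1 w2
  rw [spec_apply, spec_apply] at w1 w2
  have hb1 : 2 ≤ (b : ℕ) := by omega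
  have hb2 : (b : ℕ) ≤ n - 2 := by omega
  have ha2 : (a : ℕ) ≤ n - 2 := by omega
  have hc2 : 2 ≤ (c : ℕ) := by omega
  rw [specFun_mid hn α ha ha2, specFun_mid hn α hc2 hc] at w1
  rw [specFun_mid hn α hc2 hc, specFun_mid hn α hb1 hb2] at w2
  have hal := a.is_lt
  refine hα ⟨⟨(a : ℕ) - 2, by omega⟩, ⟨(b : ℕ) - 2, by omega⟩, ⟨(c : ℕ) - 2, by omega⟩,
    by rw [Fin.lt_def]; simp; omega, by rw [Fin.lt_def]; simp; omega, ?_, ?_⟩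
  · rw [Fin.lt_def]
    exact w1
  · rw [Fin.lt_def]
    exact w2

set_option maxHeartbeats 2000000 in
theorem sp_unspec {n : ℕ} (hn : 4 ≤ n) {π : Equiv.Perm (Fin n)} (hsp : Sp n hn π) :
    ∃ α : Equiv.Perm (Fin (n - 3)), ¬ Has132 α ∧ spec n hn α = π := by
  obtain ⟨h0, h1, h2, hm⟩ := hsp
  have hval : ∀ l : Fin n, (l : ℕ) ≠ 0 → (l : ℕ) ≠ 1 → (l : ℕ) ≠ n - 1 →
      (π l : ℕ) < n - 3 := by
    intro l hl0 hl1 hln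
    have b1 : π l ≠ π ⟨0, by omega⟩ := fun e => hl0 (congrArg Fin.val (π.injective e))
    have b2 : π l ≠ π ⟨1, by omega⟩ := fun e => hl1 (congrArg Fin.val (π.injective e))
    have b3 : π l ≠ π ⟨n - 1, by omega⟩ := fun e => hln (congrArg Fin.val (π.injective e))
    have c1 : (π l : ℕ) ≠ n - 3 := fun e => b1 (Fin.ext (e.trans h0.symm))
    have c2 : (π l : ℕ) ≠ n - 1 := fun e => b2 (Fin.ext (e.trans h1.symm))
    have c3 : (π l : ℕ) ≠ n - 2 := fun e => b3 (Fin.ext (e.trans h2.symm))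
    have := (π l).is_lt
    omega
  obtain ⟨α, hαeq⟩ := exists_perm_of_inj
    (fun t : Fin (n - 3) =>
      (⟨(π ⟨(t : ℕ) + 2, by have := t.is_lt; omega⟩ : ℕ),
        hval ⟨(t : ℕ) + 2, by have := t.is_lt; omega⟩
          (show (t : ℕ) + 2 ≠ 0 by omega)
          (show (t : ℕ) + 2 ≠ 1 by omega)
          (show (t : ℕ) + 2 ≠ n - 1 by have := t.is_lt; omega)⟩ :
        Fin (n - 3)))
    (by
      intro s t hst
      have hv := congrArg Fin.val hst
      simp only at hv
      have he : π ⟨(s : ℕ) + 2, by have := s.is_lt; omega⟩ =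
          π ⟨(t : ℕ) + 2, by have := t.is_lt; omega⟩ := Fin.ext hv
      have := congrArg Fin.val (π.injective he)
      simp only at this
      exact Fin.ext (by omega))
  have hαval : ∀ t : Fin (n - 3),
      (α t : ℕ) = (π ⟨(t : ℕ) + 2, by have := t.is_lt; omega⟩ : ℕ) := by
    intro t
    have := congrArg Fin.val (hαeq t)
    simpa using this
  refine ⟨α, ?_, ?_⟩
  · rintro ⟨i, j, k, hij, hjk, w1, w2⟩
    rw [Fin.lt_def] at hij hjk w1 w2
    rw [hαval i, hαval k] at w1
    rw [hαval k, hαval j] at w2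
    have hkl := k.is_lt
    refine hm ⟨(i : ℕ) + 2, by have := i.is_lt; omega⟩
      ⟨(j : ℕ) + 2, by have := j.is_lt; omega⟩
      ⟨(k : ℕ) + 2, by have := k.is_lt; omega⟩
      (by simp) (by rw [Fin.lt_def]; simp; omega) (by rw [Fin.lt_def]; simp; omega)
      (by simp; omega) ⟨by rw [Fin.lt_def]; exact w1, by rw [Fin.lt_def]; exact w2⟩
  · apply Equiv.ext
    intro x
    apply Fin.ext
    rw [spec_apply]
    have hxl := x.is_lt
    rcases (by omega : (x : ℕ) = 0 ∨ (x : ℕ) = 1 ∨ (x : ℕ) = n - 1 ∨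
        (2 ≤ (x : ℕ) ∧ (x : ℕ) ≤ n - 2)) with hx | hx | hx | ⟨hx1, hx2⟩
    · rw [specFun_zero hn α hx, show x = ⟨0, by omega⟩ from Fin.ext hx]
      exact h0.symm
    · rw [specFun_one hn α hx, show x = ⟨1, by omega⟩ from Fin.ext hx]
      exact h1.symm
    · rw [specFun_last hn α hx, show x = ⟨n - 1, by omega⟩ from Fin.ext hx]
      exact h2.symm
    · rw [specFun_mid hn α hx1 hx2]
      rw [hαval ⟨(x : ℕ) - 2, by have := x.is_lt; omega⟩]
      congr 1
      apply congrArg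
      apply Fin.ext
      simp
      omega

set_option maxHeartbeats 2000000 in
theorem card_sp (n : ℕ) (hn : 4 ≤ n) :
    Nat.card {π : Equiv.Perm (Fin n) // Sp n hn π} = catalan (n - 3) := by
  have hbij : Function.Bijective
      (fun a : {α : Equiv.Perm (Fin (n - 3)) // ¬ Has132 α} =>
        (⟨spec n hn a.1, spec_sp hn a.2⟩ : {π : Equiv.Perm (Fin n) // Sp n hn π})) := by
    constructor
    · rintro ⟨α1, hα1⟩ ⟨α2, hα2⟩ h
      have hg : spec n hn α1 = spec n hn α2 := congrArg Subtype.val h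
      have hgx := Equiv.ext_iff.mp hg
      apply Subtype.ext
      apply Equiv.ext
      intro t
      have ht := t.is_lt
      have hx := congrArg Fin.val (hgx ⟨(t : ℕ) + 2, by omega⟩)
      rw [spec_apply, spec_apply,
        specFun_mid hn α1 (show 2 ≤ (t : ℕ) + 2 by omega) (show (t : ℕ) + 2 ≤ n - 2 by omega),
        specFun_mid hn α2 (show 2 ≤ (t : ℕ) + 2 by omega) (show (t : ℕ) + 2 ≤ n - 2 by omega)]
        at hx
      apply Fin.ext
      have he : (⟨((⟨(t : ℕ) + 2, by omega⟩ : Fin n) : ℕ) - 2,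
          show (t : ℕ) + 2 - 2 < n - 3 by omega⟩ :
          Fin (n - 3)) = t := Fin.ext (by simp)
      rw [he] at hx
      exact hx
    · rintro ⟨π, hπ⟩
      obtain ⟨α, hα, he⟩ := sp_unspec hn hπ
      exact ⟨⟨α, hα⟩, Subtype.ext he⟩
  rw [← Nat.card_eq_of_bijective _ hbij, card_avoid]

theorem sp_has132 {n : ℕ} (hn : 4 ≤ n) {π : Equiv.Perm (Fin n)} (h : Sp n hn π) :
    Has132 π := by
  obtain ⟨h0, h1, h2, -⟩ := h
  exact ⟨⟨0, by omega⟩, ⟨1, by omega⟩, ⟨n - 1, by omega⟩,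
    by rw [Fin.lt_def]; simp, by rw [Fin.lt_def]; simp; omega,
    by rw [Fin.lt_def]; omega, by rw [Fin.lt_def]; omega⟩

theorem nat_card_or {T : Type*} [Finite T] (p q : T → Prop) (h : ∀ x, p x → q x → False) :
    Nat.card {x // p x ∨ q x} = Nat.card {x // p x} + Nat.card {x // q x} := by
  classical
  letI := Fintype.ofFinite T
  have hdis : Disjoint p q := by
    rw [Pi.disjoint_iff]
    intro x
    rw [Prop.disjoint_iff]
    exact fun hx => h x hx.1 hx.2
  rw [Nat.card_eq_fintype_card, Nat.card_eq_fintype_card, Nat.card_eq_fintype_card,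
    Fintype.card_subtype_or_disjoint p q hdis]

end Stmt17

open Stmt17 in
/-- For `n ≥ 4`: the `Π`-avoiders of `[n]` are exactly the `132`-avoiders together
with the permutations `(n-2) n α (n-1)` with `α` a `132`-avoiding permutation of
`{1,…,n-3}`; consequently `|Av_n(Π)| = Cat n + Cat (n-3)`. -/
theorem stmt17 (n : ℕ) (hn : 4 ≤ n) :
    (∀ π : Equiv.Perm (Fin n),
      (∀ p ∈ Pi17, ¬ ContainsPat π p) ↔
        (¬ ContainsPat π (![0,2,1] : Fin 3 → Fin 3) ∨
          ((π ⟨0, by omega⟩ : ℕ) = n - 3 ∧ (π ⟨1, by omega⟩ : ℕ) = n - 1 ∧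
           (π ⟨n - 1, by omega⟩ : ℕ) = n - 2 ∧
           (∀ a b c : Fin n, 2 ≤ (a : ℕ) → a < b → b < c → (c : ℕ) ≤ n - 2 →
              ¬ (π a < π c ∧ π c < π b))))) ∧
    Nat.card {π : Equiv.Perm (Fin n) // ∀ p ∈ Pi17, ¬ ContainsPat π p} =
      catalan n + catalan (n - 3) := by
  constructor
  · intro π
    constructor
    · intro hav
      by_cases h : Has132 π
      · exact Or.inr (structure_of hn hav h)
      · exact Or.inl (fun hc => h (has132_of_contains hc))
    · rintro (h | h)
      · exact fun p hp hcon => h (contains_of_has132 (has132_of_mem hp hcon))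
      · exact avoid_of_special hn h.1 h.2.1 h.2.2.1 h.2.2.2
  · have e : {π : Equiv.Perm (Fin n) // ∀ p ∈ Pi17, ¬ ContainsPat π p} ≃
        {π : Equiv.Perm (Fin n) // ¬ Has132 π ∨ Sp n hn π} := by
      apply Equiv.subtypeEquivRight
      intro π
      constructor
      · intro hav
        by_cases h : Has132 π
        · exact Or.inr (structure_of hn hav h)
        · exact Or.inl h
      · rintro (h | h)
        · exact fun p hp hcon => h (has132_of_mem hp hcon)
        · exact avoid_of_special hn h.1 h.2.1 h.2.2.1 h.2.2.2
    rw [Nat.card_congr e,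
      nat_card_or _ _ (fun π hn132 hsp => hn132 (sp_has132 hn hsp)),
      card_avoid n, card_sp n hn]
end
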